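/- arXiv:0712.1686 — 4 statements merged into one kernel-verified Lean document; each statement's English description precedes it below -/
import Mathlib

section
/- Let f : {0,1}ⁿ → ℝ satisfy condition (2.4) with constant v > 0, and let B = max over x ∈ {0,1}ⁿ and 1 ≤ i ≤ n of |f(x) − f(x^{(i)})|. Then for all 0 < δ < γ ≤ 1/2, the quantiles of f(X) satisfy Q_{1−δ} − Q_{1−γ} ≤ B + sqrt( (72/5)·v·γ / ( δ · log( e²/(2γ) ) ) ). -/
open scoped Classical
open Finset

/-- Probability of an event under the uniform distribution on `{0,1}ⁿ`. -/
noncomputable def prb {n : ℕ} (P : (Fin n → Fin 2) → Prop) : ℝ :=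
  ((Finset.univ.filter P).card : ℝ) / 2 ^ n

/-- `x^{(i)}`: flip the `i`-th bit of `x`. -/
noncomputable def flipBit {n : ℕ} (x : Fin n → Fin 2) (i : Fin n) : Fin n → Fin 2 :=
  Function.update x i (x i + 1)

/-- The `α`-quantile `Q_α = inf { z : P{f(X) ≤ z} ≥ α }`. -/
noncomputable def quant {n : ℕ} (f : (Fin n → Fin 2) → ℝ) (α : ℝ) : ℝ :=
  sInf {z : ℝ | α ≤ prb fun x => f x ≤ z}

/-- Expectation of `f(X)` for `X` uniform on `{0,1}ⁿ`. -/
noncomputable def expecb {n : ℕ} (f : (Fin n → Fin 2) → ℝ) : ℝ :=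
  (∑ x, f x) / 2 ^ n

/-- Variance of `f(X)` for `X` uniform on `{0,1}ⁿ`. -/
noncomputable def varb {n : ℕ} (f : (Fin n → Fin 2) → ℝ) : ℝ :=
  expecb fun x => (f x - expecb f) ^ 2


lemma two_log_le {y : ℝ} (hy : 1 ≤ y) : 2 * Real.log y ≤ y - 1 / y := by
  have key : MonotoneOn (fun t : ℝ => t - 1/t - 2 * Real.log t) (Set.Ici 1) := by
    apply monotoneOn_of_deriv_nonneg (convex_Ici 1)
    · apply ContinuousOn.sub
      · exact (continuousOn_id.sub (continuousOn_const.div continuousOn_id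
          (fun x hx => by have : (1:ℝ) ≤ x := hx; positivity)))
      · exact ContinuousOn.mul continuousOn_const
          (Real.continuousOn_log.mono (fun x hx => by
            have : (1:ℝ) ≤ x := hx; simp; linarith))
    · intro x hx
      have hx1 : 1 < x := by simpa [interior_Ici] using hx
      have hx0 : x ≠ 0 := by positivity
      apply DifferentiableAt.differentiableWithinAt
      fun_prop (disch := assumption)
    · intro x hx
      have hx1 : 1 < x := by simpa [interior_Ici] using hx
      have hx0 : (0:ℝ) < x := by linarith
      have hd : HasDerivAt (fun t : ℝ => t - 1/t - 2 * Real.log t)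
          (1 - (-(x^2)⁻¹) - 2 * (1/x)) x := by
        have h1 : HasDerivAt (fun t : ℝ => 1/t) (-(x^2)⁻¹) x := by
          simpa [one_div] using (hasDerivAt_inv (by positivity : x ≠ 0))
        have h2 : HasDerivAt Real.log (1/x) x := by
          simpa [one_div] using Real.hasDerivAt_log (by positivity)
        exact ((hasDerivAt_id x).sub h1).sub ((h2.const_mul 2))
      rw [hd.deriv]
      have : 1 - (-(x^2)⁻¹) - 2 * (1/x) = (1 - 1/x)^2 := by field_simp; ring
      rw [this]; positivity
  have h0 : (fun t : ℝ => t - 1/t - 2 * Real.log t) 1 ≤ (fun t : ℝ => t - 1/t - 2 * Real.log t) y :=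
    key (by simp) hy hy
  simp only [Real.log_one] at h0
  norm_num at h0
  rw [one_div]; linarith

-- H ≥ 0
lemma Hge {a b : ℝ} (hb : 0 < b) (hab : b ≤ a) :
    a * Real.log (a^2 / ((a^2 + b^2)/2)) ≤ a - b := by
  have ha : 0 < a := lt_of_lt_of_le hb hab
  set c : ℝ := Real.sqrt (2*(a^2+b^2)) with hc
  have hcpos : 0 < c := Real.sqrt_pos.2 (by positivity)
  have hcsq : c^2 = 2*(a^2+b^2) := Real.sq_sqrt (by positivity)
  have hy1 : 1 ≤ 2*a/c := by
    rw [le_div_iff₀ hcpos]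
    have : c ≤ 2*a := by
      rw [hc, show (2*a) = Real.sqrt ((2*a)^2) by rw [Real.sqrt_sq (by positivity)]]
      apply Real.sqrt_le_sqrt; nlinarith
    linarith
  have hlog : Real.log (a^2 / ((a^2+b^2)/2)) = 2 * Real.log (2*a/c) := by
    rw [show (2:ℝ) * Real.log (2*a/c) = Real.log ((2*a/c)^2) by
      rw [Real.log_pow]; push_cast; ring]
    congr 1
    rw [div_pow, hcsq]
    field_simp
  rw [hlog]
  have h1 := two_log_le hy1
  have h2 : a * (2*a/c - 1/(2*a/c)) = (a^2 - b^2)/c := by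
    field_simp
    nlinarith [hcsq, sq_nonneg c, mul_pos hcpos ha]
  calc a * (2 * Real.log (2*a/c)) ≤ a * (2*a/c - 1/(2*a/c)) := by
        apply mul_le_mul_of_nonneg_left h1 ha.le
    _ = (a^2-b^2)/c := h2
    _ ≤ a - b := by
        rw [div_le_iff₀ hcpos]
        have hab2 : a + b ≤ c := by
          rw [hc, show a + b = Real.sqrt ((a+b)^2) by rw [Real.sqrt_sq (by positivity)]]
          apply Real.sqrt_le_sqrt; nlinarith
        nlinarith


lemma two_point {a b : ℝ} (hb : 0 ≤ b) (hab : b ≤ a) :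
    (a^2 * Real.log (a^2) + b^2 * Real.log (b^2))/2
      - ((a^2+b^2)/2) * Real.log ((a^2+b^2)/2) ≤ (1/2) * (a-b)^2 := by
  rcases eq_or_lt_of_le hb with hb0 | hbpos
  · -- b = 0
    have : b = 0 := hb0.symm
    subst this
    rcases eq_or_lt_of_le hab with ha0 | hapos
    · rw [← ha0]; norm_num
    · have hA : (0:ℝ) < a^2 := by positivity
      have h2 : Real.log (a^2/2) = Real.log (a^2) - Real.log 2 :=
        Real.log_div (by positivity) (by norm_num)
      have hlog2 : Real.log 2 ≤ 1 := by
        have := Real.log_le_sub_one_of_pos (by norm_num : (0:ℝ) < 2); linarith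
      have hlog2' : (0:ℝ) ≤ Real.log 2 := Real.log_nonneg (by norm_num)
      have he : (a^2 * Real.log (a^2) + 0^2 * Real.log (0^2))/2
          - ((a^2+0^2)/2) * Real.log ((a^2+0^2)/2) = (a^2/2) * Real.log 2 := by
        rw [show ((a^2+0^2)/2 : ℝ) = a^2/2 by ring, h2]; ring
      rw [he]
      nlinarith [sq_nonneg a]
  · -- b > 0
    set G : ℝ → ℝ := fun x => (1/2)*(x-b)^2 -
      ((x^2 * Real.log (x^2) + b^2 * Real.log (b^2))/2
        - ((x^2+b^2)/2) * Real.log ((x^2+b^2)/2)) with hG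
    have hDeriv : ∀ x : ℝ, 0 < x →
        HasDerivAt G ((x - b) - x * Real.log (x^2 / ((x^2+b^2)/2))) x := by
      intro x hx
      have hx2 : (x:ℝ)^2 ≠ 0 := by positivity
      have hm : ((x^2+b^2)/2 : ℝ) ≠ 0 := by positivity
      have hpow : HasDerivAt (fun t : ℝ => t^2) (2*x) x := by
        simpa using hasDerivAt_pow 2 x
      have hlogx2 : HasDerivAt (fun t : ℝ => Real.log (t^2)) ((2*x) / x^2) x :=
        hpow.log hx2
      have h1 : HasDerivAt (fun t : ℝ => t^2 * Real.log (t^2))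
          ((2*x) * Real.log (x^2) + x^2 * ((2*x) / x^2)) x := hpow.mul hlogx2
      have hmder : HasDerivAt (fun t : ℝ => (t^2+b^2)/2) x x := by
        have : HasDerivAt (fun t : ℝ => t^2+b^2) (2*x) x := hpow.add_const _
        simpa using this.div_const 2
      have hlogm : HasDerivAt (fun t : ℝ => Real.log ((t^2+b^2)/2))
          (x / ((x^2+b^2)/2)) x := hmder.log hm
      have h2 : HasDerivAt (fun t : ℝ => ((t^2+b^2)/2) * Real.log ((t^2+b^2)/2))
          (x * Real.log ((x^2+b^2)/2) + ((x^2+b^2)/2) * (x / ((x^2+b^2)/2))) x :=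
        hmder.mul hlogm
      have h3 : HasDerivAt (fun t : ℝ => (1/2)*(t-b)^2) (x-b) x := by
        have : HasDerivAt (fun t : ℝ => (t-b)^2) (2*(x-b)) x := by
          simpa using ((hasDerivAt_id x).sub_const b).fun_pow 2
        simpa [mul_comm, mul_assoc] using this.const_mul (1/2 : ℝ)
      have hsum : HasDerivAt (fun t : ℝ =>
          (t^2 * Real.log (t^2) + b^2 * Real.log (b^2))/2
            - ((t^2+b^2)/2) * Real.log ((t^2+b^2)/2))
          (((2*x) * Real.log (x^2) + x^2 * ((2*x) / x^2))/2
            - (x * Real.log ((x^2+b^2)/2) + ((x^2+b^2)/2) * (x / ((x^2+b^2)/2)))) x :=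
        ((h1.add_const _).div_const 2).sub h2
      have hfinal := h3.sub hsum
      have heq : (x - b) - (((2*x) * Real.log (x^2) + x^2 * ((2*x) / x^2))/2
            - (x * Real.log ((x^2+b^2)/2) + ((x^2+b^2)/2) * (x / ((x^2+b^2)/2))))
          = (x - b) - x * Real.log (x^2 / ((x^2+b^2)/2)) := by
        rw [Real.log_div hx2 hm]
        field_simp
        ring
      rw [heq] at hfinal
      exact hfinal
    have key : MonotoneOn G (Set.Ici b) := by
      apply monotoneOn_of_deriv_nonneg (convex_Ici b)
      · intro x hx
        exact (hDeriv x (lt_of_lt_of_le hbpos hx)).continuousAt.continuousWithinAt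
      · intro x hx
        rw [interior_Ici] at hx
        exact (hDeriv x (lt_trans hbpos hx)).differentiableAt.differentiableWithinAt
      · intro x hx
        rw [interior_Ici] at hx
        have hx0 : 0 < x := lt_trans hbpos hx
        rw [(hDeriv x hx0).deriv]
        have := Hge hbpos (le_of_lt hx)
        linarith
    have h0 : G b ≤ G a := key (by simp) (Set.mem_Ici.2 hab) hab
    have hGb : G b = 0 := by
      simp only [hG]
      have h2 : ((b^2+b^2)/2 : ℝ) = b^2 := by ring
      rw [h2]; ring
    rw [hGb] at h0
    simp only [hG] at h0
    linarith


lemma two_point' (a b : ℝ) (ha : 0 ≤ a) (hb : 0 ≤ b) :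
    (a^2 * Real.log (a^2) + b^2 * Real.log (b^2))/2
      - ((a^2+b^2)/2) * Real.log ((a^2+b^2)/2) ≤ (1/2) * (a-b)^2 := by
  rcases le_total b a with hab | hab
  · exact two_point hb hab
  · have h := two_point ha hab
    have e : (b^2+a^2)/2 = (a^2+b^2)/2 := by ring
    rw [e] at h
    have e2 : (1/2) * (b-a)^2 = (1/2) * (a-b)^2 := by ring
    rw [e2] at h
    linarith

lemma l2dist {α : Type*} [Fintype α] (p q : α → ℝ) (c : ℝ) (hc : 0 < c) :
    (Real.sqrt ((∑ x, p x^2)/c) - Real.sqrt ((∑ x, q x^2)/c))^2 ≤ (∑ x, (p x - q x)^2)/c := by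
  have hP : (0:ℝ) ≤ ∑ x, p x^2 := Finset.sum_nonneg fun x _ => sq_nonneg _
  have hQ : (0:ℝ) ≤ ∑ x, q x^2 := Finset.sum_nonneg fun x _ => sq_nonneg _
  have key : (Real.sqrt (∑ x, p x^2) - Real.sqrt (∑ x, q x^2))^2 ≤ ∑ x, (p x - q x)^2 := by
    have hPQ : ∑ x, p x * q x ≤ Real.sqrt (∑ x, p x^2) * Real.sqrt (∑ x, q x^2) := by
      have h1 := Finset.sum_mul_sq_le_sq_mul_sq Finset.univ p q
      have h2 : ∑ x, p x * q x ≤ |∑ x, p x * q x| := le_abs_self _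
      have h3 : |∑ x, p x * q x| = Real.sqrt ((∑ x, p x * q x)^2) :=
        (Real.sqrt_sq_eq_abs _).symm
      calc ∑ x, p x * q x ≤ Real.sqrt ((∑ x, p x * q x)^2) := h3 ▸ h2
        _ ≤ Real.sqrt ((∑ x, p x^2) * ∑ x, q x^2) := Real.sqrt_le_sqrt h1
        _ = Real.sqrt (∑ x, p x^2) * Real.sqrt (∑ x, q x^2) := Real.sqrt_mul hP _
    have e1 : Real.sqrt (∑ x, p x^2)^2 = ∑ x, p x^2 := Real.sq_sqrt hP
    have e2 : Real.sqrt (∑ x, q x^2)^2 = ∑ x, q x^2 := Real.sq_sqrt hQ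
    have e3 : ∑ x, (p x - q x)^2
        = ∑ x, p x^2 - 2 * ∑ x, p x * q x + ∑ x, q x^2 := by
      calc ∑ x, (p x - q x)^2 = ∑ x, (p x^2 - 2*(p x * q x) + q x^2) :=
            Finset.sum_congr rfl fun x _ => by ring
        _ = ∑ x, p x^2 - 2 * ∑ x, p x * q x + ∑ x, q x^2 := by
            rw [Finset.sum_add_distrib, Finset.sum_sub_distrib, ← Finset.mul_sum]
    nlinarith
  have hc' : Real.sqrt c ^ 2 = c := Real.sq_sqrt hc.le
  rw [Real.sqrt_div hP, Real.sqrt_div hQ, div_sub_div_same, div_pow, hc']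
  exact (div_le_div_iff_of_pos_right hc).2 key

lemma sum_cube_succ {n : ℕ} (F : (Fin (n+1) → Fin 2) → ℝ) :
    ∑ y, F y = ∑ x, F (Fin.cons 0 x) + ∑ x, F (Fin.cons 1 x) := by
  rw [← Fintype.sum_equiv (Fin.consEquiv (fun _ : Fin (n+1) => Fin 2))
    (fun p => F (Fin.cons p.1 p.2)) F (fun p => rfl)]
  rw [Fintype.sum_prod_type, Fin.sum_univ_two]

lemma flip_cons_zero {n : ℕ} (c : Fin 2) (x : Fin n → Fin 2) :
    flipBit (Fin.cons c x) 0 = Fin.cons (c+1) x := by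
  unfold flipBit
  rw [Fin.cons_zero, Fin.update_cons_zero]

lemma flip_cons_succ {n : ℕ} (c : Fin 2) (x : Fin n → Fin 2) (i : Fin n) :
    flipBit (Fin.cons c x) i.succ = Fin.cons c (flipBit x i) := by
  unfold flipBit
  rw [Fin.cons_succ, Fin.cons_update]

lemma lsi : ∀ (n : ℕ) (g : (Fin n → Fin 2) → ℝ),
    (∑ x, (g x)^2 * Real.log ((g x)^2)) / 2^n
      - ((∑ x, (g x)^2) / 2^n) * Real.log ((∑ x, (g x)^2) / 2^n)
    ≤ (1/2) * ((∑ x, ∑ i, (g x - g (flipBit x i))^2) / 2^n) := by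
  intro n
  induction n with
  | zero =>
    intro g
    have h1 : ∀ (F : (Fin 0 → Fin 2) → ℝ), ∑ x, F x = F (fun i => i.elim0) :=
      fun F => Fintype.sum_subsingleton F _
    rw [h1, h1]
    simp
  | succ n IH =>
    intro g
    set N : ℝ := (2:ℝ)^n with hNdef
    have hN : (0:ℝ) < N := by positivity
    set g0 : (Fin n → Fin 2) → ℝ := fun x => g (Fin.cons 0 x) with hg0
    set g1 : (Fin n → Fin 2) → ℝ := fun x => g (Fin.cons 1 x) with hg1
    -- sums
    have hA : ∑ y, (g y)^2 * Real.log ((g y)^2)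
        = ∑ x, (g0 x)^2 * Real.log ((g0 x)^2) + ∑ x, (g1 x)^2 * Real.log ((g1 x)^2) :=
      sum_cube_succ _
    have hM : ∑ y, (g y)^2 = ∑ x, (g0 x)^2 + ∑ x, (g1 x)^2 := sum_cube_succ _
    have hE : ∑ y, ∑ i, (g y - g (flipBit y i))^2
        = (∑ x, ∑ i, (g0 x - g0 (flipBit x i))^2)
          + (∑ x, ∑ i, (g1 x - g1 (flipBit x i))^2)
          + 2 * ∑ x, (g0 x - g1 x)^2 := by
      have step1 : ∀ y : Fin (n+1) → Fin 2, ∑ i, (g y - g (flipBit y i))^2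
          = (g y - g (flipBit y 0))^2 + ∑ i : Fin n, (g y - g (flipBit y i.succ))^2 :=
        fun y => Fin.sum_univ_succ _
      rw [Finset.sum_congr rfl (fun y _ => step1 y), sum_cube_succ
        (fun y => (g y - g (flipBit y 0))^2 + ∑ i : Fin n, (g y - g (flipBit y i.succ))^2)]
      have e0 : ∀ x : Fin n → Fin 2, flipBit (Fin.cons (0:Fin 2) x) 0 = Fin.cons 1 x := by
        intro x; rw [flip_cons_zero]; norm_num
      have e1 : ∀ x : Fin n → Fin 2, flipBit (Fin.cons (1:Fin 2) x) 0 = Fin.cons 0 x := by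
        intro x; rw [flip_cons_zero]
        congr 1
      simp only [e0, e1, flip_cons_succ, Fin.cons_zero, Fin.cons_succ]
      rw [Finset.sum_add_distrib, Finset.sum_add_distrib]
      have : ∑ x, (g (Fin.cons 1 x) - g (Fin.cons 0 x))^2 = ∑ x, (g0 x - g1 x)^2 :=
        Finset.sum_congr rfl fun x _ => by rw [hg0, hg1]; ring
      rw [this]
      ring
    -- apply IH
    have IH0 := IH g0
    have IH1 := IH g1
    -- two-point
    set M0 : ℝ := ∑ x, (g0 x)^2 with hM0
    set M1 : ℝ := ∑ x, (g1 x)^2 with hM1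
    have hM0n : 0 ≤ M0 := Finset.sum_nonneg fun x _ => sq_nonneg _
    have hM1n : 0 ≤ M1 := Finset.sum_nonneg fun x _ => sq_nonneg _
    set a : ℝ := Real.sqrt (M0/N) with ha
    set b : ℝ := Real.sqrt (M1/N) with hb
    have ha2 : a^2 = M0/N := Real.sq_sqrt (by positivity)
    have hb2 : b^2 = M1/N := Real.sq_sqrt (by positivity)
    have hTP := two_point' a b (Real.sqrt_nonneg _) (Real.sqrt_nonneg _)
    rw [ha2, hb2] at hTP
    have hD := l2dist g0 g1 N hN
    rw [← ha, ← hb] at hD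
    have hab2 : (a-b)^2 ≤ (∑ x, (g0 x - g1 x)^2)/N := hD
    -- final algebra
    have hpow : (2:ℝ)^(n+1) = 2*N := by rw [hNdef, pow_succ]; ring
    rw [hA, hM, hE, hpow]
    have harg : (M0 + M1) / (2*N) = (M0/N + M1/N)/2 := by
      rw [← add_div M0 M1 N, div_div, mul_comm N 2]
    rw [harg]
    have final :
        (∑ x, (g0 x)^2 * Real.log ((g0 x)^2) + ∑ x, (g1 x)^2 * Real.log ((g1 x)^2)) / (2*N)
          - ((M0/N + M1/N)/2) * Real.log ((M0/N + M1/N)/2)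
        = (1/2) * ((∑ x, (g0 x)^2 * Real.log ((g0 x)^2))/N - (M0/N) * Real.log (M0/N))
          + (1/2) * ((∑ x, (g1 x)^2 * Real.log ((g1 x)^2))/N - (M1/N) * Real.log (M1/N))
          + ((M0/N * Real.log (M0/N) + M1/N * Real.log (M1/N))/2
              - ((M0/N + M1/N)/2) * Real.log ((M0/N + M1/N)/2)) := by
      field_simp
      ring
    rw [final]
    have rhs_eq :
        (1/2) * (((∑ x, ∑ i, (g0 x - g0 (flipBit x i))^2)
          + (∑ x, ∑ i, (g1 x - g1 (flipBit x i))^2)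
          + 2 * ∑ x, (g0 x - g1 x)^2) / (2*N))
        = (1/2) * ((1/2) * ((∑ x, ∑ i, (g0 x - g0 (flipBit x i))^2)/N))
          + (1/2) * ((1/2) * ((∑ x, ∑ i, (g1 x - g1 (flipBit x i))^2)/N))
          + (1/2) * ((∑ x, (g0 x - g1 x)^2)/N) := by
      field_simp
    rw [rhs_eq]
    have hTP2 : (M0/N * Real.log (M0/N) + M1/N * Real.log (M1/N))/2
        - ((M0/N + M1/N)/2) * Real.log ((M0/N + M1/N)/2) ≤ (1/2) * ((∑ x, (g0 x - g1 x)^2)/N) := by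
      calc _ ≤ (1/2) * (a-b)^2 := hTP
        _ ≤ _ := by
          have := hab2
          linarith
    have half0 : (1/2) * ((∑ x, (g0 x)^2 * Real.log ((g0 x)^2))/N - (M0/N) * Real.log (M0/N))
        ≤ (1/2) * ((1/2) * ((∑ x, ∑ i, (g0 x - g0 (flipBit x i))^2)/N)) := by
      apply mul_le_mul_of_nonneg_left _ (by norm_num : (0:ℝ) ≤ 1/2)
      exact IH0
    have half1 : (1/2) * ((∑ x, (g1 x)^2 * Real.log ((g1 x)^2))/N - (M1/N) * Real.log (M1/N))
        ≤ (1/2) * ((1/2) * ((∑ x, ∑ i, (g1 x - g1 (flipBit x i))^2)/N)) := by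
      apply mul_le_mul_of_nonneg_left _ (by norm_num : (0:ℝ) ≤ 1/2)
      exact IH1
    linarith

lemma card_univ_cube (n : ℕ) : (Finset.univ : Finset (Fin n → Fin 2)).card = 2 ^ n := by
  simp [Finset.card_univ]

lemma prb_congr {n : ℕ} {P Q : (Fin n → Fin 2) → Prop} (h : ∀ x, P x ↔ Q x) :
    prb P = prb Q := by
  unfold prb
  congr 2
  · congr 1
    apply Finset.filter_congr
    exact fun x _ => h x

lemma prb_mono {n : ℕ} {P Q : (Fin n → Fin 2) → Prop} (h : ∀ x, P x → Q x) :
    prb P ≤ prb Q := by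
  unfold prb
  apply div_le_div_of_nonneg_right ?_ (by positivity)
  · exact_mod_cast Finset.card_le_card (Finset.monotone_filter_right _ (fun x _ => h x)) -- maybe wrong

lemma univ_cube_nonempty (n : ℕ) : (Finset.univ : Finset (Fin n → Fin 2)).Nonempty :=
  Finset.univ_nonempty

section
variable {n : ℕ} (f : (Fin n → Fin 2) → ℝ)

lemma prb_filter_nonempty {α : ℝ} (h0 : 0 < α) {P : (Fin n → Fin 2) → Prop}
    (h : α ≤ prb P) : (Finset.univ.filter P).Nonempty := by
  rw [← Finset.card_pos]
  by_contra hc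
  push_neg at hc
  have : (Finset.univ.filter P).card = 0 := Nat.le_zero.1 hc
  unfold prb at h
  rw [this] at h
  norm_num at h
  linarith

lemma quant_le {α : ℝ} (h0 : 0 < α) {z : ℝ} (hz : α ≤ prb fun x => f x ≤ z) :
    quant f α ≤ z := by
  obtain ⟨xm, -, hxm⟩ := Finset.exists_min_image Finset.univ f (univ_cube_nonempty n)
  unfold quant
  refine csInf_le ⟨f xm, fun w hw => ?_⟩ (show z ∈ {z : ℝ | α ≤ prb fun x => f x ≤ z} from hz)
  have hw' : α ≤ prb fun x => f x ≤ w := hw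
  obtain ⟨x, hx⟩ := prb_filter_nonempty h0 hw'
  rw [Finset.mem_filter] at hx
  exact le_trans (hxm x (Finset.mem_univ x)) hx.2

lemma quant_mem {α : ℝ} (h0 : 0 < α) (h1 : α ≤ 1) :
    α ≤ prb fun x => f x ≤ quant f α := by
  classical
  set T : Finset (Fin n → Fin 2) :=
    Finset.univ.filter (fun x => α ≤ prb fun y => f y ≤ f x) with hT
  have hTne : T.Nonempty := by
    obtain ⟨xM, -, hxM⟩ := Finset.exists_max_image Finset.univ f (univ_cube_nonempty n)
    refine ⟨xM, ?_⟩
    rw [hT, Finset.mem_filter]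
    refine ⟨Finset.mem_univ _, ?_⟩
    have : Finset.univ.filter (fun y => f y ≤ f xM) = Finset.univ := by
      apply Finset.filter_true_of_mem
      intro y hy; exact hxM y (Finset.mem_univ y)
    unfold prb
    rw [this, card_univ_cube]
    push_cast
    rw [div_self (by positivity)]
    exact h1
  obtain ⟨x₀, hx₀T, hx₀⟩ := Finset.exists_min_image T f hTne
  rw [hT, Finset.mem_filter] at hx₀T
  have hmem : α ≤ prb fun y => f y ≤ f x₀ := hx₀T.2
  have hlb : ∀ w ∈ {z : ℝ | α ≤ prb fun x => f x ≤ z}, f x₀ ≤ w := by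
    intro w hw
    have hw' : α ≤ prb fun x => f x ≤ w := hw
    obtain ⟨x₁, hx₁T, hx₁⟩ := Finset.exists_max_image
      (Finset.univ.filter (fun x => f x ≤ w)) f (prb_filter_nonempty h0 hw')
    rw [Finset.mem_filter] at hx₁T
    have hsub : α ≤ prb fun y => f y ≤ f x₁ := by
      refine le_trans hw' (prb_mono ?_)
      intro y hy
      by_cases hy2 : y ∈ Finset.univ.filter (fun x => f x ≤ w)
      · exact hx₁ y hy2
      · exact absurd (Finset.mem_filter.2 ⟨Finset.mem_univ y, hy⟩) hy2
    have hx₁T' : x₁ ∈ T := by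
      rw [hT, Finset.mem_filter]; exact ⟨Finset.mem_univ _, hsub⟩
    exact le_trans (hx₀ x₁ hx₁T') hx₁T.2
  have hq : quant f α = f x₀ := by
    unfold quant
    apply le_antisymm
    · exact csInf_le ⟨f x₀, hlb⟩ hmem
    · exact le_csInf ⟨f x₀, hmem⟩ hlb
  rw [hq]
  exact hmem

lemma prb_compl (P : (Fin n → Fin 2) → Prop) : prb P + prb (fun x => ¬ P x) = 1 := by
  unfold prb
  rw [← add_div, div_eq_one_iff_eq (by positivity)]
  rw [← Nat.cast_add]
  rw [Finset.card_filter_add_card_filter_not]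
  rw [card_univ_cube]
  norm_num

lemma tail_ge {δ : ℝ} (h0 : 0 < δ) (h1 : δ < 1) :
    δ ≤ prb fun x => quant f (1-δ) ≤ f x := by
  set b := quant f (1-δ) with hb
  have hcompl := prb_compl (n := n) (fun x => f x < b)
  have hlt : prb (fun x => f x < b) < 1 - δ := by
    by_contra hc
    push_neg at hc
    have hne : (Finset.univ.filter (fun x => f x < b)).Nonempty :=
      prb_filter_nonempty (by linarith) hc
    obtain ⟨x₁, hx₁T, hx₁⟩ := Finset.exists_max_image _ f hne
    rw [Finset.mem_filter] at hx₁T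
    have hsub : 1 - δ ≤ prb fun y => f y ≤ f x₁ := by
      refine le_trans hc (prb_mono ?_)
      intro y hy
      exact hx₁ y (Finset.mem_filter.2 ⟨Finset.mem_univ y, hy⟩)
    have := quant_le f (by linarith : (0:ℝ) < 1 - δ) hsub
    rw [← hb] at this
    exact absurd (lt_of_le_of_lt this hx₁T.2) (lt_irrefl b)
  have heq : prb (fun x => ¬ f x < b) = prb (fun x => b ≤ f x) :=
    prb_congr (fun x => not_lt)
  linarith [heq ▸ hcompl]

end

lemma clamp_contract (c t u w : ℝ) :
    max (-(min (max (u - c) 0) t - min (max (w - c) 0) t)) 0 ≤ max (-(u - w)) 0 := by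
  simp only [max_def, min_def]
  split_ifs <;> simp_all <;> linarith

-- square splits into positive and negative part squares
lemma sq_split (d : ℝ) : d^2 = (max d 0)^2 + (max (-d) 0)^2 := by
  rcases le_total d 0 with h | h
  · rw [max_eq_right h, max_eq_left (by linarith)]; ring
  · rw [max_eq_left h, max_eq_right (by linarith)]; ring

lemma flip_flip' {n : ℕ} (x : Fin n → Fin 2) (i : Fin n) :
    flipBit (flipBit x i) i = x := by
  unfold flipBit
  have h1 : Function.update x i (x i + 1) i = x i + 1 := Function.update_self i _ x
  rw [h1, Function.update_idem]
  have : x i + 1 + 1 = x i := by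
    have : ∀ a : Fin 2, a + 1 + 1 = a := by decide
    exact this (x i)
  rw [this, Function.update_eq_self]

lemma energy_sym {n : ℕ} (g : (Fin n → Fin 2) → ℝ) :
    ∑ x, ∑ i, (g x - g (flipBit x i))^2
      = 2 * ∑ x, ∑ i, (max (-(g x - g (flipBit x i))) 0)^2 := by
  have split : ∑ x, ∑ i, (g x - g (flipBit x i))^2
      = ∑ x, ∑ i, (max (g x - g (flipBit x i)) 0)^2
        + ∑ x, ∑ i, (max (-(g x - g (flipBit x i))) 0)^2 := by
    rw [← Finset.sum_add_distrib]
    apply Finset.sum_congr rfl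
    intro x _
    rw [← Finset.sum_add_distrib]
    exact Finset.sum_congr rfl fun i _ => sq_split _
  have sym : ∑ x, ∑ i, (max (g x - g (flipBit x i)) 0)^2
      = ∑ x, ∑ i, (max (-(g x - g (flipBit x i))) 0)^2 := by
    rw [Finset.sum_comm]
    rw [show (∑ x : Fin n → Fin 2, ∑ i : Fin n, (max (-(g x - g (flipBit x i))) 0)^2)
        = ∑ i : Fin n, ∑ x : Fin n → Fin 2, (max (-(g x - g (flipBit x i))) 0)^2
      from Finset.sum_comm]
    apply Finset.sum_congr rfl
    intro i _
    apply Finset.sum_nbij' (fun x => flipBit x i) (fun x => flipBit x i)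
    · intros; exact Finset.mem_univ _
    · intros; exact Finset.mem_univ _
    · intro x _; exact flip_flip' x i
    · intro x _; exact flip_flip' x i
    · intro x _
      rw [flip_flip']
      congr 1
      rw [neg_sub]
  rw [split, sym]
  ring

lemma jensen_sum {α : Type*} [Fintype α] (h : α → ℝ) (S : Finset α) (hS : S.Nonempty)
    (hnn : ∀ x, 0 ≤ h x) (hsupp : ∀ x, x ∉ S → h x = 0) :
    (∑ x, h x) * Real.log ((∑ x, h x) / S.card) ≤ ∑ x, h x * Real.log (h x) := by
  set k : ℝ := (S.card : ℝ) with hk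
  have hkpos : (0:ℝ) < k := by
    rw [hk]; exact_mod_cast Finset.card_pos.2 hS
  have hMsum : ∑ x, h x = ∑ x ∈ S, h x := by
    rw [← Finset.sum_subset (Finset.subset_univ S)]
    intro x _ hx
    exact hsupp x hx
  have hphisum : ∑ x, h x * Real.log (h x) = ∑ x ∈ S, h x * Real.log (h x) := by
    rw [← Finset.sum_subset (Finset.subset_univ S)]
    intro x _ hx
    rw [hsupp x hx]
    simp
  have hJ := Real.convexOn_mul_log.map_sum_le (t := S) (w := fun _ => 1/k) (p := h)
    (fun i _ => by positivity) (by rw [Finset.sum_const, nsmul_eq_mul, ← hk]; field_simp [hkpos.ne'])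
    (fun i _ => Set.mem_Ici.2 (hnn i))
  simp only [smul_eq_mul] at hJ
  have hl : ∑ i ∈ S, (1/k) * h i = (∑ x, h x) / k := by
    rw [← Finset.mul_sum, hMsum]; ring
  rw [hl] at hJ
  have hr : ∑ i ∈ S, (1/k) * (h i * Real.log (h i)) = (∑ x, h x * Real.log (h x)) / k := by
    rw [← Finset.mul_sum, hphisum]; ring
  rw [hr] at hJ
  have := mul_le_mul_of_nonneg_left hJ hkpos.le
  calc (∑ x, h x) * Real.log ((∑ x, h x) / k)
      = k * ((∑ x, h x)/k * Real.log ((∑ x, h x)/k)) := by field_simp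
    _ ≤ k * ((∑ x, h x * Real.log (h x)) / k) := this
    _ = ∑ x, h x * Real.log (h x) := by field_simp

set_option maxHeartbeats 2000000 in
theorem stmt_7 {n : ℕ} (f : (Fin n → Fin 2) → ℝ) (v : ℝ) (hv : 0 < v)
    (hcond : ∀ x, ∑ i, (max (-(f x - f (flipBit x i))) 0) ^ 2 ≤ v)
    (B : ℝ)
    (hB : IsGreatest (Set.range fun p : (Fin n → Fin 2) × Fin n =>
      |f p.1 - f (flipBit p.1 p.2)|) B)
    (δ γ : ℝ) (hδ : 0 < δ) (hδγ : δ < γ) (hγ : γ ≤ 1 / 2) :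
    quant f (1 - δ) - quant f (1 - γ) ≤
      B + Real.sqrt ((72 / 5) * v * γ / (δ * Real.log (Real.exp 2 / (2 * γ)))) := by
  have hγ0 : (0:ℝ) < γ := hδ.trans hδγ
  have hδ1 : δ < 1 := by linarith
  -- basic facts about B
  obtain ⟨p₀, hp₀⟩ := hB.1
  have hB0 : 0 ≤ B := hp₀ ▸ abs_nonneg _
  have hBub : ∀ (x : Fin n → Fin 2) (i : Fin n), |f x - f (flipBit x i)| ≤ B :=
    fun x i => hB.2 ⟨(x, i), rfl⟩
  -- the log term
  set L : ℝ := Real.log (Real.exp 2 / (2 * γ)) with hLdef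
  have hL : L = 2 - Real.log (2*γ) := by
    rw [hLdef, Real.log_div (Real.exp_ne_zero _) (by positivity), Real.log_exp]
  have hlog2γ : Real.log (2*γ) ≤ 0 := Real.log_nonpos (by positivity) (by linarith)
  have hLpos : 0 < L := by rw [hL]; linarith
  set t : ℝ := Real.sqrt ((72 / 5) * v * γ / (δ * L)) with htdef
  have htarg : (0:ℝ) < (72 / 5) * v * γ / (δ * L) := by positivity
  have ht0 : 0 < t := Real.sqrt_pos.2 htarg
  have ht2 : t^2 = (72 / 5) * v * γ / (δ * L) := Real.sq_sqrt htarg.le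
  set a : ℝ := quant f (1 - γ) with hadef
  set b : ℝ := quant f (1 - δ) with hbdef
  -- suppose not
  by_contra hcon
  push_neg at hcon
  have hbat : a + B + t < b := by linarith
  -- the truncated function
  set g : (Fin n → Fin 2) → ℝ := fun x => min (max (f x - (a + B)) 0) t with hgdef
  have hg0 : ∀ x, 0 ≤ g x := fun x => le_min (le_max_right _ 0) ht0.le
  have hgt : ∀ x, g x ≤ t := fun x => min_le_right _ _
  set h : (Fin n → Fin 2) → ℝ := fun x => (g x)^2 with hhdef
  set N : ℝ := (2:ℝ)^n with hNdef
  have hN : (0:ℝ) < N := by positivity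
  set M : ℝ := ∑ x, h x with hMdef
  -- support set
  set S : Finset (Fin n → Fin 2) := Finset.univ.filter (fun x => a < f x) with hSdef
  have hsupp : ∀ x, x ∉ S → h x = 0 := by
    intro x hx
    rw [hSdef, Finset.mem_filter] at hx
    push_neg at hx
    have hfa : f x ≤ a := hx (Finset.mem_univ x)
    have : max (f x - (a + B)) 0 = 0 := max_eq_right (by linarith)
    simp only [hhdef, hgdef, this]
    rw [min_eq_left ht0.le]
    norm_num
  -- card S ≤ γ 2^n
  have hScard : (S.card : ℝ) ≤ γ * N := by
    have h1 : 1 - γ ≤ prb fun x => f x ≤ a := quant_mem f (by linarith) (by linarith)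
    have h2 := prb_compl (fun x : Fin n → Fin 2 => f x ≤ a)
    have h3 : prb (fun x : Fin n → Fin 2 => ¬ f x ≤ a) = (S.card : ℝ)/N := by
      rw [prb_congr (fun x => not_le), hSdef]; rfl
    rw [h3] at h2
    have : (S.card : ℝ)/N ≤ γ := by linarith
    calc (S.card : ℝ) = ((S.card : ℝ)/N) * N := by field_simp
      _ ≤ γ * N := mul_le_mul_of_nonneg_right this hN.le
  -- M ≥ δ t² N
  have hMlb : δ * t^2 * N ≤ M := by
    have htail : δ ≤ prb fun x => b ≤ f x := tail_ge f hδ hδ1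
    set Tb : Finset (Fin n → Fin 2) := Finset.univ.filter (fun x => b ≤ f x) with hTb
    have hTcard : δ * N ≤ (Tb.card : ℝ) := by
      have : prb (fun x => b ≤ f x) = (Tb.card : ℝ)/N := rfl
      rw [this] at htail
      calc δ * N = (δ) * N := rfl
        _ ≤ ((Tb.card : ℝ)/N) * N := mul_le_mul_of_nonneg_right htail hN.le
        _ = (Tb.card : ℝ) := by field_simp
    have hgT : ∀ x ∈ Tb, h x = t^2 := by
      intro x hx
      rw [hTb, Finset.mem_filter] at hx
      have : t ≤ f x - (a + B) := by linarith [hx.2]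
      have hmax : max (f x - (a + B)) 0 = f x - (a + B) := max_eq_left (by linarith)
      simp only [hhdef, hgdef, hmax]
      rw [min_eq_right this]
    calc δ * t^2 * N = t^2 * (δ * N) := by ring
      _ ≤ t^2 * Tb.card := mul_le_mul_of_nonneg_left hTcard (by positivity)
      _ = ∑ x ∈ Tb, h x := by rw [Finset.sum_congr rfl hgT, Finset.sum_const]; ring
      _ ≤ M := Finset.sum_le_sum_of_subset_of_nonneg (Finset.subset_univ _)
          (fun x _ _ => sq_nonneg _)
  have hM0 : 0 < M := lt_of_lt_of_le (by positivity) hMlb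
  -- S nonempty
  have hSne : S.Nonempty := by
    by_contra hc
    rw [Finset.not_nonempty_iff_eq_empty] at hc
    have : M = 0 := by
      rw [hMdef]
      apply Finset.sum_eq_zero
      intro x _
      apply hsupp
      rw [hc]
      exact Finset.notMem_empty x
    linarith
  have hk1 : (1:ℝ) ≤ (S.card : ℝ) := by exact_mod_cast Finset.card_pos.2 hSne
  -- energy bound
  have henergy : ∑ x, ∑ i, (g x - g (flipBit x i))^2 ≤ 2 * v * (S.card : ℝ) := by
    rw [energy_sym]
    have hpt : ∀ x : Fin n → Fin 2, ∑ i, (max (-(g x - g (flipBit x i))) 0)^2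
        ≤ if x ∈ S then v else 0 := by
      intro x
      by_cases hx : x ∈ S
      · rw [if_pos hx]
        refine le_trans (Finset.sum_le_sum (fun i _ => ?_)) (hcond x)
        have := clamp_contract (a + B) t (f x) (f (flipBit x i))
        have h2 : max (-(g x - g (flipBit x i))) 0 ≤ max (-(f x - f (flipBit x i))) 0 := this
        exact pow_le_pow_left₀ (le_max_right _ 0) h2 2
      · rw [if_neg hx]
        apply le_of_eq
        apply Finset.sum_eq_zero
        intro i _
        rw [hSdef, Finset.mem_filter] at hx
        push_neg at hx
        have hfa : f x ≤ a := hx (Finset.mem_univ x)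
        have hfl : f (flipBit x i) ≤ a + B := by
          have := hBub x i
          rw [abs_le] at this
          linarith [this.1]
        have hgx0 : g (flipBit x i) = 0 := by
          have : max (f (flipBit x i) - (a + B)) 0 = 0 := max_eq_right (by linarith)
          simp only [hgdef, this]
          rw [min_eq_left ht0.le]
        have : max (-(g x - g (flipBit x i))) 0 = 0 := by
          rw [hgx0]
          apply max_eq_right
          simp [hg0 x]
        rw [this]
        norm_num
    calc 2 * ∑ x, ∑ i, (max (-(g x - g (flipBit x i))) 0)^2
        ≤ 2 * ∑ x, if x ∈ S then v else 0 := by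
          apply mul_le_mul_of_nonneg_left (Finset.sum_le_sum (fun x _ => hpt x)) (by norm_num)
      _ = 2 * v * (S.card : ℝ) := by
          rw [Finset.sum_ite_mem, Finset.univ_inter, Finset.sum_const]
          ring
  -- LSI application
  have hLSI := lsi n g
  rw [← hNdef] at hLSI
  have hent : (∑ x, h x * Real.log (h x)) / N - (M/N) * Real.log (M/N) ≤ v * γ := by
    have e1 : ∑ x, (g x)^2 * Real.log ((g x)^2) = ∑ x, h x * Real.log (h x) := rfl
    have e2 : ∑ x, (g x)^2 = M := rfl
    rw [e1, e2] at hLSI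
    refine le_trans hLSI ?_
    calc (1/2) * ((∑ x, ∑ i, (g x - g (flipBit x i))^2) / N)
        ≤ (1/2) * ((2 * v * (S.card : ℝ)) / N) := by
          apply mul_le_mul_of_nonneg_left _ (by norm_num)
          exact div_le_div_of_nonneg_right henergy hN.le -- check name
      _ ≤ (1/2) * ((2 * v * (γ * N)) / N) := by
          apply mul_le_mul_of_nonneg_left _ (by norm_num)
          apply div_le_div_of_nonneg_right _ hN.le
          nlinarith
      _ = v * γ := by field_simp
  -- Jensen lower bound
  have hjen := jensen_sum h S hSne (fun x => sq_nonneg _) hsupp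
  rw [← hMdef] at hjen
  -- entropy lower bound : M/N * (log N - log S.card) ≤ Ent
  have hlogs : Real.log (M / S.card) - Real.log (M/N) = Real.log N - Real.log (S.card : ℝ) := by
    rw [Real.log_div (ne_of_gt hM0) (by positivity), Real.log_div (ne_of_gt hM0) (ne_of_gt hN)]
    ring
  have hentlb : (M/N) * (Real.log N - Real.log (S.card : ℝ))
      ≤ (∑ x, h x * Real.log (h x)) / N - (M/N) * Real.log (M/N) := by
    have h1 : M * Real.log (M / S.card) / N ≤ (∑ x, h x * Real.log (h x)) / N :=
      div_le_div_of_nonneg_right hjen hN.le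
    calc (M/N) * (Real.log N - Real.log (S.card : ℝ))
        = M * Real.log (M / S.card) / N - (M/N) * Real.log (M/N) := by
          rw [← hlogs]; field_simp
      _ ≤ _ := by linarith
  -- log N - log S.card ≥ - log γ
  have hloggap : -Real.log γ ≤ Real.log N - Real.log (S.card : ℝ) := by
    have : Real.log (S.card : ℝ) ≤ Real.log (γ * N) :=
      Real.log_le_log (by linarith) hScard
    rw [Real.log_mul (ne_of_gt hγ0) (ne_of_gt hN)] at this
    linarith
  have hlogγneg : 0 < -Real.log γ := by
    have : Real.log γ < 0 := Real.log_neg hγ0 (by linarith)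
    linarith
  -- combine
  have hfinal : (M/N) * (-Real.log γ) ≤ v * γ := by
    have h1 : (M/N) * (-Real.log γ) ≤ (M/N) * (Real.log N - Real.log (S.card : ℝ)) :=
      mul_le_mul_of_nonneg_left hloggap (by positivity)
    linarith
  have hMN : (72/5) * v * γ / L ≤ M/N := by
    have : δ * t^2 ≤ M/N := by
      rw [le_div_iff₀ hN]
      exact hMlb
    rw [ht2] at this
    calc (72/5) * v * γ / L = δ * ((72/5) * v * γ / (δ * L)) := by field_simp
      _ ≤ M/N := this
  -- numeric contradiction
  have hchain : ((72/5) * v * γ / L) * (-Real.log γ) ≤ v * γ :=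
    le_trans (mul_le_mul_of_nonneg_right hMN hlogγneg.le) hfinal
  have hkey : (72/5) * (-Real.log γ) ≤ L := by
    have hvγ : 0 < v * γ := by positivity
    rw [div_mul_eq_mul_div, div_le_iff₀ hLpos] at hchain
    calc (72/5) * (-Real.log γ) = ((72/5) * v * γ * (-Real.log γ)) / (v * γ) := by
          field_simp
      _ ≤ (v * γ * L) / (v * γ) := by
          apply div_le_div_of_nonneg_right _ hvγ.le
          calc (72/5) * v * γ * (-Real.log γ) = (72/5) * v * γ * -Real.log γ := by ring
            _ ≤ v * γ * L := hchain
      _ = L := by field_simp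
  have hlog2 : (0.6931471803 : ℝ) < Real.log 2 := Real.log_two_gt_d9
  have hγlog : Real.log 2 ≤ -Real.log γ := by
    have h1 : Real.log γ ≤ Real.log (1/2) := Real.log_le_log hγ0 hγ
    have h2 : Real.log (1/2 : ℝ) = -Real.log 2 := by
      rw [one_div, Real.log_inv]
    linarith [h2 ▸ h1]
  have hL2 : L = 2 - Real.log 2 - Real.log γ := by
    rw [hL, Real.log_mul (by norm_num) (ne_of_gt hγ0)]
    ring
  nlinarith [hkey, hγlog, hlog2, hL2]
end

section
/- Let f : {0,1}ⁿ → ℝ satisfy condition (3.1) with nonnegative nondecreasing function ϕ and constant B, where B = max over x ∈ {0,1}ⁿ and 1 ≤ i ≤ n of |f(x) − f(x^{(i)})|. Then for all real numbers b > a ≥ Mf (the median of f(X)) with P{f(X) ≥ b} > 0, one has b − a ≤ sqrt( (72/5)·ϕ(b+B)·P{f(X) > a} / ( P{f(X) ≥ b} · log( e² / (2·P{f(X) > a}) ) ) ). -/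
open scoped Classical
open Finset

namespace Stmt8

variable {n : ℕ}

lemma fin2_add11 : ∀ v : Fin 2, v + 1 + 1 = v := by decide

lemma fin2_ne (v w : Fin 2) (h : v ≠ w) : v = w + 1 := by revert v w; decide

lemma flip_flip (x : Fin n → Fin 2) (i : Fin n) : flipBit (flipBit x i) i = x := by
  unfold flipBit
  rw [Function.update_self, Function.update_idem, fin2_add11, Function.update_eq_self]

lemma flip_comm (x : Fin n → Fin 2) (i j : Fin n) (hij : i ≠ j) :
    flipBit (flipBit x i) j = flipBit (flipBit x j) i := by
  unfold flipBit
  rw [Function.update_of_ne hij.symm, Function.update_of_ne hij]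
  exact Function.update_comm hij _ _ x

lemma flip_invol (i : Fin n) : Function.Involutive (fun x : Fin n → Fin 2 => flipBit x i) :=
  fun x => flip_flip x i

lemma sum_flip (i : Fin n) (F : (Fin n → Fin 2) → ℝ) :
    ∑ x, F (flipBit x i) = ∑ x, F x :=
  Fintype.sum_bijective _ (flip_invol i).bijective _ _ (fun _ => rfl)

noncomputable def Ai (i : Fin n) (h : (Fin n → Fin 2) → ℝ) : (Fin n → Fin 2) → ℝ :=
  fun x => (h x + h (flipBit x i)) / 2

noncomputable def ent (h : (Fin n → Fin 2) → ℝ) : ℝ :=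
  expecb (fun x => h x * Real.log (h x)) - expecb h * Real.log (expecb h)

noncomputable def Qf (u v : ℝ) : ℝ := (u - v) ^ 2 / (u + v)

noncomputable def e2 (u v : ℝ) : ℝ :=
  (u * Real.log u + v * Real.log v) / 2 - ((u + v) / 2) * Real.log ((u + v) / 2)

def DepOn (S : Finset (Fin n)) (h : (Fin n → Fin 2) → ℝ) : Prop :=
  ∀ x : Fin n → Fin 2, ∀ i ∉ S, h (flipBit x i) = h x

lemma expecb_mono {f g : (Fin n → Fin 2) → ℝ} (h : ∀ x, f x ≤ g x) : expecb f ≤ expecb g := by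
  unfold expecb
  gcongr with x
  exact h x

lemma ent_chain (i : Fin n) (h : (Fin n → Fin 2) → ℝ) :
    ent h = expecb (fun x => e2 (h x) (h (flipBit x i))) + ent (Ai i h) := by
  have hsum : ∑ x, h (flipBit x i) = ∑ x, h x := sum_flip i h
  have hsuml : ∑ x, h (flipBit x i) * Real.log (h (flipBit x i)) = ∑ x, h x * Real.log (h x) :=
    sum_flip i (fun y => h y * Real.log (h y))
  have hA : expecb (Ai i h) = expecb h := by
    unfold expecb Ai
    congr 1
    rw [← Finset.sum_div, Finset.sum_add_distrib, hsum]
    ring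
  have hE : ∑ x, e2 (h x) (h (flipBit x i))
      = (∑ x, h x * Real.log (h x)) - ∑ x, Ai i h x * Real.log (Ai i h x) := by
    unfold e2 Ai
    rw [Finset.sum_sub_distrib, ← Finset.sum_div, Finset.sum_add_distrib, hsuml]
    ring
  unfold ent
  rw [hA]
  have h2 : expecb (fun x => e2 (h x) (h (flipBit x i)))
      = expecb (fun x => h x * Real.log (h x)) - expecb (fun x => Ai i h x * Real.log (Ai i h x)) := by
    unfold expecb
    rw [hE]
    ring
  rw [h2]
  ring


lemma mul_log_le {t m : ℝ} (ht : 0 ≤ t) (hm : 0 < m) :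
    t * Real.log t ≤ t * Real.log m + t ^ 2 / m - t := by
  rcases eq_or_lt_of_le ht with h0 | h0
  · simp [← h0]
  · have hlog : Real.log (t / m) ≤ t / m - 1 := Real.log_le_sub_one_of_pos (by positivity)
    rw [Real.log_div (ne_of_gt h0) (ne_of_gt hm)] at hlog
    have h1 := mul_le_mul_of_nonneg_left hlog ht
    have h2 : t * (t / m) = t ^ 2 / m := by ring
    nlinarith

lemma e2_le {u v : ℝ} (hu : 0 ≤ u) (hv : 0 ≤ v) : e2 u v ≤ Qf u v / 2 := by
  rcases eq_or_lt_of_le (add_nonneg hu hv) with h0 | h0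
  · have hu0 : u = 0 := by linarith
    have hv0 : v = 0 := by linarith
    simp [e2, Qf, hu0, hv0]
  · have hm : 0 < (u + v) / 2 := by linarith
    have h1 := mul_log_le hu hm
    have h2 := mul_log_le hv hm
    have key : ((u * Real.log ((u+v)/2) + u ^ 2 / ((u+v)/2) - u)
          + (v * Real.log ((u+v)/2) + v ^ 2 / ((u+v)/2) - v)) / 2
        - ((u + v) / 2) * Real.log ((u + v) / 2) = (u - v) ^ 2 / (u + v) / 2 := by
      field_simp
      ring
    unfold e2 Qf
    linarith

lemma Qf_nonneg {u v : ℝ} (hu : 0 ≤ u) (hv : 0 ≤ v) : 0 ≤ Qf u v := by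
  unfold Qf
  positivity

lemma half_sq_div (x y : ℝ) (hy : y ≠ 0) : (x / 2) ^ 2 / (y / 2) = x ^ 2 / y / 2 := by
  field_simp

lemma Qf_add {u₁ v₁ u₂ v₂ : ℝ} (hu₁ : 0 ≤ u₁) (hv₁ : 0 ≤ v₁) (hu₂ : 0 ≤ u₂) (hv₂ : 0 ≤ v₂) :
    Qf ((u₁ + u₂) / 2) ((v₁ + v₂) / 2) ≤ (Qf u₁ v₁ + Qf u₂ v₂) / 2 := by
  unfold Qf
  rcases eq_or_lt_of_le (add_nonneg hu₁ hv₁) with h1 | h1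
  · have hu0 : u₁ = 0 := by linarith
    have hv0 : v₁ = 0 := by linarith
    simp only [hu0, hv0, zero_add]
    rcases eq_or_lt_of_le (add_nonneg hu₂ hv₂) with h2 | h2
    · have hu20 : u₂ = 0 := by linarith
      have hv20 : v₂ = 0 := by linarith
      simp [hu20, hv20]
    · rw [show ((0:ℝ) - 0) ^ 2 / (0:ℝ) = 0 by norm_num, zero_add,
        show u₂ / 2 - v₂ / 2 = (u₂ - v₂) / 2 by ring,
        show u₂ / 2 + v₂ / 2 = (u₂ + v₂) / 2 by ring,
        half_sq_div _ _ (ne_of_gt h2)]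
  · rcases eq_or_lt_of_le (add_nonneg hu₂ hv₂) with h2 | h2
    · have hu20 : u₂ = 0 := by linarith
      have hv20 : v₂ = 0 := by linarith
      simp only [hu20, hv20, add_zero]
      rw [show ((0:ℝ) - 0) ^ 2 / (0:ℝ) = 0 by norm_num, add_zero,
        show u₁ / 2 - v₁ / 2 = (u₁ - v₁) / 2 by ring,
        show u₁ / 2 + v₁ / 2 = (u₁ + v₁) / 2 by ring,
        half_sq_div _ _ (ne_of_gt h1)]
    · have key : ((u₁ - v₁) + (u₂ - v₂)) ^ 2 / ((u₁ + v₁) + (u₂ + v₂))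
          ≤ (u₁ - v₁) ^ 2 / (u₁ + v₁) + (u₂ - v₂) ^ 2 / (u₂ + v₂) := by
        rw [div_add_div _ _ (ne_of_gt h1) (ne_of_gt h2), div_le_div_iff₀ (by linarith) (by positivity)]
        nlinarith [sq_nonneg ((u₁ - v₁) * (u₂ + v₂) - (u₂ - v₂) * (u₁ + v₁))]
      rw [show (u₁ + u₂) / 2 - (v₁ + v₂) / 2 = ((u₁ - v₁) + (u₂ - v₂)) / 2 by ring,
        show (u₁ + u₂) / 2 + (v₁ + v₂) / 2 = ((u₁ + v₁) + (u₂ + v₂)) / 2 by ring,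
        half_sq_div _ _ (by linarith : (u₁ + v₁) + (u₂ + v₂) ≠ 0)]
      linarith

lemma Qf_sq_le {c d : ℝ} (hc : 0 ≤ c) (hd : 0 ≤ d) : Qf (c ^ 2) (d ^ 2) / 2 ≤ (c - d) ^ 2 := by
  unfold Qf
  rcases eq_or_lt_of_le (add_nonneg (sq_nonneg c) (sq_nonneg d)) with h0 | h0
  · rw [← h0]
    simp
    positivity
  · rw [div_div, div_le_iff₀ (by linarith)]
    nlinarith [sq_nonneg ((c - d) ^ 2), sq_nonneg (c - d), sq_nonneg (c + d)]


lemma ent_ge (h : (Fin n → Fin 2) → ℝ) (h0 : ∀ x, 0 ≤ h x) (hpos : 0 < ∑ x, h x) :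
    expecb h * Real.log ((2 ^ n : ℝ) / ((univ.filter fun x => 0 < h x).card : ℝ)) ≤ ent h := by
  classical
  set A := univ.filter fun x => 0 < h x with hA
  have hsupp : ∀ x ∈ univ, x ∉ A → h x = 0 := by
    intro x _ hx
    rw [hA, Finset.mem_filter] at hx
    push_neg at hx
    exact le_antisymm (hx (mem_univ x)) (h0 x)
  have hsumA : ∑ x ∈ A, h x = ∑ x, h x :=
    (Finset.sum_subset (Finset.subset_univ A) hsupp).symm ▸ rfl
  have hsumA' : ∑ x ∈ A, h x = ∑ x, h x := Finset.sum_subset (Finset.subset_univ A) hsupp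
  have hAne : A.Nonempty := by
    by_contra hne
    rw [Finset.not_nonempty_iff_eq_empty] at hne
    rw [hne, Finset.sum_empty] at hsumA'
    linarith
  have hk : 0 < (A.card : ℝ) := by exact_mod_cast Finset.card_pos.mpr hAne
  set c := (∑ x, h x) / (A.card : ℝ) with hc
  have hcpos : 0 < c := div_pos hpos hk
  have hterm : ∀ x ∈ A, h x * Real.log c + (h x - c) ≤ h x * Real.log (h x) := by
    intro x hx
    have hx0 : 0 < h x := (Finset.mem_filter.mp hx).2
    have hlog : Real.log (c / h x) ≤ c / h x - 1 := Real.log_le_sub_one_of_pos (by positivity)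
    rw [Real.log_div (ne_of_gt hcpos) (ne_of_gt hx0)] at hlog
    have h1 := mul_le_mul_of_nonneg_left hlog (le_of_lt hx0)
    have h2 : h x * (c / h x) = c := by field_simp
    nlinarith
  have hsum2 : ∑ x ∈ A, (h x * Real.log c + (h x - c)) ≤ ∑ x ∈ A, h x * Real.log (h x) :=
    Finset.sum_le_sum hterm
  have hsumAl : ∑ x ∈ A, h x * Real.log (h x) = ∑ x, h x * Real.log (h x) :=
    Finset.sum_subset (Finset.subset_univ A) (fun x hx hxa => by rw [hsupp x hx hxa]; simp)
  have hL : ∑ x ∈ A, (h x * Real.log c + (h x - c)) = Real.log c * ∑ x, h x := by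
    rw [Finset.sum_add_distrib, Finset.sum_sub_distrib, hsumA', Finset.sum_const,
      nsmul_eq_mul, ← Finset.sum_mul, hsumA']
    rw [hc]
    field_simp
    ring
  have hmain : Real.log c * ∑ x, h x ≤ ∑ x, h x * Real.log (h x) := by
    rw [← hL, ← hsumAl]
    exact hsum2
  have hN : (0:ℝ) < (2:ℝ) ^ n := by positivity
  unfold ent expecb
  have hlogdiff : Real.log ((2 ^ n : ℝ) / (A.card : ℝ))
      = Real.log c - Real.log ((∑ x, h x) / 2 ^ n) := by
    rw [hc, Real.log_div (by positivity) (ne_of_gt hk),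
      Real.log_div (ne_of_gt hpos) (ne_of_gt hk),
      Real.log_div (ne_of_gt hpos) (ne_of_gt hN)]
    ring
  rw [hlogdiff, mul_sub]
  have h4 : (∑ x, h x) * Real.log c ≤ ∑ x, h x * Real.log (h x) := by
    rw [mul_comm]; exact hmain
  have h5 : (∑ x, h x) / 2 ^ n * Real.log c ≤ (∑ x, h x * Real.log (h x)) / 2 ^ n := by
    rw [div_mul_eq_mul_div]
    gcongr
  linarith



lemma depOn_const (h : (Fin n → Fin 2) → ℝ) (hd : DepOn ∅ h) (x y : Fin n → Fin 2) :
    h x = h y := by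
  classical
  suffices key : ∀ (m : ℕ) (y : Fin n → Fin 2), (univ.filter fun j => x j ≠ y j).card = m → h x = h y by
    exact key _ y rfl
  intro m
  induction m with
  | zero =>
    intro y hy
    have : ∀ j, x j = y j := by
      intro j
      by_contra hj
      have : j ∈ univ.filter fun j => x j ≠ y j := by simp [hj]
      rw [Finset.card_eq_zero.mp hy] at this
      exact absurd this (Finset.notMem_empty j)
    rw [funext this]
  | succ m ih =>
    intro y hy
    have hne : (univ.filter fun j => x j ≠ y j).Nonempty := by
      rw [← Finset.card_pos, hy]; omega
    obtain ⟨j, hj⟩ := hne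
    have hxj : x j ≠ y j := (Finset.mem_filter.mp hj).2
    have hstep : h (flipBit y j) = h y := hd y j (Finset.notMem_empty j)
    have hset : (univ.filter fun l => x l ≠ flipBit y j l)
        = (univ.filter fun l => x l ≠ y l).erase j := by
      ext l
      simp only [Finset.mem_erase, Finset.mem_filter, Finset.mem_univ, true_and]
      by_cases hlj : l = j
      · subst hlj
        simp only [flipBit, Function.update_self]
        constructor
        · intro hcon
          exact absurd (fin2_ne _ _ hxj) hcon
        · rintro ⟨hc, -⟩
          exact absurd rfl hc
      · simp only [flipBit, Function.update_of_ne hlj]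
        tauto
    have hcard : (univ.filter fun l => x l ≠ flipBit y j l).card = m := by
      rw [hset, Finset.card_erase_of_mem hj, hy]
      omega
    rw [← hstep]
    exact ih (flipBit y j) hcard
lemma card_cube : (Fintype.card (Fin n → Fin 2) : ℝ) = 2 ^ n := by
  rw [Fintype.card_fun, Fintype.card_fin, Fintype.card_fin]
  push_cast
  ring

lemma expecb_const (c : ℝ) : expecb (fun _ : Fin n → Fin 2 => c) = c := by
  unfold expecb
  rw [Finset.sum_const, Finset.card_univ, nsmul_eq_mul]
  rw [show ((Fintype.card (Fin n → Fin 2) : ℝ)) = 2 ^ n from card_cube]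
  field_simp

lemma ent_const (c : ℝ) : ent (fun _ : Fin n → Fin 2 => c) = 0 := by
  unfold ent
  rw [expecb_const, expecb_const]
  ring

lemma Ai_nonneg (i : Fin n) (h : (Fin n → Fin 2) → ℝ) (h0 : ∀ x, 0 ≤ h x) (x : Fin n → Fin 2) :
    0 ≤ Ai i h x := by
  unfold Ai
  have := h0 x
  have := h0 (flipBit x i)
  linarith

lemma depOn_Ai {S : Finset (Fin n)} {i : Fin n} (hi : i ∉ S) (h : (Fin n → Fin 2) → ℝ)
    (hd : DepOn (insert i S) h) : DepOn S (Ai i h) := by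
  intro x j hj
  by_cases hji : j = i
  · subst hji
    unfold Ai
    rw [flip_flip]
    ring
  · have hjS : j ∉ insert i S := by simp [hji, hj]
    have h1 : h (flipBit x j) = h x := hd x j hjS
    have h2 : h (flipBit (flipBit x j) i) = h (flipBit x i) := by
      rw [← flip_comm x i j (fun e => hji (e.symm))]
      exact hd (flipBit x i) j hjS
    unfold Ai
    rw [h1, h2]

lemma expecb_sum {s : Finset (Fin n)} (F : Fin n → (Fin n → Fin 2) → ℝ) :
    ∑ j ∈ s, expecb (F j) = expecb (fun x => ∑ j ∈ s, F j x) := by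
  unfold expecb
  rw [← Finset.sum_div]
  congr 1
  rw [Finset.sum_comm]

lemma expecb_half (F : (Fin n → Fin 2) → ℝ) :
    expecb F / 2 = expecb (fun x => F x / 2) := by
  unfold expecb
  rw [div_right_comm, Finset.sum_div]

lemma ent_le_sum (S : Finset (Fin n)) :
    ∀ h : (Fin n → Fin 2) → ℝ, (∀ x, 0 ≤ h x) → DepOn S h →
      ent h ≤ ∑ j ∈ S, expecb (fun x => Qf (h x) (h (flipBit x j))) / 2 := by
  classical
  induction S using Finset.induction_on with
  | empty =>
    intro h h0 hd
    have : h = fun _ => h Classical.ofNonempty := funext fun x => depOn_const h hd x _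
    rw [this, ent_const]
    simp
  | insert _ _ hi =>
    rename_i i S ih
    intro h h0 hd
    rw [Finset.sum_insert hi]
    have hAi0 := Ai_nonneg i h h0
    have hAid := depOn_Ai hi h hd
    have h1 := ih (Ai i h) hAi0 hAid
    have h2 : ∀ j ∈ S, expecb (fun x => Qf (Ai i h x) (Ai i h (flipBit x j)))
        ≤ expecb (fun x => Qf (h x) (h (flipBit x j))) := by
      intro j hjS
      have hji : j ≠ i := by rintro rfl; exact hi hjS
      have key : ∀ x, Qf (Ai i h x) (Ai i h (flipBit x j))
          ≤ (Qf (h x) (h (flipBit x j)) + Qf (h (flipBit x i)) (h (flipBit (flipBit x i) j))) / 2 := by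
        intro x
        have hAx : Ai i h (flipBit x j) = (h (flipBit x j) + h (flipBit (flipBit x i) j)) / 2 := by
          unfold Ai
          rw [flip_comm x j i hji]
        rw [hAx]
        exact Qf_add (h0 x) (h0 _) (h0 _) (h0 _)
      have step1 : expecb (fun x => Qf (Ai i h x) (Ai i h (flipBit x j)))
          ≤ expecb (fun x => (Qf (h x) (h (flipBit x j))
              + Qf (h (flipBit x i)) (h (flipBit (flipBit x i) j))) / 2) :=
        expecb_mono key
      have step2 : expecb (fun x => (Qf (h x) (h (flipBit x j))
              + Qf (h (flipBit x i)) (h (flipBit (flipBit x i) j))) / 2)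
          = expecb (fun x => Qf (h x) (h (flipBit x j))) := by
        unfold expecb
        congr 1
        rw [← Finset.sum_div, Finset.sum_add_distrib]
        have : ∑ x, Qf (h (flipBit x i)) (h (flipBit (flipBit x i) j))
            = ∑ x, Qf (h x) (h (flipBit x j)) :=
          sum_flip i (fun y => Qf (h y) (h (flipBit y j)))
        rw [this]
        ring
      linarith [step1, step2.le, step2.ge]
    have h3 : expecb (fun x => e2 (h x) (h (flipBit x i)))
        ≤ expecb (fun x => Qf (h x) (h (flipBit x i))) / 2 := by
      rw [expecb_half]
      exact expecb_mono (fun x => e2_le (h0 x) (h0 _))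
    have hchain := ent_chain i h
    have h4 : ∑ j ∈ S, expecb (fun x => Qf (Ai i h x) (Ai i h (flipBit x j))) / 2
        ≤ ∑ j ∈ S, expecb (fun x => Qf (h x) (h (flipBit x j))) / 2 := by
      apply Finset.sum_le_sum
      intro j hj
      have := h2 j hj
      linarith
    linarith



lemma sq_split (t : ℝ) : t ^ 2 = (max t 0) ^ 2 + (max (-t) 0) ^ 2 := by
  rcases le_total t 0 with h | h
  · rw [max_eq_right h, max_eq_left (by linarith)]
    ring
  · rw [max_eq_left h, max_eq_right (by linarith)]
    ring

lemma prb_eq (P : (Fin n → Fin 2) → Prop) [DecidablePred P] :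
    prb P = ((univ.filter P).card : ℝ) / 2 ^ n := by
  unfold prb
  rw [Finset.filter_congr_decidable]

lemma median_half (f : (Fin n → Fin 2) → ℝ) (a : ℝ) (ha : quant f (1/2) ≤ a) :
    (1:ℝ)/2 ≤ prb (fun x => f x ≤ a) := by
  classical
  by_contra hlt
  push_neg at hlt
  have huniv : (univ : Finset (Fin n → Fin 2)).Nonempty := univ_nonempty
  have h2n : (0:ℝ) < 2 ^ n := by positivity
  have hTne : {z : ℝ | 1/2 ≤ prb fun x => f x ≤ z}.Nonempty := by
    refine ⟨(univ.image f).max' (huniv.image f), ?_⟩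
    have hall : univ.filter (fun x => f x ≤ (univ.image f).max' (huniv.image f)) = univ := by
      apply Finset.filter_true_of_mem
      intro x _
      exact Finset.le_max' _ _ (Finset.mem_image_of_mem f (Finset.mem_univ x))
    show (1:ℝ)/2 ≤ prb _
    unfold prb
    rw [hall, Finset.card_univ,
      show ((Fintype.card (Fin n → Fin 2) : ℝ)) = 2 ^ n from card_cube, div_self (ne_of_gt h2n)]
    norm_num
  set V := (univ.image f).filter (fun v => a < v) with hV
  by_cases hVne : V.Nonempty
  · have hz₀ : a < V.min' hVne := (Finset.mem_filter.mp (V.min'_mem hVne)).2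
    have hlb : ∀ z ∈ {z : ℝ | 1/2 ≤ prb fun x => f x ≤ z}, V.min' hVne ≤ z := by
      intro z hz
      by_contra hzz
      push_neg at hzz
      have hsub : univ.filter (fun x => f x ≤ z) ⊆ univ.filter (fun x => f x ≤ a) := by
        intro x hx
        rw [Finset.mem_filter] at hx ⊢
        refine ⟨hx.1, ?_⟩
        by_contra hfa
        push_neg at hfa
        have hmem : f x ∈ V := by
          rw [hV, Finset.mem_filter]
          exact ⟨Finset.mem_image_of_mem f (Finset.mem_univ x), hfa⟩
        have := Finset.min'_le V _ hmem
        linarith [hx.2]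
      have hcc : ((univ.filter (fun x => f x ≤ z)).card : ℝ)
          ≤ ((univ.filter (fun x => f x ≤ a)).card : ℝ) := by
        exact_mod_cast Finset.card_le_card hsub
      have hle : prb (fun x => f x ≤ z) ≤ prb (fun x => f x ≤ a) := by
        unfold prb
        gcongr
      have hz' : (1:ℝ)/2 ≤ prb (fun x => f x ≤ z) := hz
      linarith
    have hq : V.min' hVne ≤ quant f (1/2) := le_csInf hTne hlb
    linarith
  · have hall : univ.filter (fun x => f x ≤ a) = univ := by
      apply Finset.filter_true_of_mem
      intro x _
      by_contra hfa
      push_neg at hfa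
      refine hVne ⟨f x, ?_⟩
      rw [hV, Finset.mem_filter]
      exact ⟨Finset.mem_image_of_mem f (Finset.mem_univ x), hfa⟩
    have : prb (fun x => f x ≤ a) = 1 := by
      unfold prb
      rw [hall, Finset.card_univ,
        show ((Fintype.card (Fin n → Fin 2) : ℝ)) = 2 ^ n from card_cube, div_self (ne_of_gt h2n)]
    linarith



theorem stmt_8' {n : ℕ} (f : (Fin n → Fin 2) → ℝ) (φ : ℝ → ℝ)
    (hφ0 : ∀ u, 0 ≤ φ u) (hφmono : Monotone φ)
    (B : ℝ)
    (hB : IsGreatest (Set.range fun p : (Fin n → Fin 2) × Fin n =>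
      |f p.1 - f (flipBit p.1 p.2)|) B)
    (hcond : ∀ x, ∑ i, (max (f x - f (flipBit x i)) 0) ^ 2 ≤ φ (f x))
    (a b : ℝ) (hab : a < b) (ha : quant f (1 / 2) ≤ a)
    (hb : 0 < prb fun x => b ≤ f x) :
    b - a ≤
      Real.sqrt ((72 / 5) * φ (b + B) * (prb fun x => a < f x) /
        ((prb fun x => b ≤ f x) *
          Real.log (Real.exp 2 / (2 * prb fun x => a < f x)))) := by
  classical
  have h2n : (0:ℝ) < 2 ^ n := by positivity
  have hB0 : 0 ≤ B := by
    obtain ⟨pr, hpr⟩ := hB.1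
    rw [← hpr]
    exact abs_nonneg _
  set p : ℝ := prb fun x => a < f x with hpdef
  set q : ℝ := prb fun x => b ≤ f x with hqdef
  set k : ℝ := ((univ.filter fun x => a < f x).card : ℝ) with hkdef
  set m : ℝ := ((univ.filter fun x => b ≤ f x).card : ℝ) with hmdef
  have hpk : p = k / 2 ^ n := by rw [hpdef, hkdef, prb_eq]
  have hqm : q = m / 2 ^ n := by rw [hqdef, hmdef, prb_eq]
  have hq0 : 0 < q := hb
  have hm0 : 0 < m := by
    by_contra hm
    push_neg at hm
    have : q ≤ 0 := by rw [hqm]; exact div_nonpos_of_nonpos_of_nonneg hm h2n.le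
    linarith
  have hsub : (univ.filter fun x => b ≤ f x) ⊆ (univ.filter fun x => a < f x) := by
    intro x hx
    rw [Finset.mem_filter] at hx ⊢
    exact ⟨hx.1, lt_of_lt_of_le hab hx.2⟩
  have hmk : m ≤ k := by rw [hkdef, hmdef]; exact_mod_cast Finset.card_le_card hsub
  have hk0 : 0 < k := lt_of_lt_of_le hm0 hmk
  have hp0 : 0 < p := by rw [hpk]; positivity
  -- median : p ≤ 1/2
  have hmed : (1:ℝ)/2 ≤ ((univ.filter fun x => f x ≤ a).card : ℝ) / 2 ^ n :=
    median_half f a ha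
  have hcompl : ((univ.filter fun x => f x ≤ a).card : ℝ) + k = 2 ^ n := by
    have hnat := Finset.card_filter_add_card_filter_not
      (s := (univ : Finset (Fin n → Fin 2))) (p := fun x => f x ≤ a)
    have hfc : (univ.filter fun x : Fin n → Fin 2 => ¬ f x ≤ a)
        = univ.filter fun x => a < f x := by
      apply Finset.filter_congr
      intro x _
      simp [not_le]
    rw [hfc] at hnat
    have hcast : ((univ.filter fun x => f x ≤ a).card : ℝ)
        + ((univ.filter fun x => a < f x).card : ℝ)
        = ((univ : Finset (Fin n → Fin 2)).card : ℝ) := by exact_mod_cast hnat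
    have hcu : (((univ : Finset (Fin n → Fin 2))).card : ℝ) = 2 ^ n := by
      rw [Finset.card_univ]; exact card_cube
    rw [hkdef]
    linarith
  have hphalf : p ≤ 1/2 := by
    have hrw : ((univ.filter fun x => f x ≤ a).card : ℝ) = 2 ^ n - k := by linarith
    rw [hrw] at hmed
    have h2 : (2 ^ n - k) / 2 ^ n = 1 - k / 2 ^ n := by field_simp
    rw [h2] at hmed
    rw [hpk]
    linarith
  -- the clamped function
  set gc : ℝ → ℝ := fun s => min b (max s a) with hgc
  set g : (Fin n → Fin 2) → ℝ := fun x => gc (f x) - a with hgdef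
  have hgc_ge : ∀ s, a ≤ gc s := fun s => le_min hab.le (le_max_right s a)
  have hgc_le : ∀ s, gc s ≤ b := fun s => min_le_left _ _
  have hgc_mono : ∀ s t, s ≤ t → gc s ≤ gc t := fun s t hst =>
    min_le_min (le_refl b) (max_le_max hst (le_refl a))
  have hgc_contr : ∀ s t, t ≤ s → gc s - gc t ≤ s - t := by
    intro s t hst
    simp only [hgc, min_def, max_def]
    split_ifs <;> linarith
  have hgc_b : ∀ s, b ≤ s → gc s = b := by
    intro s hs
    simp only [hgc]
    rw [max_eq_left (le_trans hab.le hs), min_eq_left hs]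
  have hgc_a : ∀ s, s ≤ a → gc s = a := by
    intro s hs
    simp only [hgc]
    rw [max_eq_right hs, min_eq_right hab.le]
  have hg0 : ∀ x, 0 ≤ g x := fun x => by simp only [hgdef]; linarith [hgc_ge (f x)]
  have hgb : ∀ x, b ≤ f x → g x = b - a := fun x hx => by
    simp only [hgdef]; rw [hgc_b _ hx]
  have hgpos : ∀ x, a < f x → 0 < g x := by
    intro x hx
    simp only [hgdef, hgc]
    have h1 : a < max (f x) a := lt_max_iff.mpr (Or.inl hx)
    have h2 : a < min b (max (f x) a) := lt_min hab h1
    linarith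
  have hgz : ∀ x, f x ≤ a → g x = 0 := fun x hx => by
    simp only [hgdef]; rw [hgc_a _ hx]; ring
  set h : (Fin n → Fin 2) → ℝ := fun x => g x ^ 2 with hhdef
  have hh0 : ∀ x, 0 ≤ h x := fun x => by simp only [hhdef]; positivity
  -- upper bound on ent h
  have hDep : DepOn univ h := fun x i hi => absurd (Finset.mem_univ i) hi
  have hmain := ent_le_sum univ h hh0 hDep
  have hstepA : ∀ j : Fin n, expecb (fun x => Qf (h x) (h (flipBit x j))) / 2
      ≤ expecb fun x => (g x - g (flipBit x j)) ^ 2 := by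
    intro j
    rw [expecb_half]
    apply expecb_mono
    intro x
    simp only [hhdef]
    exact Qf_sq_le (hg0 x) (hg0 _)
  have hup1 : ent h ≤ ∑ j : Fin n, expecb fun x => (g x - g (flipBit x j)) ^ 2 :=
    le_trans hmain (Finset.sum_le_sum fun j _ => hstepA j)
  have hsum2 : ∑ j : Fin n, expecb (fun x => (g x - g (flipBit x j)) ^ 2)
      = 2 * expecb (fun x => ∑ j, (max (g x - g (flipBit x j)) 0) ^ 2) := by
    rw [expecb_sum]
    unfold expecb
    rw [← mul_div_assoc]
    congr 1
    have ee1 : ∀ x : Fin n → Fin 2, ∑ j, (g x - g (flipBit x j)) ^ 2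
        = ∑ j, ((max (g x - g (flipBit x j)) 0) ^ 2 + (max (g (flipBit x j) - g x) 0) ^ 2) := by
      intro x
      apply Finset.sum_congr rfl
      intro j _
      rw [sq_split (g x - g (flipBit x j))]
      congr 2
      ring
    calc ∑ x, ∑ j, (g x - g (flipBit x j)) ^ 2
        = ∑ x, ((∑ j, (max (g x - g (flipBit x j)) 0) ^ 2)
            + ∑ j, (max (g (flipBit x j) - g x) 0) ^ 2) := by
          apply Finset.sum_congr rfl
          intro x _
          rw [ee1 x, Finset.sum_add_distrib]
      _ = (∑ x, ∑ j, (max (g x - g (flipBit x j)) 0) ^ 2)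
            + ∑ x, ∑ j, (max (g (flipBit x j) - g x) 0) ^ 2 := Finset.sum_add_distrib
      _ = 2 * ∑ x, ∑ j, (max (g x - g (flipBit x j)) 0) ^ 2 := by
          have ee2 : ∑ x, ∑ j, (max (g (flipBit x j) - g x) 0) ^ 2
              = ∑ x, ∑ j, (max (g x - g (flipBit x j)) 0) ^ 2 := by
            calc ∑ x, ∑ j, (max (g (flipBit x j) - g x) 0) ^ 2
                = ∑ j : Fin n, ∑ x, (max (g (flipBit x j) - g x) 0) ^ 2 := Finset.sum_comm
              _ = ∑ j : Fin n, ∑ x, (max (g x - g (flipBit x j)) 0) ^ 2 := by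
                  apply Finset.sum_congr rfl
                  intro j _
                  calc ∑ x, (max (g (flipBit x j) - g x) 0) ^ 2
                      = ∑ x, (max (g (flipBit x j) - g (flipBit (flipBit x j) j)) 0) ^ 2 := by
                        apply Finset.sum_congr rfl
                        intro x _
                        rw [flip_flip]
                    _ = ∑ x, (max (g x - g (flipBit x j)) 0) ^ 2 :=
                        sum_flip j (fun y => (max (g y - g (flipBit y j)) 0) ^ 2)
              _ = ∑ x, ∑ j, (max (g x - g (flipBit x j)) 0) ^ 2 := Finset.sum_comm
          rw [ee2]
          ring
  have hW : ∀ x, (∑ j, (max (g x - g (flipBit x j)) 0) ^ 2)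
      ≤ (if a < f x then φ (b + B) else 0) := by
    intro x
    by_cases hax : a < f x
    · rw [if_pos hax]
      by_cases hfb : f x ≤ b + B
      · refine le_trans ?_ (le_trans (hcond x) (hφmono hfb))
        apply Finset.sum_le_sum
        intro j _
        have hle : max (g x - g (flipBit x j)) 0 ≤ max (f x - f (flipBit x j)) 0 := by
          apply max_le ?_ (le_max_right _ _)
          rcases le_total (f x) (f (flipBit x j)) with hc | hc
          · have hmono : g x ≤ g (flipBit x j) := by
              simp only [hgdef]
              linarith [hgc_mono _ _ hc]
            linarith [le_max_right (f x - f (flipBit x j)) (0:ℝ)]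
          · have hcontr : g x - g (flipBit x j) ≤ f x - f (flipBit x j) := by
              simp only [hgdef]
              linarith [hgc_contr (f x) (f (flipBit x j)) hc]
            linarith [le_max_left (f x - f (flipBit x j)) (0:ℝ)]
        exact pow_le_pow_left₀ (le_max_right _ _) hle 2
      · push_neg at hfb
        have hzero : ∀ j ∈ (univ : Finset (Fin n)), (max (g x - g (flipBit x j)) 0) ^ 2 = 0 := by
          intro j _
          have habs : |f x - f (flipBit x j)| ≤ B := hB.2 ⟨(x, j), rfl⟩
          have h1 := (abs_le.mp habs).2
          have hfj : b ≤ f (flipBit x j) := by linarith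
          rw [hgb x (by linarith [hB0]), hgb _ hfj]
          simp
        rw [Finset.sum_congr rfl hzero]
        simp [hφ0 (b + B)]
    · rw [if_neg hax]
      push_neg at hax
      have hzero : ∀ j ∈ (univ : Finset (Fin n)), (max (g x - g (flipBit x j)) 0) ^ 2 = 0 := by
        intro j _
        rw [hgz x hax, max_eq_right (by linarith [hg0 (flipBit x j)] : (0:ℝ) - g (flipBit x j) ≤ 0)]
        simp
      rw [Finset.sum_congr rfl hzero]
      simp
  have hWexp : expecb (fun x => ∑ j, (max (g x - g (flipBit x j)) 0) ^ 2)
      ≤ φ (b + B) * p := by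
    have h1 : expecb (fun x => ∑ j, (max (g x - g (flipBit x j)) 0) ^ 2)
        ≤ expecb (fun x : Fin n → Fin 2 => if a < f x then φ (b + B) else 0) := expecb_mono hW
    have h2 : expecb (fun x : Fin n → Fin 2 => if a < f x then φ (b + B) else 0)
        = φ (b + B) * p := by
      unfold expecb
      rw [← Finset.sum_filter, Finset.sum_const, nsmul_eq_mul, hpk, hkdef]
      ring
    linarith
  have hup : ent h ≤ 2 * (φ (b + B) * p) := by
    calc ent h ≤ _ := hup1
      _ = 2 * expecb (fun x => ∑ j, (max (g x - g (flipBit x j)) 0) ^ 2) := hsum2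
      _ ≤ 2 * (φ (b + B) * p) := by linarith [hWexp]
  -- lower bound on ent h
  have hsum_low : m * (b - a) ^ 2 ≤ ∑ x, h x := by
    have h1 : ∀ x ∈ univ.filter (fun x => b ≤ f x), h x = (b - a) ^ 2 := by
      intro x hx
      simp only [hhdef]
      rw [hgb x (Finset.mem_filter.mp hx).2]
    calc m * (b - a) ^ 2 = ∑ _x ∈ univ.filter (fun x => b ≤ f x), (b - a) ^ 2 := by
          rw [Finset.sum_const, nsmul_eq_mul, hmdef]
      _ = ∑ x ∈ univ.filter (fun x => b ≤ f x), h x := (Finset.sum_congr rfl h1).symm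
      _ ≤ ∑ x, h x := Finset.sum_le_sum_of_subset_of_nonneg (Finset.subset_univ _)
          (fun x _ _ => hh0 x)
  have hEh : q * (b - a) ^ 2 ≤ expecb h := by
    rw [hqm]
    unfold expecb
    rw [div_mul_eq_mul_div]
    gcongr
  have hEhpos : 0 < ∑ x, h x :=
    lt_of_lt_of_le (mul_pos hm0 (pow_pos (by linarith : (0:ℝ) < b - a) 2)) hsum_low
  have hA : (univ.filter fun x => 0 < h x) = (univ.filter fun x => a < f x) := by
    apply Finset.filter_congr
    intro x _
    constructor
    · intro hx
      by_contra hax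
      push_neg at hax
      simp only [hhdef] at hx
      rw [hgz x hax] at hx
      norm_num at hx
    · intro hx
      simp only [hhdef]
      exact pow_pos (hgpos x hx) 2
  have hlow := ent_ge h hh0 hEhpos
  rw [hA, ← hkdef] at hlow
  have hloginv : Real.log ((2:ℝ) ^ n / k) = Real.log (1 / p) := by
    rw [hpk, one_div_div]
  rw [hloginv] at hlow
  have hl2 : Real.log 2 ≤ Real.log (1 / p) := by
    apply Real.log_le_log (by norm_num)
    rw [le_div_iff₀ hp0]
    linarith
  have hlog2 : (0.6931471803 : ℝ) < Real.log 2 := Real.log_two_gt_d9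
  have hlp0 : 0 ≤ Real.log (1 / p) := by linarith
  have core : q * (b - a) ^ 2 * Real.log (1 / p) ≤ 2 * (φ (b + B) * p) := by
    have h1 : q * (b - a) ^ 2 * Real.log (1 / p) ≤ expecb h * Real.log (1 / p) :=
      mul_le_mul_of_nonneg_right hEh hlp0
    linarith [hlow, hup]
  -- final numerics
  set L : ℝ := Real.log (Real.exp 2 / (2 * p)) with hLdef
  have hLeq : L = 2 - Real.log 2 - Real.log p := by
    rw [hLdef, Real.log_div (Real.exp_ne_zero 2) (by positivity), Real.log_exp,
      Real.log_mul (by norm_num : (2:ℝ) ≠ 0) (ne_of_gt hp0)]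
    ring
  have hlinv : Real.log (1 / p) = - Real.log p := by rw [one_div, Real.log_inv]
  have hl2' : Real.log 2 ≤ - Real.log p := by rw [← hlinv]; exact hl2
  have hL3 : L ≤ 3 * Real.log (1 / p) := by
    rw [hLeq, hlinv]
    linarith
  have hL0 : 0 < L := by
    rw [hLeq]
    linarith
  have hqD : 0 ≤ q * (b - a) ^ 2 := by positivity
  have h6 : q * (b - a) ^ 2 * L ≤ 6 * (φ (b + B) * p) := by
    have h1 := mul_le_mul_of_nonneg_left hL3 hqD
    calc q * (b - a) ^ 2 * L ≤ q * (b - a) ^ 2 * (3 * Real.log (1 / p)) := h1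
      _ = 3 * (q * (b - a) ^ 2 * Real.log (1 / p)) := by ring
      _ ≤ 3 * (2 * (φ (b + B) * p)) := by linarith [core]
      _ = 6 * (φ (b + B) * p) := by ring
  have hfin : (b - a) ^ 2 ≤ 72 / 5 * φ (b + B) * p / (q * L) := by
    rw [le_div_iff₀ (by positivity)]
    have hφp : 0 ≤ φ (b + B) * p := mul_nonneg (hφ0 _) hp0.le
    calc (b - a) ^ 2 * (q * L) = q * (b - a) ^ 2 * L := by ring
      _ ≤ 6 * (φ (b + B) * p) := h6
      _ ≤ 72 / 5 * φ (b + B) * p := by linarith [hφp]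
  calc b - a = Real.sqrt ((b - a) ^ 2) := (Real.sqrt_sq (by linarith)).symm
    _ ≤ _ := Real.sqrt_le_sqrt hfin


end Stmt8

theorem stmt_8 {n : ℕ} (f : (Fin n → Fin 2) → ℝ) (φ : ℝ → ℝ)
    (hφ0 : ∀ u, 0 ≤ φ u) (hφmono : Monotone φ)
    (B : ℝ)
    (hB : IsGreatest (Set.range fun p : (Fin n → Fin 2) × Fin n =>
      |f p.1 - f (flipBit p.1 p.2)|) B)
    (hcond : ∀ x, ∑ i, (max (f x - f (flipBit x i)) 0) ^ 2 ≤ φ (f x))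
    (a b : ℝ) (hab : a < b) (ha : quant f (1 / 2) ≤ a)
    (hb : 0 < prb fun x => b ≤ f x) :
    b - a ≤
      Real.sqrt ((72 / 5) * φ (b + B) * (prb fun x => a < f x) /
        ((prb fun x => b ≤ f x) *
          Real.log (Real.exp 2 / (2 * prb fun x => a < f x)))) := by
  exact Stmt8.stmt_8' f φ hφ0 hφmono B hB hcond a b hab ha hb
end

section
/- Let f : {0,1}ⁿ → ℝ satisfy condition (3.1) with nonnegative nondecreasing function ϕ and constant B, where B = max over x ∈ {0,1}ⁿ and 1 ≤ i ≤ n of |f(x) − f(x^{(i)})|. Then for all 0 < δ < γ ≤ 1/2, Q_{1−δ} − Q_{1−γ} ≤ sqrt( (72/5)·ϕ(Q_{1−δ} + B)·γ / ( δ · log( e²/(2γ) ) ) ); in particular, setting a_k = Q_{1−2^{−k}}, for every positive integer k one has a_{k+1} − a_k ≤ 4·sqrt( ϕ(a_{k+1} + B) / k ). -/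
open scoped Classical
open Finset

namespace DL9

noncomputable def phiR (x : ℝ) : ℝ := x * Real.log x

noncomputable def psi2 (u w : ℝ) : ℝ := (phiR u + phiR w) / 2 - phiR ((u + w) / 2)

noncomputable def entb {n : ℕ} (h : (Fin n → Fin 2) → ℝ) : ℝ :=
  expecb (fun x => phiR (h x)) - phiR (expecb h)

lemma phiR_zero : phiR 0 = 0 := by simp [phiR]

lemma psi2_comm (u w : ℝ) : psi2 u w = psi2 w u := by
  simp [psi2, add_comm]

lemma two_pow_pos (n : ℕ) : (0:ℝ) < 2 ^ n := by positivity

lemma card_univ_cube (n : ℕ) : ((Finset.univ : Finset (Fin n → Fin 2)).card) = 2 ^ n := by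
  simp [Finset.card_univ, Fintype.card_fun]

lemma expecb_nonneg {n : ℕ} {h : (Fin n → Fin 2) → ℝ} (hh : ∀ x, 0 ≤ h x) :
    0 ≤ expecb h := by
  apply div_nonneg _ (le_of_lt (two_pow_pos n))
  exact Finset.sum_nonneg fun x _ => hh x

lemma expecb_mono {n : ℕ} {h g : (Fin n → Fin 2) → ℝ} (hh : ∀ x, h x ≤ g x) :
    expecb h ≤ expecb g := by
  have : (∑ x, h x) ≤ ∑ x, g x := Finset.sum_le_sum fun x _ => hh x
  exact div_le_div_of_nonneg_right this (two_pow_pos n).le |>.trans_eq rfl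


-- key pointwise inequality: a * log c₁ + b * log c₂ ≤ 2 ψ₂(a,b)
lemma psi2_dual {a b c₁ c₂ : ℝ} (ha : 0 ≤ a) (hb : 0 ≤ b) (hc₁ : 0 < c₁) (hc₂ : 0 < c₂)
    (hsum : c₁ + c₂ = 2) : a * Real.log c₁ + b * Real.log c₂ ≤ 2 * psi2 a b := by
  set m : ℝ := (a + b) / 2 with hm
  rcases eq_or_lt_of_le (by positivity : (0:ℝ) ≤ m) with h0 | hmpos
  · have ha0 : a = 0 := by simp [hm] at h0; linarith
    have hb0 : b = 0 := by simp [hm] at h0; linarith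
    simp [ha0, hb0, psi2, phiR]
  · have key : ∀ c x : ℝ, 0 < c → 0 ≤ x →
        x * Real.log c ≤ (phiR x - x * Real.log m) + (c * m - x) := by
      intro c x hc hx
      rcases eq_or_lt_of_le hx with h0 | hxpos
      · simp [← h0, phiR]; positivity
      · have hlog : Real.log (c * m / x) ≤ c * m / x - 1 :=
          Real.log_le_sub_one_of_pos (by positivity)
        have hexp : Real.log (c * m / x) = Real.log c + Real.log m - Real.log x := by
          rw [Real.log_div (by positivity) (ne_of_gt hxpos), Real.log_mul (ne_of_gt hc) (ne_of_gt hmpos)]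
        have := mul_le_mul_of_nonneg_left hlog (le_of_lt hxpos)
        rw [hexp] at this
        have hxne : x ≠ 0 := ne_of_gt hxpos
        have : x * (Real.log c + Real.log m - Real.log x) ≤ c * m - x := by
          calc x * (Real.log c + Real.log m - Real.log x) ≤ x * (c * m / x - 1) := this
          _ = c * m - x := by field_simp
        unfold phiR; nlinarith [this]
    have k1 := key c₁ a hc₁ ha
    have k2 := key c₂ b hc₂ hb
    have hphi : phiR ((a+b)/2) = ((a+b)/2) * Real.log m := by rw [hm]; rfl
    have : a * Real.log c₁ + b * Real.log c₂ ≤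
        (phiR a + phiR b - (a + b) * Real.log m) + ((c₁ + c₂) * m - (a + b)) := by linarith
    rw [hsum] at this
    have hm2 : 2 * m = a + b := by rw [hm]; ring
    unfold psi2
    rw [hphi]
    linarith [this, hm2]

lemma psi2_nonneg {a b : ℝ} (ha : 0 ≤ a) (hb : 0 ≤ b) : 0 ≤ psi2 a b := by
  have := psi2_dual ha hb (by norm_num : (0:ℝ) < 1) (by norm_num : (0:ℝ) < 1) (by norm_num)
  simp at this; linarith

lemma psi2_sq_le {u w : ℝ} (hu : 0 ≤ u) (hw : 0 ≤ w) : psi2 (u^2) (w^2) ≤ (u - w)^2 := by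
  set m : ℝ := (u^2 + w^2) / 2 with hm
  rcases eq_or_lt_of_le (by positivity : (0:ℝ) ≤ m) with h0 | hmpos
  · have hu0 : u = 0 := by nlinarith [sq_nonneg u, sq_nonneg w]
    have hw0 : w = 0 := by nlinarith [sq_nonneg u, sq_nonneg w]
    simp [hu0, hw0, psi2, phiR]
  · have key : ∀ x : ℝ, 0 ≤ x → phiR x - x * Real.log m ≤ x^2 / m - x := by
      intro x hx
      rcases eq_or_lt_of_le hx with h0 | hxpos
      · simp [← h0, phiR]
      · have hlog : Real.log (x / m) ≤ x / m - 1 := Real.log_le_sub_one_of_pos (by positivity)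
        have hexp : Real.log (x / m) = Real.log x - Real.log m :=
          Real.log_div (ne_of_gt hxpos) (ne_of_gt hmpos)
        rw [hexp] at hlog
        have := mul_le_mul_of_nonneg_left hlog (le_of_lt hxpos)
        unfold phiR
        have hxm : x * (x / m - 1) = x^2/m - x := by field_simp
        nlinarith [this]
    have k1 := key (u^2) (by positivity)
    have k2 := key (w^2) (by positivity)
    have hphi : phiR ((u^2 + w^2)/2) = m * Real.log m := by rw [hm]; rfl
    have hsum : u^2 * Real.log m + w^2 * Real.log m = 2 * m * Real.log m := by
      rw [hm]; ring
    have h1 : 2 * psi2 (u^2) (w^2) ≤ (u^2)^2/m + (w^2)^2/m - 2*m := by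
      unfold psi2; rw [hphi]; nlinarith [k1, k2]
    have h2 : (u^2)^2/m + (w^2)^2/m - 2*m = (u^2 - w^2)^2 / (2*m) := by
      field_simp; ring
    have h3 : (u^2 - w^2)^2 / (2*m) ≤ 2 * (u-w)^2 := by
      rw [div_le_iff₀ (by positivity)]
      have : (u^2-w^2)^2 = (u-w)^2 * (u+w)^2 := by ring
      rw [this]
      have h4 : (u+w)^2 ≤ 2 * (u^2+w^2) := by nlinarith [sq_nonneg (u-w)]
      have h5 : 2 * (u^2 + w^2) = 2 * (2 * m) := by rw [hm]; ring
      nlinarith [sq_nonneg (u-w), sq_nonneg (u+w), mul_le_mul_of_nonneg_left h4 (sq_nonneg (u-w))]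
    linarith [h1, h2 ▸ h1, h3]

lemma expecb_smul {n : ℕ} (c : ℝ) (h : (Fin n → Fin 2) → ℝ) :
    expecb (fun x => c * h x) = c * expecb h := by
  unfold expecb; rw [← Finset.mul_sum]; ring

lemma expecb_add {n : ℕ} (h g : (Fin n → Fin 2) → ℝ) :
    expecb (fun x => h x + g x) = expecb h + expecb g := by
  unfold expecb; rw [Finset.sum_add_distrib]; ring

-- Jensen step for psi2 via duality witness
lemma psi2_zero_left {w : ℝ} (hw : 0 ≤ w) : psi2 0 w = (Real.log 2 / 2) * w := by
  rcases eq_or_lt_of_le hw with h0 | hpos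
  · simp [← h0, psi2, phiR]
  · unfold psi2 phiR
    have h1 : (0 + w) / 2 = w / 2 := by ring
    rw [h1, Real.log_div (ne_of_gt hpos) (by norm_num)]
    simp
    ring

lemma psi2_zero_right {u : ℝ} (hu : 0 ≤ u) : psi2 u 0 = (Real.log 2 / 2) * u := by
  rw [psi2_comm]; exact psi2_zero_left hu

lemma expecb_zero_forall {n : ℕ} {h : (Fin n → Fin 2) → ℝ} (hh : ∀ x, 0 ≤ h x)
    (h0 : expecb h = 0) : ∀ x, h x = 0 := by
  intro x
  have hsum : ∑ y, h y = 0 := by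
    unfold expecb at h0
    have := two_pow_pos n
    field_simp at h0
    simpa using h0
  exact (Finset.sum_eq_zero_iff_of_nonneg (fun y _ => hh y)).mp hsum x (Finset.mem_univ x)

lemma psi2_jensen {n : ℕ} (u w : (Fin n → Fin 2) → ℝ) (hu : ∀ x, 0 ≤ u x) (hw : ∀ x, 0 ≤ w x) :
    psi2 (expecb u) (expecb w) ≤ expecb (fun y => psi2 (u y) (w y)) := by
  set A := expecb u with hA
  set Bv := expecb w with hB
  have hA0 : 0 ≤ A := expecb_nonneg hu
  have hB0 : 0 ≤ Bv := expecb_nonneg hw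
  rcases eq_or_lt_of_le hA0 with hA' | hApos
  · have hu0 : ∀ x, u x = 0 := expecb_zero_forall hu hA'.symm
    have : expecb (fun y => psi2 (u y) (w y)) = (Real.log 2 / 2) * Bv := by
      rw [hB, ← expecb_smul]
      apply congrArg
      funext y
      rw [hu0 y, psi2_zero_left (hw y)]
    rw [this, ← hA', psi2_zero_left hB0]
  · rcases eq_or_lt_of_le hB0 with hB' | hBpos
    · have hw0 : ∀ x, w x = 0 := expecb_zero_forall hw hB'.symm
      have : expecb (fun y => psi2 (u y) (w y)) = (Real.log 2 / 2) * A := by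
        rw [hA, ← expecb_smul]
        apply congrArg
        funext y
        rw [hw0 y, psi2_zero_right (hu y)]
      rw [this, ← hB', psi2_zero_right hA0]
    · set m := (A + Bv) / 2 with hm
      have hmpos : 0 < m := by rw [hm]; positivity
      set c₁ := A / m with hc1
      set c₂ := Bv / m with hc2
      have hc₁ : 0 < c₁ := by rw [hc1]; positivity
      have hc₂ : 0 < c₂ := by rw [hc2]; positivity
      have hcsum : c₁ + c₂ = 2 := by rw [hc1, hc2]; field_simp; rw [hm]; ring
      have hpt : ∀ y, u y * Real.log c₁ + w y * Real.log c₂ ≤ 2 * psi2 (u y) (w y) :=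
        fun y => psi2_dual (hu y) (hw y) hc₁ hc₂ hcsum
      have havg : expecb (fun y => u y * Real.log c₁ + w y * Real.log c₂) =
          A * Real.log c₁ + Bv * Real.log c₂ := by
        rw [show (fun y => u y * Real.log c₁ + w y * Real.log c₂)
            = (fun y => Real.log c₁ * u y + Real.log c₂ * w y) by funext y; ring]
        rw [expecb_add, expecb_smul, expecb_smul, ← hA, ← hB]; ring
      have heq : A * Real.log c₁ + Bv * Real.log c₂ = 2 * psi2 A Bv := by
        unfold psi2 phiR
        rw [hc1, hc2, Real.log_div (ne_of_gt hApos) (ne_of_gt hmpos),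
          Real.log_div (ne_of_gt hBpos) (ne_of_gt hmpos)]
        rw [← hm]
        ring
      have hmono : expecb (fun y => u y * Real.log c₁ + w y * Real.log c₂) ≤
          expecb (fun y => 2 * psi2 (u y) (w y)) := expecb_mono hpt
      rw [havg, heq] at hmono
      rw [expecb_smul] at hmono
      linarith

lemma fin2_add_one_add_one (s : Fin 2) : s + 1 + 1 = s := by fin_cases s <;> decide

lemma flipBit_cons_zero {n : ℕ} (s : Fin 2) (y : Fin n → Fin 2) :
    flipBit (Fin.cons s y) 0 = Fin.cons (s + 1) y := by
  unfold flipBit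
  rw [show (Fin.cons s y : Fin (n+1) → Fin 2) 0 = s from Fin.cons_zero _ _]
  exact Fin.update_cons_zero (α := fun _ : Fin (n+1) => Fin 2) s y (s + 1)

lemma flipBit_cons_succ {n : ℕ} (s : Fin 2) (y : Fin n → Fin 2) (i : Fin n) :
    flipBit (Fin.cons s y) i.succ = Fin.cons s (flipBit y i) := by
  unfold flipBit
  rw [show (Fin.cons s y : Fin (n+1) → Fin 2) i.succ = y i from Fin.cons_succ _ _ _]
  exact (Fin.cons_update (α := fun _ : Fin (n+1) => Fin 2) s y i (y i + 1)).symm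

lemma cube_sum_succ {n : ℕ} (F : (Fin (n+1) → Fin 2) → ℝ) :
    ∑ x, F x = ∑ y : Fin n → Fin 2, (F (Fin.cons 0 y) + F (Fin.cons 1 y)) := by
  rw [← Equiv.sum_comp (Fin.consEquiv (fun _ : Fin (n+1) => Fin 2)) F]
  rw [show (∑ p : Fin 2 × (Fin n → Fin 2), F ((Fin.consEquiv (fun _ : Fin (n+1) => Fin 2)) p))
      = ∑ p : Fin 2 × (Fin n → Fin 2), F (Fin.cons p.1 p.2) from rfl]
  rw [Fintype.sum_prod_type]
  rw [Fin.sum_univ_two]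
  rw [← Finset.sum_add_distrib]

lemma expecb_succ {n : ℕ} (F : (Fin (n+1) → Fin 2) → ℝ) :
    expecb F = (expecb (fun y => F (Fin.cons 0 y)) + expecb (fun y => F (Fin.cons 1 y))) / 2 := by
  unfold expecb
  rw [cube_sum_succ, Finset.sum_add_distrib]
  rw [pow_succ]
  have h2n := two_pow_pos n
  field_simp

lemma ent_tensor : ∀ (n : ℕ) (h : (Fin n → Fin 2) → ℝ), (∀ x, 0 ≤ h x) →
    entb h ≤ expecb (fun x => ∑ i, psi2 (h x) (h (flipBit x i))) := by
  intro n
  induction n with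
  | zero =>
    intro h hh
    have h1 : entb h = 0 := by
      unfold entb expecb
      rw [Fintype.sum_unique, Fintype.sum_unique]
      norm_num
    have h2 : expecb (fun x : Fin 0 → Fin 2 => ∑ i : Fin 0, psi2 (h x) (h (flipBit x i))) = 0 := by
      unfold expecb
      simp
    rw [h1, h2]
  | succ n ih =>
    intro h hh
    set h₀ : (Fin n → Fin 2) → ℝ := fun y => h (Fin.cons 0 y) with hh₀
    set h₁ : (Fin n → Fin 2) → ℝ := fun y => h (Fin.cons 1 y) with hh₁
    have hh0 : ∀ y, 0 ≤ h₀ y := fun y => hh _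
    have hh1 : ∀ y, 0 ≤ h₁ y := fun y => hh _
    -- entropy splitting identity
    have hsplit : entb h = (entb h₀ + entb h₁) / 2 + psi2 (expecb h₀) (expecb h₁) := by
      unfold entb psi2
      simp only [hh₀, hh₁]
      rw [expecb_succ h, expecb_succ (fun x => phiR (h x))]
      ring_nf
    -- RHS splitting
    have hflip0 : ∀ (s : Fin 2) (y : Fin n → Fin 2),
        h (flipBit (Fin.cons s y) 0) = h (Fin.cons (s+1) y) := by
      intro s y; rw [flipBit_cons_zero]
    have hflips : ∀ (s : Fin 2) (y : Fin n → Fin 2) (i : Fin n),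
        h (flipBit (Fin.cons s y) i.succ) = h (Fin.cons s (flipBit y i)) := by
      intro s y i; rw [flipBit_cons_succ]
    have hRHS : expecb (fun x => ∑ i, psi2 (h x) (h (flipBit x i)))
        = expecb (fun y => psi2 (h₀ y) (h₁ y))
          + (expecb (fun y => ∑ i, psi2 (h₀ y) (h₀ (flipBit y i)))
             + expecb (fun y => ∑ i, psi2 (h₁ y) (h₁ (flipBit y i)))) / 2 := by
      rw [expecb_succ (fun x => ∑ i, psi2 (h x) (h (flipBit x i)))]
      have e0 : (fun y => ∑ i : Fin (n+1), psi2 (h (Fin.cons 0 y)) (h (flipBit (Fin.cons 0 y) i)))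
          = fun y => psi2 (h₀ y) (h₁ y) + ∑ i : Fin n, psi2 (h₀ y) (h₀ (flipBit y i)) := by
        funext y
        rw [Fin.sum_univ_succ, hflip0 0 y, show (0+1 : Fin 2) = 1 by decide]
        exact congrArg _ (Finset.sum_congr rfl fun i _ => by rw [hflips 0 y i])
      have e1 : (fun y => ∑ i : Fin (n+1), psi2 (h (Fin.cons 1 y)) (h (flipBit (Fin.cons 1 y) i)))
          = fun y => psi2 (h₁ y) (h₀ y) + ∑ i : Fin n, psi2 (h₁ y) (h₁ (flipBit y i)) := by
        funext y
        rw [Fin.sum_univ_succ, hflip0 1 y, show (1+1 : Fin 2) = 0 by decide]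
        exact congrArg _ (Finset.sum_congr rfl fun i _ => by rw [hflips 1 y i])
      rw [e0, e1, expecb_add, expecb_add]
      have hsym : expecb (fun y => psi2 (h₁ y) (h₀ y)) = expecb (fun y => psi2 (h₀ y) (h₁ y)) := by
        apply congrArg; funext y; rw [psi2_comm]
      rw [hsym]
      ring
    rw [hsplit, hRHS]
    have j := psi2_jensen h₀ h₁ hh0 hh1
    have i0 := ih h₀ hh0
    have i1 := ih h₁ hh1
    linarith

lemma ent_support {n : ℕ} (h : (Fin n → Fin 2) → ℝ) (hh : ∀ x, 0 ≤ h x)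
    (γ : ℝ) (hγ0 : 0 < γ) (hγ1 : γ ≤ 1) (hp : prb (fun x => h x ≠ 0) ≤ γ) :
    expecb h * Real.log (1/γ) ≤ entb h := by
  classical
  set s := Finset.univ.filter (fun x => h x ≠ 0) with hs
  have hsum_h : ∑ x, h x = ∑ x ∈ s, h x := by
    rw [hs]
    exact (Finset.sum_filter_ne_zero _).symm
  have hsum_phi : ∑ x, phiR (h x) = ∑ x ∈ s, phiR (h x) := by
    symm
    apply Finset.sum_subset (Finset.filter_subset _ _)
    intro x _ hx
    by_contra hne
    have : h x ≠ 0 := fun h0 => hne (by rw [h0, phiR_zero])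
    exact hx (Finset.mem_filter.mpr ⟨Finset.mem_univ x, this⟩)
  set E := expecb h with hE
  have hE0 : 0 ≤ E := expecb_nonneg hh
  rcases eq_or_lt_of_le hE0 with hE' | hEpos
  · have h0 : ∀ x, h x = 0 := expecb_zero_forall hh hE'.symm
    have : entb h = 0 := by
      unfold entb
      have : (fun x => phiR (h x)) = fun _ => (0:ℝ) := by
        funext x; rw [h0 x, phiR_zero]
      rw [this, ← hE, ← hE']
      unfold expecb
      simp [phiR_zero]
    rw [this, ← hE']
    simp
  · -- main case
    have hk0 : s.Nonempty := by
      by_contra hne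
      rw [Finset.not_nonempty_iff_eq_empty] at hne
      have : ∑ x, h x = 0 := by rw [hsum_h, hne]; simp
      have : E = 0 := by rw [hE]; unfold expecb; rw [this]; simp
      linarith
    set k : ℝ := (s.card : ℝ) with hk
    have hkpos : 0 < k := by
      rw [hk]
      exact_mod_cast Finset.card_pos.mpr hk0
    have h2n : (0:ℝ) < 2 ^ n := two_pow_pos n
    have hsumE : ∑ x ∈ s, h x = 2 ^ n * E := by
      rw [← hsum_h, hE]
      unfold expecb
      field_simp
    set mbar : ℝ := 2 ^ n * E / k with hmbar
    have hmpos : 0 < mbar := by rw [hmbar]; positivity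
    have hpt : ∀ x ∈ s, h x * Real.log mbar + (h x - mbar) ≤ phiR (h x) := by
      intro x hx
      have hxpos : 0 < h x := by
        rw [hs, Finset.mem_filter] at hx
        exact lt_of_le_of_ne (hh x) (Ne.symm hx.2)
      have hlog : Real.log (mbar / h x) ≤ mbar / h x - 1 :=
        Real.log_le_sub_one_of_pos (by positivity)
      rw [Real.log_div (ne_of_gt hmpos) (ne_of_gt hxpos)] at hlog
      have := mul_le_mul_of_nonneg_left hlog (le_of_lt hxpos)
      have hexp : h x * (mbar / h x - 1) = mbar - h x := by field_simp
      rw [hexp] at this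
      unfold phiR
      nlinarith
    have hsum_ge : ∑ x ∈ s, phiR (h x) ≥ (2 ^ n * E) * Real.log mbar := by
      have := Finset.sum_le_sum hpt
      rw [Finset.sum_add_distrib, ← Finset.sum_mul, hsumE, Finset.sum_sub_distrib, hsumE] at this
      have hcard : ∑ _x ∈ s, mbar = k * mbar := by
        rw [Finset.sum_const, nsmul_eq_mul, hk]
      rw [hcard, hmbar] at this
      have : 2 ^ n * E * Real.log (2 ^ n * E / k) + (2 ^ n * E - k * (2 ^ n * E / k))
          ≤ ∑ x ∈ s, phiR (h x) := this
      have hcancel : k * (2 ^ n * E / k) = 2 ^ n * E := by field_simp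
      rw [hcancel] at this
      rw [hmbar]
      linarith
    have hexp_ge : expecb (fun x => phiR (h x)) ≥ E * Real.log mbar := by
      unfold expecb
      rw [hsum_phi]
      rw [ge_iff_le, le_div_iff₀ h2n]
      calc E * Real.log mbar * 2 ^ n = (2 ^ n * E) * Real.log mbar := by ring
      _ ≤ ∑ x ∈ s, phiR (h x) := hsum_ge
    have hent : entb h ≥ E * Real.log mbar - E * Real.log E := by
      have hphiE : phiR E = E * Real.log E := rfl
      unfold entb
      rw [← hE, hphiE]
      linarith [hexp_ge]
    have hlogm : Real.log mbar - Real.log E = Real.log (2 ^ n / k) := by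
      rw [hmbar, Real.log_div (by positivity) (ne_of_gt hkpos),
        Real.log_mul (by positivity) (ne_of_gt hEpos),
        Real.log_div (by positivity) (ne_of_gt hkpos)]
      ring
    have hprb : k / 2 ^ n ≤ γ := by
      unfold prb at hp
      rw [hk, hs]
      convert hp using 4
      exact @Finset.filter_congr_decidable _ Finset.univ (fun x => h x ≠ 0) _
        (fun a => Classical.propDecidable _)
    have hfrac : 1 / γ ≤ 2 ^ n / k := by
      rw [div_le_div_iff₀ hγ0 hkpos]
      rw [div_le_iff₀ h2n] at hprb
      linarith
    have hlog2 : Real.log (1 / γ) ≤ Real.log (2 ^ n / k) :=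
      Real.log_le_log (by positivity) hfrac
    have := mul_le_mul_of_nonneg_left hlog2 hE0
    calc E * Real.log (1 / γ) ≤ E * Real.log (2 ^ n / k) := this
    _ = E * Real.log mbar - E * Real.log E := by rw [← hlogm]; ring
    _ ≤ entb h := by linarith [hent]

/-! ### prb lemmas -/

lemma prb_nonneg {n : ℕ} (P : (Fin n → Fin 2) → Prop) : 0 ≤ prb P := by
  unfold prb; positivity

lemma prb_mono_pred {n : ℕ} {P Q : (Fin n → Fin 2) → Prop} (h : ∀ x, P x → Q x) :
    prb P ≤ prb Q := by
  unfold prb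
  apply div_le_div_of_nonneg_right _ (two_pow_pos n).le |>.trans_eq rfl
  have hsub : Finset.univ.filter P ⊆ Finset.univ.filter Q := by
    intro x hx
    rw [Finset.mem_filter] at hx ⊢
    exact ⟨hx.1, h x hx.2⟩
  exact_mod_cast Finset.card_le_card hsub

lemma prb_congr {n : ℕ} {P Q : (Fin n → Fin 2) → Prop} (h : ∀ x, P x ↔ Q x) :
    prb P = prb Q :=
  le_antisymm (prb_mono_pred fun x => (h x).mp) (prb_mono_pred fun x => (h x).mpr)

lemma prb_compl {n : ℕ} (P : (Fin n → Fin 2) → Prop) :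
    prb P + prb (fun x => ¬ P x) = 1 := by
  unfold prb
  have := @Finset.card_filter_add_card_filter_not _
    (Finset.univ : Finset (Fin n → Fin 2)) P
    (fun a => Classical.propDecidable _) (fun a => Classical.propDecidable _)
  rw [card_univ_cube] at this
  have h2n := two_pow_pos n
  field_simp
  exact_mod_cast this

lemma prb_true_of_all {n : ℕ} {P : (Fin n → Fin 2) → Prop} (h : ∀ x, P x) : prb P = 1 := by
  unfold prb
  rw [Finset.filter_true_of_mem (fun x _ => h x), card_univ_cube]
  field_simp
  norm_num

/-! ### flip lemmas -/

lemma flipBit_invol {n : ℕ} (x : Fin n → Fin 2) (i : Fin n) :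
    flipBit (flipBit x i) i = x := by
  unfold flipBit
  rw [Function.update_self, Function.update_idem, fin2_add_one_add_one, Function.update_eq_self]

lemma sum_flip {n : ℕ} (i : Fin n) (F : (Fin n → Fin 2) → ℝ) :
    ∑ x, F (flipBit x i) = ∑ x, F x := by
  have hinv : Function.Involutive (fun x : Fin n → Fin 2 => flipBit x i) :=
    fun x => flipBit_invol x i
  calc ∑ x, F (flipBit x i) = ∑ x, F (Function.Involutive.toPerm _ hinv x) := rfl
  _ = ∑ x, F x := Equiv.sum_comp _ F

/-! ### quantile lemmas -/

lemma exists_of_prb_pos {n : ℕ} {P : (Fin n → Fin 2) → Prop} (h : 0 < prb P) : ∃ x, P x := by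
  by_contra hc
  push_neg at hc
  have h0 : prb P = 0 := by
    unfold prb
    rw [Finset.filter_false_of_mem (fun x _ => hc x)]
    simp
  rw [h0] at h
  exact lt_irrefl _ h

lemma quant_spec {n : ℕ} (f : (Fin n → Fin 2) → ℝ) (α : ℝ) (h0 : 0 < α) (h1 : α ≤ 1) :
    α ≤ prb (fun x => f x ≤ quant f α) ∧
      ∀ z, α ≤ prb (fun x => f x ≤ z) → quant f α ≤ z := by
  classical
  have hne : Nonempty (Fin n → Fin 2) := ⟨fun _ => 0⟩
  have himg : (Finset.univ.image f).Nonempty :=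
    ⟨f (Classical.arbitrary _), Finset.mem_image_of_mem f (Finset.mem_univ _)⟩
  have hMS : α ≤ prb (fun x => f x ≤ (Finset.univ.image f).max' himg) := by
    have : prb (fun x => f x ≤ (Finset.univ.image f).max' himg) = 1 := prb_true_of_all fun x =>
      Finset.le_max' _ _ (Finset.mem_image_of_mem f (Finset.mem_univ x))
    rw [this]; exact h1
  have hTne : ((Finset.univ.image f).filter (fun v => α ≤ prb (fun x => f x ≤ v))).Nonempty :=
    ⟨(Finset.univ.image f).max' himg,
      Finset.mem_filter.mpr ⟨(Finset.univ.image f).max'_mem himg, hMS⟩⟩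
  have hq₀S : α ≤ prb (fun x => f x ≤ ((Finset.univ.image f).filter
      (fun v => α ≤ prb (fun x => f x ≤ v))).min' hTne) :=
    (Finset.mem_filter.mp (Finset.min'_mem _ hTne)).2
  have hlb : ∀ z, α ≤ prb (fun x => f x ≤ z) →
      ((Finset.univ.image f).filter (fun v => α ≤ prb (fun x => f x ≤ v))).min' hTne ≤ z := by
    intro z hz
    obtain ⟨x₀, hx₀⟩ := exists_of_prb_pos (lt_of_lt_of_le h0 hz)
    have hT'ne : ((Finset.univ.image f).filter (fun v => v ≤ z)).Nonempty :=
      ⟨f x₀, Finset.mem_filter.mpr ⟨Finset.mem_image_of_mem f (Finset.mem_univ x₀), hx₀⟩⟩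
    set w := ((Finset.univ.image f).filter (fun v => v ≤ z)).max' hT'ne with hw
    have hwz : w ≤ z := (Finset.mem_filter.mp (Finset.max'_mem _ hT'ne)).2
    have hwmem : w ∈ Finset.univ.image f := (Finset.mem_filter.mp (Finset.max'_mem _ hT'ne)).1
    have himp : ∀ x, f x ≤ z → f x ≤ w := by
      intro x hx
      have hmem : f x ∈ (Finset.univ.image f).filter (fun v => v ≤ z) :=
        Finset.mem_filter.mpr ⟨Finset.mem_image_of_mem f (Finset.mem_univ x), hx⟩
      exact Finset.le_max' _ _ hmem
    have hprbw : α ≤ prb (fun x => f x ≤ w) := le_trans hz (prb_mono_pred himp)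
    have hwT : w ∈ (Finset.univ.image f).filter (fun v => α ≤ prb (fun x => f x ≤ v)) :=
      Finset.mem_filter.mpr ⟨hwmem, hprbw⟩
    exact le_trans (Finset.min'_le _ _ hwT) hwz
  have hquant : quant f α = ((Finset.univ.image f).filter
      (fun v => α ≤ prb (fun x => f x ≤ v))).min' hTne := by
    unfold quant
    apply le_antisymm
    · exact csInf_le ⟨_, fun z hz => hlb z hz⟩ hq₀S
    · exact le_csInf ⟨_, hMS⟩ fun z hz => hlb z hz
  constructor
  · rw [hquant]; exact hq₀S
  · intro z hz; rw [hquant]; exact hlb z hz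

lemma quant_mono {n : ℕ} (f : (Fin n → Fin 2) → ℝ) {α β : ℝ} (h0 : 0 < α) (hαβ : α ≤ β)
    (h1 : β ≤ 1) : quant f α ≤ quant f β := by
  have hβ := quant_spec f β (lt_of_lt_of_le h0 hαβ) h1
  have hα := quant_spec f α h0 (le_trans hαβ h1)
  exact hα.2 _ (le_trans hαβ hβ.1)

lemma quant_tail {n : ℕ} (f : (Fin n → Fin 2) → ℝ) {δ : ℝ} (h0 : 0 < δ) (h1 : δ < 1) :
    δ ≤ prb (fun x => quant f (1 - δ) ≤ f x) := by
  classical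
  have hα0 : 0 < 1 - δ := by linarith
  have hα1 : 1 - δ ≤ 1 := by linarith
  have hspec := quant_spec f (1 - δ) hα0 hα1
  set b := quant f (1 - δ) with hb
  have hlt : prb (fun x => f x < b) ≤ 1 - δ := by
    by_cases hex : ∃ x, f x < b
    · obtain ⟨x₀, hx₀⟩ := hex
      have hT'ne : ((Finset.univ.image f).filter (fun v => v < b)).Nonempty :=
        ⟨f x₀, Finset.mem_filter.mpr ⟨Finset.mem_image_of_mem f (Finset.mem_univ x₀), hx₀⟩⟩
      set w := ((Finset.univ.image f).filter (fun v => v < b)).max' hT'ne with hw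
      have hwb : w < b := (Finset.mem_filter.mp (Finset.max'_mem _ hT'ne)).2
      have hiff : ∀ x, f x < b ↔ f x ≤ w := by
        intro x
        constructor
        · intro hx
          have hmem : f x ∈ (Finset.univ.image f).filter (fun v => v < b) :=
            Finset.mem_filter.mpr ⟨Finset.mem_image_of_mem f (Finset.mem_univ x), hx⟩
          exact Finset.le_max' _ _ hmem
        · intro hx; exact lt_of_le_of_lt hx hwb
      rw [prb_congr hiff]
      by_contra hc
      push_neg at hc
      exact absurd (hspec.2 w hc.le) (not_le.mpr hwb)
    · push_neg at hex
      have : prb (fun x => f x < b) = 0 := by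
        unfold prb
        rw [Finset.filter_false_of_mem (fun x _ => not_lt.mpr (hex x))]
        simp
      rw [this]; linarith
  have hcompl := prb_compl (fun x => f x < b)
  have : prb (fun x => ¬ f x < b) = prb (fun x => b ≤ f x) :=
    prb_congr fun x => not_lt
  linarith

lemma sq_decomp (d : ℝ) : d^2 = (max d 0)^2 + (max (-d) 0)^2 := by
  rcases le_total d 0 with h | h
  · rw [max_eq_right h, max_eq_left (neg_nonneg.mpr h)]; ring
  · rw [max_eq_left h, max_eq_right (neg_nonpos.mpr h)]; ring

lemma expecb_indicator {n : ℕ} (P : (Fin n → Fin 2) → Prop) [DecidablePred P] :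
    expecb (fun x => if P x then (1:ℝ) else 0) = prb P := by
  unfold expecb prb
  congr 1
  rw [Finset.sum_boole]
  congr 1
  congr 1
  exact @Finset.filter_congr_decidable _ Finset.univ P _ (fun a => Classical.propDecidable _)

/-- The core inequality:  δ t² log(1/γ) ≤ 2 γ φ(b+B). -/
lemma core {n : ℕ} (f : (Fin n → Fin 2) → ℝ) (φ : ℝ → ℝ)
    (hφ0 : ∀ u, 0 ≤ φ u) (hφmono : Monotone φ) (B : ℝ)
    (hB : ∀ x i, |f x - f (flipBit x i)| ≤ B)
    (hcond : ∀ x, ∑ i, (max (f x - f (flipBit x i)) 0) ^ 2 ≤ φ (f x))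
    {γ δ : ℝ} (hδ : 0 < δ) (hδγ : δ < γ) (hγ : γ ≤ 1/2) :
    δ * (quant f (1-δ) - quant f (1-γ))^2 * Real.log (1/γ) ≤
      2 * (γ * φ (quant f (1-δ) + B)) := by
  classical
  have hγ0 : 0 < γ := hδ.trans hδγ
  have hδ1 : δ < 1 := by linarith
  set a := quant f (1-γ) with hadef
  set b := quant f (1-δ) with hbdef
  have hab : a ≤ b := quant_mono f (by linarith) (by linarith) (by linarith)
  set t := b - a with htdef
  have ht0 : 0 ≤ t := by rw [htdef]; linarith
  set v := φ (b + B) with hvdef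
  have hv0 : 0 ≤ v := hφ0 _
  set G : (Fin n → Fin 2) → ℝ := fun x => min (max (f x) a) b - a with hGdef
  have hG0 : ∀ x, 0 ≤ G x := by
    intro x
    have : a ≤ min (max (f x) a) b := le_min (le_max_right _ _) hab
    rw [hGdef]; simp only; linarith
  have hGt : ∀ x, G x ≤ t := by
    intro x
    have : min (max (f x) a) b ≤ b := min_le_right _ _
    rw [hGdef, htdef]; simp only; linarith
  have hGtop : ∀ x, b ≤ f x → G x = t := by
    intro x hx
    rw [hGdef, htdef]; simp only
    rw [max_eq_left (le_trans hab hx), min_eq_right hx]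
  have hGbot : ∀ x, f x ≤ a → G x = 0 := by
    intro x hx
    rw [hGdef]; simp only
    rw [max_eq_right hx, min_eq_left hab, sub_self]
  have hcontract : ∀ x y, max (G x - G y) 0 ≤ max (f x - f y) 0 := by
    intro x y
    rcases le_total (f x) (f y) with h | h
    · have hmax : max (f x) a ≤ max (f y) a := max_le_max h le_rfl
      have hmin : min (max (f x) a) b ≤ min (max (f y) a) b := min_le_min hmax le_rfl
      have : G x - G y ≤ 0 := by rw [hGdef]; simp only; linarith
      exact max_le (le_trans this (le_max_right _ _)) (le_max_right _ _)
    · set d := f x - f y with hd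
      have hd0 : 0 ≤ d := by rw [hd]; linarith
      have h1 : max (f x) a ≤ max (f y) a + d := by
        apply max_le
        · have : f x = f y + d := by rw [hd]; ring
          rw [this]; exact add_le_add_left (le_max_left _ _) d
        · calc a ≤ a + d := by linarith
          _ ≤ max (f y) a + d := add_le_add_left (le_max_right _ _) d
      have h2 : min (max (f x) a) b ≤ min (max (f y) a + d) (b + d) :=
        min_le_min h1 (by linarith)
      have h3 : min (max (f y) a + d) (b + d) = min (max (f y) a) b + d :=
        min_add_add_right _ _ _
      have hsub : G x - G y ≤ d := by rw [hGdef]; simp only; linarith [h2, h3.le]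
      apply max_le
      · exact le_trans hsub (le_max_left _ _)
      · exact le_max_right _ _
  have hVbound : ∀ x, (∑ i, (max (G x - G (flipBit x i)) 0)^2) ≤
      v * (if a < f x then 1 else 0) := by
    intro x
    by_cases hax : a < f x
    · rw [if_pos hax, mul_one]
      by_cases hfb : f x ≤ b + B
      · calc ∑ i, (max (G x - G (flipBit x i)) 0)^2
            ≤ ∑ i, (max (f x - f (flipBit x i)) 0)^2 := by
              apply Finset.sum_le_sum
              intro i _
              exact pow_le_pow_left₀ (le_max_right _ _) (hcontract x (flipBit x i)) 2
        _ ≤ φ (f x) := hcond x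
        _ ≤ v := by rw [hvdef]; exact hφmono hfb
      · push_neg at hfb
        have hzero : ∀ i : Fin n, (max (G x - G (flipBit x i)) 0)^2 = 0 := by
          intro i
          have hB0 : 0 ≤ B := le_trans (abs_nonneg _) (hB x i)
          have habs := abs_le.mp (hB x i)
          have hflip : b ≤ f (flipBit x i) := by linarith [habs.2]
          have hxb : b ≤ f x := by linarith
          rw [hGtop x hxb, hGtop _ hflip, sub_self]
          simp
        rw [Finset.sum_congr rfl (fun i _ => hzero i), Finset.sum_const, smul_zero]
        exact hv0
    · rw [if_neg hax, mul_zero]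
      have hzero : ∀ i : Fin n, (max (G x - G (flipBit x i)) 0)^2 = 0 := by
        intro i
        have hx0 : G x = 0 := hGbot x (not_lt.mp hax)
        have : max (G x - G (flipBit x i)) 0 = 0 := by
          apply le_antisymm
          · apply max_le _ le_rfl
            have := hG0 (flipBit x i)
            linarith
          · exact le_max_right _ _
        rw [this]; ring
      rw [Finset.sum_congr rfl (fun i _ => hzero i), Finset.sum_const, smul_zero]
  have hprb_a : prb (fun x => a < f x) ≤ γ := by
    have h1 : 1 - γ ≤ prb (fun x => f x ≤ a) :=
      (quant_spec f (1-γ) (by linarith) (by linarith)).1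
    have h2 := prb_compl (fun x => f x ≤ a)
    have h3 : prb (fun x => ¬ f x ≤ a) = prb (fun x => a < f x) :=
      prb_congr fun x => not_le
    linarith
  have hEV : expecb (fun x => ∑ i, (max (G x - G (flipBit x i)) 0)^2) ≤ γ * v := by
    calc expecb (fun x => ∑ i, (max (G x - G (flipBit x i)) 0)^2)
        ≤ expecb (fun x => v * (if a < f x then 1 else 0)) := expecb_mono hVbound
    _ = v * prb (fun x => a < f x) := by rw [expecb_smul, expecb_indicator]
    _ ≤ v * γ := mul_le_mul_of_nonneg_left hprb_a hv0
    _ = γ * v := mul_comm _ _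
  have hcheb : δ * t^2 ≤ expecb (fun x => (G x)^2) := by
    have h1 : δ ≤ prb (fun x => b ≤ f x) := quant_tail f hδ hδ1
    have h2 : expecb (fun x => if b ≤ f x then t^2 else 0) ≤ expecb (fun x => (G x)^2) := by
      apply expecb_mono
      intro x
      by_cases hx : b ≤ f x
      · rw [if_pos hx, hGtop x hx]
      · rw [if_neg hx]; positivity
    have h3 : expecb (fun x => if b ≤ f x then t^2 else 0)
        = t^2 * prb (fun x => b ≤ f x) := by
      have : (fun x => if b ≤ f x then t^2 else 0)
          = fun x => t^2 * (if b ≤ f x then (1:ℝ) else 0) := by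
        funext x; rcases le_or_gt b (f x) with h|h
        · rw [if_pos h, if_pos h, mul_one]
        · rw [if_neg (not_le.mpr h), if_neg (not_le.mpr h), mul_zero]
      rw [this, expecb_smul, expecb_indicator]
    have h4 : δ * t^2 ≤ t^2 * prb (fun x => b ≤ f x) := by
      rw [mul_comm]
      exact mul_le_mul_of_nonneg_left h1 (sq_nonneg t)
    linarith
  have hsupp : prb (fun x => (G x)^2 ≠ 0) ≤ γ := by
    refine le_trans (prb_mono_pred ?_) hprb_a
    intro x hx
    by_contra h
    exact hx (by rw [hGbot x (not_lt.mp h)]; ring)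
  have hlogγ : 0 ≤ Real.log (1/γ) := by
    apply Real.log_nonneg
    rw [le_div_iff₀ hγ0]
    linarith
  have hent1 : expecb (fun x => (G x)^2) * Real.log (1/γ) ≤ entb (fun x => (G x)^2) :=
    ent_support _ (fun x => sq_nonneg _) γ hγ0 (by linarith) hsupp
  have hent2 : entb (fun x => (G x)^2) ≤
      expecb (fun x => ∑ i, psi2 ((G x)^2) ((G (flipBit x i))^2)) :=
    ent_tensor n _ (fun x => sq_nonneg _)
  have hent3 : expecb (fun x => ∑ i, psi2 ((G x)^2) ((G (flipBit x i))^2)) ≤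
      expecb (fun x => ∑ i, (G x - G (flipBit x i))^2) := by
    apply expecb_mono
    intro x
    apply Finset.sum_le_sum
    intro i _
    exact psi2_sq_le (hG0 x) (hG0 (flipBit x i))
  have hpair : expecb (fun x => ∑ i, (G x - G (flipBit x i))^2)
      = 2 * expecb (fun x => ∑ i, (max (G x - G (flipBit x i)) 0)^2) := by
    have hfun : (fun x => ∑ i, (G x - G (flipBit x i))^2)
        = fun x => (∑ i, (max (G x - G (flipBit x i)) 0)^2)
            + ∑ i, (max (G (flipBit x i) - G x) 0)^2 := by
      funext x
      rw [← Finset.sum_add_distrib]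
      apply Finset.sum_congr rfl
      intro i _
      have := sq_decomp (G x - G (flipBit x i))
      rw [neg_sub] at this
      exact this
    rw [hfun, expecb_add]
    have hswap : expecb (fun x => ∑ i, (max (G (flipBit x i) - G x) 0)^2)
        = expecb (fun x => ∑ i, (max (G x - G (flipBit x i)) 0)^2) := by
      unfold expecb
      congr 1
      rw [Finset.sum_comm]
      conv_rhs => rw [Finset.sum_comm]
      apply Finset.sum_congr rfl
      intro i _
      have := sum_flip i (fun z => (max (G z - G (flipBit z i)) 0)^2)
      simp only [flipBit_invol] at this
      exact this
    rw [hswap]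
    ring
  calc δ * t^2 * Real.log (1/γ)
      ≤ expecb (fun x => (G x)^2) * Real.log (1/γ) :=
        mul_le_mul_of_nonneg_right hcheb hlogγ
  _ ≤ entb (fun x => (G x)^2) := hent1
  _ ≤ expecb (fun x => ∑ i, psi2 ((G x)^2) ((G (flipBit x i))^2)) := hent2
  _ ≤ expecb (fun x => ∑ i, (G x - G (flipBit x i))^2) := hent3
  _ = 2 * expecb (fun x => ∑ i, (max (G x - G (flipBit x i)) 0)^2) := hpair
  _ ≤ 2 * (γ * v) := by linarith [hEV]

end DL9

theorem stmt_9 {n : ℕ} (f : (Fin n → Fin 2) → ℝ) (φ : ℝ → ℝ)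
    (hφ0 : ∀ u, 0 ≤ φ u) (hφmono : Monotone φ)
    (B : ℝ)
    (hB : IsGreatest (Set.range fun p : (Fin n → Fin 2) × Fin n =>
      |f p.1 - f (flipBit p.1 p.2)|) B)
    (hcond : ∀ x, ∑ i, (max (f x - f (flipBit x i)) 0) ^ 2 ≤ φ (f x))
    (a : ℕ → ℝ) (ha : ∀ k, a k = quant f (1 - (1 / 2) ^ k)) :
    (∀ δ γ : ℝ, 0 < δ → δ < γ → γ ≤ 1 / 2 →
        quant f (1 - δ) - quant f (1 - γ) ≤
          Real.sqrt ((72 / 5) * φ (quant f (1 - δ) + B) * γ /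
            (δ * Real.log (Real.exp 2 / (2 * γ))))) ∧
      ∀ k : ℕ, 1 ≤ k →
        a (k + 1) - a k ≤ 4 * Real.sqrt (φ (a (k + 1) + B) / k) := by
  have hBub : ∀ x i, |f x - f (flipBit x i)| ≤ B := fun x i => hB.2 ⟨(x, i), rfl⟩
  constructor
  · intro δ γ hδ hδγ hγ
    have hγ0 : 0 < γ := hδ.trans hδγ
    have hcore := DL9.core f φ hφ0 hφmono B hBub hcond hδ hδγ hγ
    set t := quant f (1 - δ) - quant f (1 - γ) with ht
    set v := φ (quant f (1 - δ) + B) with hv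
    clear_value t v
    have hv0 : 0 ≤ v := by rw [hv]; exact hφ0 _
    set L := Real.log (Real.exp 2 / (2 * γ)) with hL
    have hlog2γ : Real.log (2 * γ) = Real.log 2 + Real.log γ :=
      Real.log_mul (by norm_num) (ne_of_gt hγ0)
    have hLeq : L = 2 - Real.log (2 * γ) := by
      rw [hL, Real.log_div (Real.exp_ne_zero 2) (by positivity), Real.log_exp]
    have hy : Real.log (1 / γ) = - Real.log γ := by rw [one_div, Real.log_inv]
    have hlog2 : (0.6931471803 : ℝ) < Real.log 2 := Real.log_two_gt_d9
    have hyge : Real.log 2 ≤ Real.log (1 / γ) := by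
      apply Real.log_le_log (by norm_num)
      rw [le_div_iff₀ hγ0]; linarith
    have hLpos : 0 < L := by
      rw [hLeq]
      have : Real.log (2 * γ) ≤ 0 := Real.log_nonpos (by linarith) (by linarith)
      linarith
    have hLy : L ≤ 7.2 * Real.log (1 / γ) := by
      rw [hLeq, hlog2γ, hy]
      have h1 : Real.log 2 ≤ - Real.log γ := by rw [← hy]; exact hyge
      nlinarith [hlog2, h1]
    set D := 72 / 5 * v * γ / (δ * L) with hD
    have hD0 : 0 ≤ D := by rw [hD]; positivity
    rcases le_or_gt t 0 with ht0 | htpos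
    · exact le_trans ht0 (Real.sqrt_nonneg D)
    · set c := δ * t ^ 2 with hc
      have hc0 : 0 ≤ c := by rw [hc]; positivity
      have h2 : c * L ≤ c * (7.2 * Real.log (1 / γ)) := mul_le_mul_of_nonneg_left hLy hc0
      have h3 : 7.2 * (c * Real.log (1 / γ)) ≤ 7.2 * (2 * (γ * v)) := by
        apply mul_le_mul_of_nonneg_left _ (by norm_num)
        calc c * Real.log (1 / γ) = δ * t ^ 2 * Real.log (1 / γ) := by rw [hc]
        _ ≤ 2 * (γ * v) := hcore
      have hstep : δ * L * t ^ 2 ≤ 72 / 5 * v * γ := by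
        calc δ * L * t ^ 2 = c * L := by rw [hc]; ring
        _ ≤ c * (7.2 * Real.log (1 / γ)) := h2
        _ = 7.2 * (c * Real.log (1 / γ)) := by ring
        _ ≤ 7.2 * (2 * (γ * v)) := h3
        _ = 72 / 5 * v * γ := by ring
      have ht2 : t ^ 2 ≤ D := by
        rw [hD, le_div_iff₀ (by positivity : (0:ℝ) < δ * L)]
        calc t ^ 2 * (δ * L) = δ * L * t ^ 2 := by ring
        _ ≤ 72 / 5 * v * γ := hstep
      calc t = Real.sqrt (t ^ 2) := (Real.sqrt_sq htpos.le).symm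
      _ ≤ Real.sqrt D := Real.sqrt_le_sqrt ht2
  · intro k hk
    have hγ0 : (0:ℝ) < (1 / 2 : ℝ) ^ k := by positivity
    have hδ : (0:ℝ) < (1 / 2 : ℝ) ^ (k + 1) := by positivity
    have hδγ : ((1 / 2 : ℝ)) ^ (k + 1) < (1 / 2) ^ k := by
      rw [pow_succ]; nlinarith [hγ0]
    have hγle : ((1 / 2 : ℝ)) ^ k ≤ 1 / 2 := by
      calc ((1 / 2 : ℝ)) ^ k ≤ (1 / 2 : ℝ) ^ 1 :=
        pow_le_pow_of_le_one (by norm_num) (by norm_num) hk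
      _ = 1 / 2 := pow_one _
    have hcore := DL9.core f φ hφ0 hφmono B hBub hcond hδ hδγ hγle
    rw [ha k, ha (k + 1)]
    set t := quant f (1 - (1 / 2) ^ (k + 1)) - quant f (1 - (1 / 2) ^ k) with ht
    set v := φ (quant f (1 - (1 / 2) ^ (k + 1)) + B) with hv
    clear_value t v
    have hv0 : 0 ≤ v := by rw [hv]; exact hφ0 _
    have hlogγ : Real.log (1 / ((1 / 2 : ℝ)) ^ k) = k * Real.log 2 := by
      rw [one_div, ← inv_pow, show ((1 / 2 : ℝ))⁻¹ = 2 by norm_num, Real.log_pow]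
    have hk1 : (1:ℝ) ≤ k := by exact_mod_cast hk
    have hkpos : (0:ℝ) < k := by linarith
    have hlog2 : (0.6931471803 : ℝ) < Real.log 2 := Real.log_two_gt_d9
    have hhalf : ((1 / 2 : ℝ)) ^ (k + 1) = (1 / 2) ^ k * (1 / 2) := pow_succ _ _
    have h1 : t ^ 2 * ((k : ℝ) * Real.log 2) ≤ 4 * v := by
      rw [hlogγ, hhalf] at hcore
      have hfact : (1 / 2 : ℝ) ^ k * ((1/2) * (t ^ 2 * ((k : ℝ) * Real.log 2)))
          ≤ (1 / 2 : ℝ) ^ k * (2 * v) := by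
        calc (1 / 2 : ℝ) ^ k * ((1/2) * (t ^ 2 * ((k : ℝ) * Real.log 2)))
            = (1 / 2 : ℝ) ^ k * (1 / 2) * t ^ 2 * ((k : ℝ) * Real.log 2) := by ring
        _ ≤ 2 * ((1 / 2 : ℝ) ^ k * v) := hcore
        _ = (1 / 2 : ℝ) ^ k * (2 * v) := by ring
      have := le_of_mul_le_mul_left (by
        calc (1 / 2 : ℝ) ^ k * ((1/2) * (t ^ 2 * ((k : ℝ) * Real.log 2)))
            ≤ (1 / 2 : ℝ) ^ k * (2 * v) := hfact) hγ0
      linarith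
    have ht2 : t ^ 2 * (k : ℝ) ≤ 16 * v := by
      have htk : 0 ≤ t ^ 2 * (k : ℝ) := by positivity
      nlinarith [h1, hlog2, htk]
    rcases le_or_gt t 0 with ht0 | htpos
    · have h4 : 0 ≤ 4 * Real.sqrt (v / (k : ℝ)) := by positivity
      linarith
    · have ht2' : t ^ 2 ≤ 16 * (v / (k : ℝ)) := by
        have he : 16 * (v / (k : ℝ)) = 16 * v / (k : ℝ) := by ring
        rw [he, le_div_iff₀ hkpos]
        linarith [ht2]
      have hsq := Real.sqrt_le_sqrt ht2'
      rw [Real.sqrt_sq htpos.le] at hsq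
      have h16 : Real.sqrt (16 * (v / (k : ℝ))) = 4 * Real.sqrt (v / (k : ℝ)) := by
        rw [Real.sqrt_mul (by norm_num : (0:ℝ) ≤ 16), show (16:ℝ) = 4 ^ 2 by norm_num,
          Real.sqrt_sq (by norm_num : (0:ℝ) ≤ 4)]
      rw [h16] at hsq
      exact hsq
end

section
/- Let c > 0 and α ∈ [0,2], and let f : {0,1}ⁿ → ℝ satisfy condition (3.1) with the function ϕ(u) = c·max(u,0)^α and constant B. Then there exist constants C > 0 and t₀ > 0, depending only on c, α, B and the median of f(X), such that for all t ≥ t₀: if 0 ≤ α < 2 then P{f(X) ≥ t} ≤ C·exp(−t^{2−α}/C), and if α = 2 then P{f(X) ≥ t} ≤ C·exp(−(log t)²/C). -/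
open scoped Classical
open Finset

namespace StmtAux

open Real

variable {n : ℕ}

lemma card_univ_omega : (Finset.univ : Finset (Fin n → Fin 2)).card = 2 ^ n := by
  simp [Finset.card_univ]

lemma twopow_pos : (0:ℝ) < 2 ^ n := by positivity

lemma expecb_const (a : ℝ) : expecb (fun _ : Fin n → Fin 2 => a) = a := by
  rw [expecb, Finset.sum_const, card_univ_omega, nsmul_eq_mul]
  field_simp
  push_cast
  ring

lemma expecb_mono {u w : (Fin n → Fin 2) → ℝ} (h : ∀ x, u x ≤ w x) :
    expecb u ≤ expecb w := by
  unfold expecb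
  have h2 : (0:ℝ) ≤ 2 ^ n := le_of_lt twopow_pos
  have hs : ∑ x, u x ≤ ∑ x, w x := Finset.sum_le_sum fun x _ => h x
  exact by gcongr

lemma expecb_nonneg {u : (Fin n → Fin 2) → ℝ} (h : ∀ x, 0 ≤ u x) : 0 ≤ expecb u := by
  have := expecb_mono (n := n) (u := fun _ => (0:ℝ)) (w := u) h
  rwa [expecb_const] at this

lemma expecb_pos {u : (Fin n → Fin 2) → ℝ} (h : ∀ x, 0 < u x) : 0 < expecb u := by
  apply div_pos ?_ twopow_pos
  exact Finset.sum_pos (fun x _ => h x) ⟨fun _ => 0, Finset.mem_univ _⟩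

lemma expecb_add (u w : (Fin n → Fin 2) → ℝ) :
    expecb (fun x => u x + w x) = expecb u + expecb w := by
  rw [expecb, expecb, expecb, Finset.sum_add_distrib, add_div]

lemma expecb_sub (u w : (Fin n → Fin 2) → ℝ) :
    expecb (fun x => u x - w x) = expecb u - expecb w := by
  rw [expecb, expecb, expecb, Finset.sum_sub_distrib, sub_div]

lemma expecb_smul (a : ℝ) (u : (Fin n → Fin 2) → ℝ) :
    expecb (fun x => a * u x) = a * expecb u := by
  rw [expecb, expecb, ← Finset.mul_sum, mul_div_assoc]

lemma expecb_div (a : ℝ) (u : (Fin n → Fin 2) → ℝ) :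
    expecb (fun x => u x / a) = expecb u / a := by
  rw [expecb, expecb, ← Finset.sum_div, div_div, div_div, mul_comm]

lemma expecb_sum {ι : Type*} (s : Finset ι) (F : ι → (Fin n → Fin 2) → ℝ) :
    expecb (fun x => ∑ i ∈ s, F i x) = ∑ i ∈ s, expecb (F i) := by
  rw [expecb, Finset.sum_comm, Finset.sum_div]
  rfl

lemma flipBit_apply_self (x : Fin n → Fin 2) (i : Fin n) : flipBit x i i = x i + 1 := by
  simp [flipBit]

lemma flipBit_apply_ne (x : Fin n → Fin 2) (i j : Fin n) (h : j ≠ i) : flipBit x i j = x j := by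
  simp [flipBit, Function.update_of_ne h]

lemma flipBit_flipBit (x : Fin n → Fin 2) (i : Fin n) : flipBit (flipBit x i) i = x := by
  funext j
  by_cases h : j = i
  · subst h
    rw [flipBit_apply_self, flipBit_apply_self]
    fin_omega
  · rw [flipBit_apply_ne _ _ _ h, flipBit_apply_ne _ _ _ h]

lemma flipBit_involutive (i : Fin n) : Function.Involutive (flipBit · i) :=
  fun x => flipBit_flipBit x i

lemma sum_flipBit (F : (Fin n → Fin 2) → ℝ) (i : Fin n) :
    ∑ x, F (flipBit x i) = ∑ x, F x :=
  Fintype.sum_bijective _ (flipBit_involutive i).bijective (fun x => F (flipBit x i)) F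
    (fun _ => rfl)

lemma expecb_flipBit (F : (Fin n → Fin 2) → ℝ) (i : Fin n) :
    expecb (fun x => F (flipBit x i)) = expecb F := by
  rw [expecb, expecb, sum_flipBit]


/-! ### Conditioning operator -/

def merge (k : ℕ) (x y : Fin n → Fin 2) : Fin n → Fin 2 :=
  fun i => if (i : ℕ) < k then x i else y i

noncomputable def Ak (k : ℕ) (h : (Fin n → Fin 2) → ℝ) : (Fin n → Fin 2) → ℝ :=
  fun x => expecb (fun y => h (merge k x y))

lemma merge_top (x y : Fin n → Fin 2) : merge n x y = x := by
  funext i; simp [merge, i.isLt]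

lemma merge_zero (x y : Fin n → Fin 2) : merge 0 x y = y := by
  funext i; simp [merge]

lemma Ak_top (h : (Fin n → Fin 2) → ℝ) : Ak n h = h := by
  funext x
  simp only [Ak, merge_top]
  exact expecb_const _

lemma Ak_zero (h : (Fin n → Fin 2) → ℝ) (x : Fin n → Fin 2) : Ak 0 h x = expecb h := by
  simp only [Ak, merge_zero]

lemma Ak_pos {h : (Fin n → Fin 2) → ℝ} (hp : ∀ x, 0 < h x) (k : ℕ) (x : Fin n → Fin 2) :
    0 < Ak k h x :=
  expecb_pos fun _ => hp _

lemma merge_merge (k : ℕ) (x y : Fin n → Fin 2) :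
    merge k (merge k x y) (merge k y x) = x := by
  funext i
  by_cases h : (i : ℕ) < k <;> simp [merge, h]

lemma expecb_Ak (k : ℕ) (h : (Fin n → Fin 2) → ℝ) : expecb (Ak k h) = expecb h := by
  have σbij : Function.Bijective
      (fun p : (Fin n → Fin 2) × (Fin n → Fin 2) => (merge k p.1 p.2, merge k p.2 p.1)) := by
    apply Function.Involutive.bijective
    intro p
    simp [merge_merge]
  have key : ∑ p : (Fin n → Fin 2) × (Fin n → Fin 2), h p.1
      = ∑ p : (Fin n → Fin 2) × (Fin n → Fin 2), h (merge k p.1 p.2) :=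
    Fintype.sum_bijective _ σbij _ _ (fun p => by simp [merge_merge])
  have e1 : ∑ p : (Fin n → Fin 2) × (Fin n → Fin 2), h (merge k p.1 p.2)
      = ∑ x, ∑ y, h (merge k x y) := Fintype.sum_prod_type _
  have e2 : ∑ p : (Fin n → Fin 2) × (Fin n → Fin 2), h p.1
      = ∑ x, ∑ y, h x := Fintype.sum_prod_type _
  have e3 : (∑ x, ∑ y : Fin n → Fin 2, h x) = 2 ^ n * ∑ x, h x := by
    rw [Finset.sum_comm, Finset.sum_const, card_univ_omega, nsmul_eq_mul]
    push_cast
    ring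
  simp only [expecb, Ak]
  rw [← Finset.sum_div, div_div]
  rw [← e1, ← key, e2, e3]
  field_simp

lemma merge_update (k : ℕ) (i : Fin n) (hik : (i : ℕ) = k) (x y : Fin n → Fin 2) (a : Fin 2) :
    merge k x (Function.update y i a) = Function.update (merge (k+1) x y) i a := by
  funext j
  by_cases h : j = i
  · subst h
    simp [merge, hik]
  · have hj : (j : ℕ) ≠ k := by
      rw [← hik]; exact fun hc => h (Fin.ext hc)
    have : ((j:ℕ) < k) ↔ ((j:ℕ) < k + 1) := by omega
    simp [merge, Function.update_of_ne h, this]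

lemma merge_flip (k : ℕ) (i : Fin n) (hik : (i : ℕ) = k) (x y : Fin n → Fin 2) :
    merge (k+1) (flipBit x i) y = flipBit (merge (k+1) x y) i := by
  funext j
  by_cases h : j = i
  · subst h
    have hlt : (j : ℕ) < k + 1 := by omega
    simp [merge, flipBit, hlt]
  · rw [flipBit_apply_ne _ _ _ h]
    by_cases hlt : (j : ℕ) < k + 1 <;>
      simp [merge, hlt, flipBit_apply_ne _ _ _ h]

lemma pair_swap (k : ℕ) (i : Fin n) (hik : (i : ℕ) = k) (h : (Fin n → Fin 2) → ℝ)
    (x y : Fin n → Fin 2) :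
    h (merge k x y) + h (merge k x (flipBit y i))
      = h (merge (k+1) x y) + h (merge (k+1) (flipBit x i) y) := by
  have e1 : merge k x y = Function.update (merge (k+1) x y) i (y i) := by
    have := merge_update k i hik x y (y i)
    rwa [Function.update_eq_self] at this
  have e2 : merge k x (flipBit y i) = Function.update (merge (k+1) x y) i (y i + 1) := by
    have h3 : merge k x (flipBit y i) = merge k x (Function.update y i (y i + 1)) := rfl
    rw [h3, merge_update k i hik]
  have e3 : merge (k+1) x y = Function.update (merge (k+1) x y) i (x i) := by
    have hv : merge (k+1) x y i = x i := by simp [merge, hik]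
    rw [← hv, Function.update_eq_self]
  have e4 : merge (k+1) (flipBit x i) y = Function.update (merge (k+1) x y) i (x i + 1) := by
    rw [merge_flip k i hik]
    funext j
    by_cases h : j = i
    · subst h
      rw [flipBit_apply_self]
      simp [merge, hik]
    · rw [flipBit_apply_ne _ _ _ h, Function.update_of_ne h]
  rw [e1, e2, e4]
  set z := merge (k+1) x y with hz
  have key : ∀ a b : Fin 2, h (Function.update z i b) + h (Function.update z i (b+1))
      = h (Function.update z i a) + h (Function.update z i (a+1)) := by
    have fin2 : ∀ w : Fin 2, w = 0 ∨ w = 1 := by decide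
    intro a b
    rcases fin2 a with ha | ha <;> rcases fin2 b with hb | hb <;> subst ha <;> subst hb <;>
      simp [show ((1:Fin 2)+1) = 0 from rfl, show ((0:Fin 2)+1) = 1 from rfl, add_comm]
  calc h (Function.update z i (y i)) + h (Function.update z i (y i + 1))
      = h (Function.update z i (x i)) + h (Function.update z i (x i + 1)) := key (x i) (y i)
    _ = h z + h (Function.update z i (x i + 1)) := by rw [← e3]

lemma Ak_succ (k : ℕ) (i : Fin n) (hik : (i : ℕ) = k) (h : (Fin n → Fin 2) → ℝ)
    (x : Fin n → Fin 2) :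
    Ak k h x = (Ak (k+1) h x + Ak (k+1) h (flipBit x i)) / 2 := by
  have double : 2 * Ak k h x = Ak (k+1) h x + Ak (k+1) h (flipBit x i) := by
    have e0 : Ak k h x = expecb (fun y => h (merge k x (flipBit y i))) := by
      rw [Ak, ← expecb_flipBit (fun y => h (merge k x y)) i]
    have h2 : 2 * Ak k h x = Ak k h x + Ak k h x := by ring
    rw [h2]
    nth_rewrite 2 [e0]
    rw [Ak, ← expecb_add]
    have hfe : (fun y => h (merge k x y) + h (merge k x (flipBit y i)))
        = fun y => h (merge (k+1) x y) + h (merge (k+1) (flipBit x i) y) := by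
      funext y; exact pair_swap k i hik h x y
    rw [hfe, expecb_add]
    rfl
  linarith


/-! ### Two point entropy inequality and log-sum inequality -/

lemma log_avg_ge {a b : ℝ} (ha : 0 < a) (hb : 0 < b) :
    (log a + log b) / 2 ≤ log ((a + b) / 2) := by
  have hab : 0 ≤ a * b := by positivity
  have h1 : Real.sqrt (a * b) ≤ (a + b) / 2 := by
    rw [show (a+b)/2 = Real.sqrt (((a+b)/2)^2) from (Real.sqrt_sq (by positivity)).symm]
    apply Real.sqrt_le_sqrt
    nlinarith [sq_nonneg (a - b)]
  have h2 : log (Real.sqrt (a * b)) ≤ log ((a + b) / 2) :=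
    Real.log_le_log (Real.sqrt_pos.mpr (by positivity)) h1
  rwa [Real.log_sqrt hab, Real.log_mul (ne_of_gt ha) (ne_of_gt hb)] at h2

lemma twopoint {a b : ℝ} (ha : 0 < a) (hb : 0 < b) :
    (a * log a + b * log b) / 2 - ((a + b) / 2) * log ((a + b) / 2)
      ≤ (1/4) * ((log a - log b) * (a - b)) := by
  have h := log_avg_ge ha hb
  have habpos : (0:ℝ) < (a + b) / 2 := by positivity
  nlinarith [mul_le_mul_of_nonneg_left h (le_of_lt habpos)]

lemma logsum {ι : Type*} [Fintype ι] [Nonempty ι] (u v : ι → ℝ)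
    (hu : ∀ i, 0 < u i) (hv : ∀ i, 0 < v i) :
    (∑ i, u i) * (log (∑ i, u i) - log (∑ i, v i)) ≤ ∑ i, u i * (log (u i) - log (v i)) := by
  set S := ∑ i, u i with hS
  set T := ∑ i, v i with hT
  have hSpos : 0 < S := Finset.sum_pos (fun i _ => hu i) Finset.univ_nonempty
  have hTpos : 0 < T := Finset.sum_pos (fun i _ => hv i) Finset.univ_nonempty
  -- Jensen for log
  have jensen : ∑ i, (u i / S) • log (v i / u i) ≤ log (∑ i, (u i / S) • (v i / u i)) := by
    apply (strictConcaveOn_log_Ioi.concaveOn).le_map_sum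
    · intro i _; exact div_nonneg (hu i).le hSpos.le
    · rw [← Finset.sum_div, ← hS]; field_simp
    · intro i _; exact Set.mem_Ioi.mpr (div_pos (hv i) (hu i))
  simp only [smul_eq_mul] at jensen
  have hpt : ∑ i, (u i / S) * (v i / u i) = T / S := by
    have hter : ∀ i, u i / S * (v i / u i) = v i / S := by
      intro i
      field_simp [(hu i).ne', hSpos.ne']
    rw [hT, Finset.sum_congr rfl (fun i _ => hter i), ← Finset.sum_div]
  rw [hpt] at jensen
  have hlogTS : log (T / S) = log T - log S := Real.log_div (ne_of_gt hTpos) (ne_of_gt hSpos)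
  have hlogvu : ∀ i, log (v i / u i) = log (v i) - log (u i) := fun i =>
    Real.log_div (ne_of_gt (hv i)) (ne_of_gt (hu i))
  -- multiply jensen by S
  have := mul_le_mul_of_nonneg_left jensen (le_of_lt hSpos)
  rw [Finset.mul_sum, hlogTS] at this
  have hterm : ∀ i, S * (u i / S * log (v i / u i)) = u i * (log (v i) - log (u i)) := by
    intro i
    rw [hlogvu i]
    field_simp
  rw [Finset.sum_congr rfl (fun i _ => hterm i)] at this
  have : ∑ i, u i * (log (v i) - log (u i)) ≤ S * (log T - log S) := this
  have flip : ∑ i, u i * (log (u i) - log (v i)) = - ∑ i, u i * (log (v i) - log (u i)) := by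
    rw [← Finset.sum_neg_distrib]
    apply Finset.sum_congr rfl
    intro i _; ring
  rw [flip]
  linarith

lemma logsum_pair {ι : Type*} [Fintype ι] [Nonempty ι] (u v : ι → ℝ)
    (hu : ∀ i, 0 < u i) (hv : ∀ i, 0 < v i) :
    (log (∑ i, u i) - log (∑ i, v i)) * ((∑ i, u i) - (∑ i, v i))
      ≤ ∑ i, (log (u i) - log (v i)) * (u i - v i) := by
  have h1 := logsum u v hu hv
  have h2 := logsum v u hv hu
  have expand : ∀ i, (log (u i) - log (v i)) * (u i - v i)
      = u i * (log (u i) - log (v i)) + v i * (log (v i) - log (u i)) := by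
    intro i; ring
  rw [Finset.sum_congr rfl (fun i _ => expand i), Finset.sum_add_distrib]
  nlinarith [h1, h2]

lemma logsum_expecb (u v : (Fin n → Fin 2) → ℝ)
    (hu : ∀ y, 0 < u y) (hv : ∀ y, 0 < v y) :
    (log (expecb u) - log (expecb v)) * (expecb u - expecb v)
      ≤ expecb (fun y => (log (u y) - log (v y)) * (u y - v y)) := by
  have hN : (0:ℝ) < 2 ^ n := twopow_pos
  have hSu : 0 < ∑ y, u y := Finset.sum_pos (fun y _ => hu y) Finset.univ_nonempty
  have hSv : 0 < ∑ y, v y := Finset.sum_pos (fun y _ => hv y) Finset.univ_nonempty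
  have e1 : log (expecb u) - log (expecb v) = log (∑ y, u y) - log (∑ y, v y) := by
    rw [expecb, expecb, Real.log_div (ne_of_gt hSu) (ne_of_gt hN),
      Real.log_div (ne_of_gt hSv) (ne_of_gt hN)]
    ring
  have e2 : expecb u - expecb v = ((∑ y, u y) - (∑ y, v y)) / 2 ^ n := by
    rw [expecb, expecb, sub_div]
  rw [e1, e2, expecb, ← mul_div_assoc]
  gcongr
  exact logsum_pair u v hu hv


/-! ### The log-Sobolev inequality on the cube -/

lemma lsi_step (h : (Fin n → Fin 2) → ℝ) (hp : ∀ x, 0 < h x) (i : Fin n) :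
    expecb (fun x => Ak ((i:ℕ)+1) h x * log (Ak ((i:ℕ)+1) h x))
      - expecb (fun x => Ak (i:ℕ) h x * log (Ak (i:ℕ) h x))
      ≤ (1/4) * expecb (fun z => (log (h z) - log (h (flipBit z i)))
          * (h z - h (flipBit z i))) := by
  set p := Ak ((i:ℕ)+1) h with hpdef
  have hppos : ∀ x, 0 < p x := fun x => Ak_pos hp _ x
  have hm : ∀ x, Ak (i:ℕ) h x = (p x + p (flipBit x i)) / 2 :=
    fun x => Ak_succ (i:ℕ) i rfl h x
  set F : (Fin n → Fin 2) → ℝ := fun x => p x * log (p x) with hF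
  set D : (Fin n → Fin 2) → ℝ :=
    fun x => (F x + F (flipBit x i)) / 2 - Ak (i:ℕ) h x * log (Ak (i:ℕ) h x) with hD
  have hED : expecb F - expecb (fun x => Ak (i:ℕ) h x * log (Ak (i:ℕ) h x)) = expecb D := by
    rw [hD]
    rw [expecb_sub (fun x => (F x + F (flipBit x i)) / 2)
      (fun x => Ak (i:ℕ) h x * log (Ak (i:ℕ) h x))]
    rw [expecb_div, expecb_add, expecb_flipBit F i]
    ring
  have hptwise : ∀ x, D x ≤ (1/4) * ((log (p x) - log (p (flipBit x i)))
      * (p x - p (flipBit x i))) := by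
    intro x
    have := twopoint (hppos x) (hppos (flipBit x i))
    rw [hD]
    simp only [hm x, hF]
    linarith [this]
  have hjensen : ∀ x, (log (p x) - log (p (flipBit x i))) * (p x - p (flipBit x i))
      ≤ Ak ((i:ℕ)+1) (fun z => (log (h z) - log (h (flipBit z i)))
          * (h z - h (flipBit z i))) x := by
    intro x
    have hpx : p x = expecb (fun y => h (merge ((i:ℕ)+1) x y)) := rfl
    have hpf : p (flipBit x i) = expecb (fun y => h (flipBit (merge ((i:ℕ)+1) x y) i)) := by
      rw [hpdef, Ak]
      congr 1
      funext y
      rw [merge_flip (i:ℕ) i rfl]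
    rw [hpx, hpf]
    exact logsum_expecb (fun y => h (merge ((i:ℕ)+1) x y))
      (fun y => h (flipBit (merge ((i:ℕ)+1) x y) i)) (fun y => hp _) (fun y => hp _)
  calc expecb F - expecb (fun x => Ak (i:ℕ) h x * log (Ak (i:ℕ) h x))
      = expecb D := hED
    _ ≤ expecb (fun x => (1/4) * Ak ((i:ℕ)+1) (fun z => (log (h z) - log (h (flipBit z i)))
          * (h z - h (flipBit z i))) x) := by
        apply expecb_mono
        intro x
        refine (hptwise x).trans ?_
        have := hjensen x
        linarith
    _ = (1/4) * expecb (fun z => (log (h z) - log (h (flipBit z i)))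
          * (h z - h (flipBit z i))) := by
        rw [expecb_smul, expecb_Ak]

lemma lsi (h : (Fin n → Fin 2) → ℝ) (hp : ∀ x, 0 < h x) :
    expecb (fun x => h x * log (h x)) - expecb h * log (expecb h)
      ≤ (1/4) * expecb (fun x => ∑ i, (log (h x) - log (h (flipBit x i)))
          * (h x - h (flipBit x i))) := by
  set Φ : ℕ → ℝ := fun k => expecb (fun x => Ak k h x * log (Ak k h x)) with hΦ
  set bfun : ℕ → ℝ := fun k =>
    if hk : k < n then
      (1/4) * expecb (fun z => (log (h z) - log (h (flipBit z (⟨k, hk⟩ : Fin n))))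
        * (h z - h (flipBit z (⟨k, hk⟩ : Fin n)))) else 0 with hbfun
  have tele : Φ n - Φ 0 = ∑ k ∈ Finset.range n, (Φ (k+1) - Φ k) :=
    (Finset.sum_range_sub Φ n).symm
  have hΦn : Φ n = expecb (fun x => h x * log (h x)) := by
    rw [hΦ]; simp only [Ak_top]
  have hΦ0 : Φ 0 = expecb h * log (expecb h) := by
    rw [hΦ]; simp only [Ak_zero]; rw [expecb_const]
  have hstep : ∀ k ∈ Finset.range n, Φ (k+1) - Φ k ≤ bfun k := by
    intro k hk
    have hkn : k < n := Finset.mem_range.mp hk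
    rw [hbfun]
    simp only []
    rw [dif_pos hkn]
    have := lsi_step h hp (⟨k, hkn⟩ : Fin n)
    exact this
  have hsum : ∑ k ∈ Finset.range n, bfun k
      = ∑ i : Fin n, (1/4) * expecb (fun z => (log (h z) - log (h (flipBit z i)))
          * (h z - h (flipBit z i))) := by
    rw [← Fin.sum_univ_eq_sum_range bfun n]
    apply Finset.sum_congr rfl
    intro i _
    rw [hbfun]
    simp only [Fin.is_lt, dif_pos, Fin.eta]
  have hfin : ∑ i : Fin n, (1/4) * expecb (fun z => (log (h z) - log (h (flipBit z i)))
      * (h z - h (flipBit z i)))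
      = (1/4) * expecb (fun x => ∑ i, (log (h x) - log (h (flipBit x i)))
          * (h x - h (flipBit x i))) := by
    rw [expecb_sum, Finset.mul_sum]
  calc expecb (fun x => h x * log (h x)) - expecb h * log (expecb h)
      = Φ n - Φ 0 := by rw [hΦn, hΦ0]
    _ = ∑ k ∈ Finset.range n, (Φ (k+1) - Φ k) := tele
    _ ≤ ∑ k ∈ Finset.range n, bfun k := Finset.sum_le_sum hstep
    _ = _ := by rw [hsum, hfin]


/-! ### Entropy bound for exponential functions -/

lemma exp_pair_bound {l a b : ℝ} (hl : 0 ≤ l) :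
    (l * a - l * b) * (exp (l * a) - exp (l * b))
      ≤ l^2 * (max (a - b) 0)^2 * exp (l * a) + l^2 * (max (b - a) 0)^2 * exp (l * b) := by
  rcases le_total b a with hba | hab
  · have h1 : max (a - b) 0 = a - b := max_eq_left (by linarith)
    have h2 : max (b - a) 0 = 0 := max_eq_right (by linarith)
    rw [h1, h2]
    have key : exp (l * a) - exp (l * b) ≤ l * (a - b) * exp (l * a) := by
      have hb : l * b - l * a + 1 ≤ exp (l * b - l * a) := Real.add_one_le_exp _
      have hmul := mul_le_mul_of_nonneg_left hb (le_of_lt (Real.exp_pos (l * a)))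
      rw [← Real.exp_add] at hmul
      have : l * a + (l * b - l * a) = l * b := by ring
      rw [this] at hmul
      nlinarith [Real.exp_pos (l * a)]
    have hnn : 0 ≤ l * (a - b) := mul_nonneg hl (by linarith)
    nlinarith [mul_le_mul_of_nonneg_left key hnn]
  · have h1 : max (a - b) 0 = 0 := max_eq_right (by linarith)
    have h2 : max (b - a) 0 = b - a := max_eq_left (by linarith)
    rw [h1, h2]
    have key : exp (l * b) - exp (l * a) ≤ l * (b - a) * exp (l * b) := by
      have hb : l * a - l * b + 1 ≤ exp (l * a - l * b) := Real.add_one_le_exp _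
      have hmul := mul_le_mul_of_nonneg_left hb (le_of_lt (Real.exp_pos (l * b)))
      rw [← Real.exp_add] at hmul
      have : l * b + (l * a - l * b) = l * a := by ring
      rw [this] at hmul
      nlinarith [Real.exp_pos (l * b)]
    have hnn : 0 ≤ l * (b - a) := mul_nonneg hl (by linarith)
    nlinarith [mul_le_mul_of_nonneg_left key hnn]

lemma ent_ineq (g : (Fin n → Fin 2) → ℝ) (v l : ℝ) (hv : 0 ≤ v)
    (grad : ∀ x, ∑ i, max (g x - g (flipBit x i)) 0 ^ 2 ≤ v) (hl : 0 ≤ l) :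
    l * expecb (fun x => g x * exp (l * g x))
      - expecb (fun x => exp (l * g x)) * log (expecb (fun x => exp (l * g x)))
      ≤ l^2 * v / 2 * expecb (fun x => exp (l * g x)) := by
  have hlsi := lsi (fun x => exp (l * g x)) (fun x => Real.exp_pos _)
  simp only [Real.log_exp] at hlsi
  have hL : expecb (fun x => exp (l * g x) * (l * g x))
      = l * expecb (fun x => g x * exp (l * g x)) := by
    rw [← expecb_smul]
    congr 1
    funext x
    ring
  rw [hL] at hlsi
  refine hlsi.trans ?_
  -- bound the Dirichlet form
  have step1 : expecb (fun x => ∑ i, (l * g x - l * g (flipBit x i))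
        * (exp (l * g x) - exp (l * g (flipBit x i))))
      ≤ expecb (fun x => ∑ i, (l^2 * (max (g x - g (flipBit x i)) 0)^2 * exp (l * g x)
        + l^2 * (max (g (flipBit x i) - g x) 0)^2 * exp (l * g (flipBit x i)))) := by
    apply expecb_mono
    intro x
    apply Finset.sum_le_sum
    intro i _
    exact exp_pair_bound hl
  have step2 : expecb (fun x => ∑ i, (l^2 * (max (g x - g (flipBit x i)) 0)^2 * exp (l * g x)
        + l^2 * (max (g (flipBit x i) - g x) 0)^2 * exp (l * g (flipBit x i))))
      = 2 * expecb (fun x => ∑ i, l^2 * (max (g x - g (flipBit x i)) 0)^2 * exp (l * g x)) := by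
    have hsplit : ∀ x, ∑ i, (l^2 * (max (g x - g (flipBit x i)) 0)^2 * exp (l * g x)
        + l^2 * (max (g (flipBit x i) - g x) 0)^2 * exp (l * g (flipBit x i)))
        = (∑ i, l^2 * (max (g x - g (flipBit x i)) 0)^2 * exp (l * g x))
          + ∑ i, l^2 * (max (g (flipBit x i) - g x) 0)^2 * exp (l * g (flipBit x i)) := by
      intro x
      rw [Finset.sum_add_distrib]
    rw [show (fun x => ∑ i, (l^2 * (max (g x - g (flipBit x i)) 0)^2 * exp (l * g x)
        + l^2 * (max (g (flipBit x i) - g x) 0)^2 * exp (l * g (flipBit x i)))) = fun x =>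
        (∑ i, l^2 * (max (g x - g (flipBit x i)) 0)^2 * exp (l * g x))
          + ∑ i, l^2 * (max (g (flipBit x i) - g x) 0)^2 * exp (l * g (flipBit x i))
      from funext hsplit]
    rw [expecb_add]
    have hswap : expecb (fun x => ∑ i, l^2 * (max (g (flipBit x i) - g x) 0)^2
        * exp (l * g (flipBit x i)))
        = expecb (fun x => ∑ i, l^2 * (max (g x - g (flipBit x i)) 0)^2 * exp (l * g x)) := by
      rw [expecb_sum, expecb_sum]
      apply Finset.sum_congr rfl
      intro i _
      have := expecb_flipBit
        (fun x => l^2 * (max (g x - g (flipBit x i)) 0)^2 * exp (l * g x)) i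
      rw [← this]
      congr 1
      funext x
      rw [flipBit_flipBit]
    rw [hswap]
    ring
  have step3 : expecb (fun x => ∑ i, l^2 * (max (g x - g (flipBit x i)) 0)^2 * exp (l * g x))
      ≤ l^2 * v * expecb (fun x => exp (l * g x)) := by
    have hpt : ∀ x, ∑ i, l^2 * (max (g x - g (flipBit x i)) 0)^2 * exp (l * g x)
        ≤ l^2 * v * exp (l * g x) := by
      intro x
      have : ∑ i, l^2 * (max (g x - g (flipBit x i)) 0)^2 * exp (l * g x)
          = l^2 * exp (l * g x) * ∑ i, (max (g x - g (flipBit x i)) 0)^2 := by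
        rw [Finset.mul_sum]
        apply Finset.sum_congr rfl
        intro i _
        ring
      rw [this]
      have hsum := grad x
      have hfac : (0:ℝ) ≤ l^2 * exp (l * g x) := by positivity
      nlinarith [mul_le_mul_of_nonneg_left hsum hfac]
    calc expecb (fun x => ∑ i, l^2 * (max (g x - g (flipBit x i)) 0)^2 * exp (l * g x))
        ≤ expecb (fun x => l^2 * v * exp (l * g x)) := expecb_mono hpt
      _ = l^2 * v * expecb (fun x => exp (l * g x)) := expecb_smul _ _
  calc (1/4) * expecb (fun x => ∑ i, (l * g x - l * g (flipBit x i))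
        * (exp (l * g x) - exp (l * g (flipBit x i))))
      ≤ (1/4) * (2 * expecb (fun x => ∑ i, l^2 * (max (g x - g (flipBit x i)) 0)^2
          * exp (l * g x))) := by
        have := step1.trans_eq step2
        linarith
    _ ≤ (1/4) * (2 * (l^2 * v * expecb (fun x => exp (l * g x)))) := by
        have := step3
        linarith
    _ = l^2 * v / 2 * expecb (fun x => exp (l * g x)) := by ring


/-! ### Herbst argument: sub-Gaussian MGF bound -/

lemma mgf (g : (Fin n → Fin 2) → ℝ) (v : ℝ) (hv : 0 < v)
    (grad : ∀ x, ∑ i, max (g x - g (flipBit x i)) 0 ^ 2 ≤ v) :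
    ∀ l : ℝ, 0 ≤ l → expecb (fun x => exp (l * g x)) ≤ exp (l * expecb g + l^2 * v / 2) := by
  set G : ℝ → ℝ := fun l => expecb (fun x => exp (l * g x)) with hGdef
  set E' : ℝ → ℝ := fun l => expecb (fun x => g x * exp (l * g x)) with hE'def
  have hGpos : ∀ l, 0 < G l := fun l => expecb_pos fun x => Real.exp_pos _
  have hGderiv : ∀ l, HasDerivAt G (E' l) l := by
    intro l
    rw [hGdef, hE'def]
    simp only [expecb]
    apply HasDerivAt.div_const
    apply HasDerivAt.fun_sum
    intro x _
    have h1 : HasDerivAt (fun l : ℝ => l * g x) (g x) l := by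
      simpa using (hasDerivAt_id l).mul_const (g x)
    have h2 := (Real.hasDerivAt_exp (l * g x)).comp l h1
    rw [mul_comm (g x)]; exact h2
  set K : ℝ → ℝ := fun l => log (G l) with hKdef
  have hKderiv : ∀ l, HasDerivAt K (E' l / G l) l :=
    fun l => (hGderiv l).log (ne_of_gt (hGpos l))
  have hG0 : G 0 = 1 := by
    rw [hGdef]
    simp only [zero_mul, Real.exp_zero]
    exact expecb_const 1
  have hK0 : K 0 = 0 := by
    show log (G 0) = 0
    rw [hG0, Real.log_one]
  have hE'0 : E' 0 = expecb g := by
    rw [hE'def]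
    simp only [zero_mul, Real.exp_zero, mul_one]
  set r : ℝ → ℝ := fun l => K l / l - v / 2 * l with hrdef
  have hrderiv : ∀ l : ℝ, 0 < l →
      HasDerivAt r ((E' l / G l * l - K l) / l^2 - v/2) l := by
    intro l hl
    have h1 : HasDerivAt (fun l => K l / l) ((E' l / G l * l - K l * 1) / l^2) l :=
      (hKderiv l).div (hasDerivAt_id l) (ne_of_gt hl)
    have h2 : HasDerivAt (fun l : ℝ => v / 2 * l) (v / 2) l := by
      simpa using (hasDerivAt_id l).const_mul (v / 2)
    have := h1.sub h2
    simp only [mul_one] at this; exact this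
  have hrnonpos : ∀ l ∈ interior (Set.Ioi (0:ℝ)), deriv r l ≤ 0 := by
    intro l hl
    rw [interior_Ioi] at hl
    have hlpos : 0 < l := hl
    rw [(hrderiv l hlpos).deriv]
    have hent := ent_ineq g v l hv.le grad hlpos.le
    have hGG := hGpos l
    have e : E' l / G l * l - K l = (l * E' l - G l * K l) / G l := by
      field_simp
    rw [e]
    rw [sub_nonpos, div_le_iff₀ (by positivity : (0:ℝ) < l^2), div_le_iff₀ hGG]
    have hKl : K l = log (G l) := rfl
    nlinarith [hent]
  have hanti : AntitoneOn r (Set.Ioi 0) := by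
    apply antitoneOn_of_deriv_nonpos (convex_Ioi 0)
    · intro l hl
      exact ((hrderiv l hl).continuousAt).continuousWithinAt
    · intro l hl
      rw [interior_Ioi] at hl
      exact ((hrderiv l hl).differentiableAt).differentiableWithinAt
    · exact hrnonpos
  have htends : Filter.Tendsto r (nhdsWithin 0 (Set.Ioi 0)) (nhds (expecb g)) := by
    have hslope : Filter.Tendsto (slope K 0) (nhdsWithin 0 {(0:ℝ)}ᶜ)
        (nhds (E' 0 / G 0)) := hasDerivAt_iff_tendsto_slope.mp (hKderiv 0)
    have hmono : nhdsWithin (0:ℝ) (Set.Ioi 0) ≤ nhdsWithin 0 {(0:ℝ)}ᶜ :=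
      nhdsWithin_mono 0 (fun x hx => ne_of_gt hx)
    have hslope' : Filter.Tendsto (slope K 0) (nhdsWithin 0 (Set.Ioi 0))
        (nhds (expecb g)) := by
      have : E' 0 / G 0 = expecb g := by rw [hE'0, hG0, div_one]
      rw [← this]
      exact hslope.mono_left hmono
    have hlin : Filter.Tendsto (fun a : ℝ => v / 2 * a) (nhdsWithin 0 (Set.Ioi 0))
        (nhds 0) := by
      have : Filter.Tendsto (fun a : ℝ => v / 2 * a) (nhds 0) (nhds (v / 2 * 0)) :=
        (continuous_const.mul continuous_id).tendsto 0
      rw [mul_zero] at this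
      exact this.mono_left nhdsWithin_le_nhds
    have := hslope'.sub hlin
    rw [sub_zero] at this
    apply this.congr'
    filter_upwards [self_mem_nhdsWithin] with a ha
    have hane : a ≠ 0 := ne_of_gt ha
    rw [hrdef]
    simp only [slope_def_field]
    rw [hK0]
    field_simp
    ring
  have hrle : ∀ l : ℝ, 0 < l → r l ≤ expecb g := by
    intro l hl
    apply ge_of_tendsto htends
    filter_upwards [Ioo_mem_nhdsGT_of_mem (Set.left_mem_Ico.mpr hl)] with a ha
    exact hanti ha.1 hl ha.2.le
  intro l hl
  rcases eq_or_lt_of_le hl with heq | hlpos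
  · rw [← heq]
    have : (0:ℝ) * expecb g + (0:ℝ)^2 * v / 2 = 0 := by ring
    rw [this, Real.exp_zero]
    calc G 0 = 1 := hG0
      _ ≤ 1 := le_refl 1
  · have hr := hrle l hlpos
    have hKle : K l ≤ l * expecb g + l^2 * v / 2 := by
      rw [hrdef] at hr
      simp only at hr
      have := mul_le_mul_of_nonneg_left hr hlpos.le
      rw [mul_sub, mul_div_cancel₀ _ (ne_of_gt hlpos)] at this
      nlinarith
    calc G l = exp (K l) := (Real.exp_log (hGpos l)).symm
      _ ≤ exp (l * expecb g + l^2 * v / 2) := Real.exp_le_exp.mpr hKle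


/-! ### Probability lemmas -/

lemma prb_nonneg (P : (Fin n → Fin 2) → Prop) : 0 ≤ prb P := by
  unfold prb; positivity

lemma prb_mono {P Q : (Fin n → Fin 2) → Prop} (h : ∀ x, P x → Q x) : prb P ≤ prb Q := by
  have hcc : ((Finset.univ.filter P).card : ℝ) ≤ ((Finset.univ.filter Q).card : ℝ) := by
    apply Nat.cast_le.mpr
    apply Finset.card_le_card
    intro x hx
    rw [Finset.mem_filter] at hx ⊢
    exact ⟨hx.1, h x hx.2⟩
  unfold prb
  gcongr

lemma prb_true {P : (Fin n → Fin 2) → Prop} (h : ∀ x, P x) : prb P = 1 := by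
  unfold prb
  rw [Finset.filter_true_of_mem (fun x _ => h x), card_univ_omega]
  field_simp
  norm_num

lemma expecb_ite (Q : (Fin n → Fin 2) → Prop) (b a : ℝ) :
    expecb (fun x => if Q x then b else a) = b * prb Q + a * (1 - prb Q) := by
  classical
  have hcard : ((Finset.univ.filter (fun x => Q x)).card : ℝ)
      + ((Finset.univ.filter (fun x => ¬ Q x)).card : ℝ) = 2 ^ n := by
    have h0 := Finset.card_filter_add_card_filter_not
      (s := (Finset.univ : Finset (Fin n → Fin 2))) (p := fun x => Q x)
    rw [card_univ_omega] at h0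
    exact_mod_cast congrArg (Nat.cast : ℕ → ℝ) h0
  rw [expecb, Finset.sum_ite, Finset.sum_const, Finset.sum_const, prb]
  have hN : (0:ℝ) < 2 ^ n := twopow_pos
  have heta : (Finset.univ.filter (fun x => Q x)) = Finset.univ.filter Q := rfl
  rw [heta] at hcard ⊢
  have hc' : ((Finset.univ.filter (fun x => ¬ Q x)).card : ℝ)
      = 2 ^ n - ((Finset.univ.filter Q).card : ℝ) := by linarith
  rw [nsmul_eq_mul, nsmul_eq_mul, hc']
  field_simp


lemma markov (u : (Fin n → Fin 2) → ℝ) (a l : ℝ) (hl : 0 ≤ l) :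
    prb (fun x => a ≤ u x) ≤ exp (-(l * a)) * expecb (fun x => exp (l * u x)) := by
  classical
  have key : ((Finset.univ.filter (fun x => a ≤ u x)).card : ℝ)
      ≤ ∑ x, exp (l * (u x - a)) := by
    calc ((Finset.univ.filter (fun x => a ≤ u x)).card : ℝ)
        = ∑ _x ∈ Finset.univ.filter (fun x => a ≤ u x), (1:ℝ) := by
          rw [Finset.sum_const, nsmul_eq_mul, mul_one]
      _ ≤ ∑ x ∈ Finset.univ.filter (fun x => a ≤ u x), exp (l * (u x - a)) := by
          apply Finset.sum_le_sum
          intro x hx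
          rw [Finset.mem_filter] at hx
          have : 0 ≤ l * (u x - a) := mul_nonneg hl (by linarith [hx.2])
          linarith [Real.add_one_le_exp (l * (u x - a))]
      _ ≤ ∑ x, exp (l * (u x - a)) := by
          apply Finset.sum_le_sum_of_subset_of_nonneg (Finset.filter_subset _ _)
          intro x _ _
          exact (Real.exp_pos _).le
  have hre : ∀ x, exp (l * (u x - a)) = exp (-(l * a)) * exp (l * u x) := by
    intro x
    rw [← Real.exp_add]
    congr 1
    ring
  have hnum : ((Finset.univ.filter (fun x => a ≤ u x)).card : ℝ)
      ≤ exp (-(l * a)) * ∑ x, exp (l * u x) :=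
    calc ((Finset.univ.filter (fun x => a ≤ u x)).card : ℝ)
        ≤ ∑ x, exp (l * (u x - a)) := key
      _ = ∑ x, exp (-(l * a)) * exp (l * u x) := Finset.sum_congr rfl (fun x _ => hre x)
      _ = exp (-(l * a)) * ∑ x, exp (l * u x) := by rw [← Finset.mul_sum]
  unfold prb
  rw [expecb, ← mul_div_assoc]
  gcongr

lemma min_sub_min_le (p q a : ℝ) : min p a - min q a ≤ max (p - q) 0 := by
  rcases le_total p q with h | h
  · have h1 : min p a ≤ min q a := min_le_min h (le_refl a)
    have h0 : (0:ℝ) ≤ max (p - q) 0 := le_max_right _ _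
    linarith
  · have h1 : min p a - min q a ≤ p - q := by
      rcases le_total q a with hqa | hqa
      · rw [min_eq_left hqa]
        have : min p a ≤ p := min_le_left _ _
        linarith
      · rw [min_eq_right hqa]
        have : min p a ≤ a := min_le_right _ _
        linarith
    exact h1.trans (le_max_left _ _)

/-! ### Tail bound above a median level -/

lemma tail (g : (Fin n → Fin 2) → ℝ) (v : ℝ) (hv : 0 < v)
    (grad : ∀ x, ∑ i, max (g x - g (flipBit x i)) 0 ^ 2 ≤ v)
    (M'' a : ℝ) (hmed : 1/2 ≤ prb (fun x => g x ≤ M'')) (ha : M'' ≤ a) :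
    prb (fun x => a ≤ g x) ≤ exp (-((a - M'')^2) / (8 * v)) := by
  classical
  set gt : (Fin n → Fin 2) → ℝ := fun x => min (g x) a with hgt
  have gradt : ∀ x, ∑ i, max (gt x - gt (flipBit x i)) 0 ^ 2 ≤ v := by
    intro x
    refine le_trans (Finset.sum_le_sum fun i _ => ?_) (grad x)
    have hle : max (gt x - gt (flipBit x i)) 0 ≤ max (g x - g (flipBit x i)) 0 :=
      max_le ((min_sub_min_le _ _ _)) (le_max_right _ _)
    exact pow_le_pow_left₀ (le_max_right _ _) hle 2
  have hEgt : expecb gt ≤ (a + M'') / 2 := by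
    have hpt : ∀ x, gt x ≤ if g x ≤ M'' then M'' else a := by
      intro x
      by_cases hx : g x ≤ M''
      · rw [if_pos hx]
        exact le_trans (min_le_left _ _) hx
      · rw [if_neg hx]
        exact min_le_right _ _
    have h1 : expecb gt ≤ expecb (fun x => if g x ≤ M'' then M'' else a) := expecb_mono hpt
    rw [expecb_ite] at h1
    set p := prb (fun x => g x ≤ M'') with hp
    have hp1 : p ≤ 1 := by
      have := prb_mono (n := n) (P := fun x => g x ≤ M'') (Q := fun _ => True) (fun x _ => trivial)
      rwa [prb_true (fun _ => trivial)] at this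
    nlinarith [hmed, hp1]
  have heq : prb (fun x => a ≤ g x) = prb (fun x => a ≤ gt x) := by
    congr 1
    funext x
    have : (a ≤ g x) = (a ≤ gt x) := by
      apply propext
      constructor
      · intro h; exact le_min h (le_refl a)
      · intro h; exact le_trans h (min_le_left _ _)
    rw [this]
  set l := (a - M'') / (2 * v) with hl
  have hlnn : 0 ≤ l := div_nonneg (by linarith) (by linarith)
  have hmgf := mgf gt v hv gradt l hlnn
  calc prb (fun x => a ≤ g x) = prb (fun x => a ≤ gt x) := heq
    _ ≤ exp (-(l * a)) * expecb (fun x => exp (l * gt x)) := markov gt a l hlnn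
    _ ≤ exp (-(l * a)) * exp (l * expecb gt + l^2 * v / 2) := by
        apply mul_le_mul_of_nonneg_left hmgf (Real.exp_pos _).le
    _ ≤ exp (-(l * a)) * exp (l * ((a + M'')/2) + l^2 * v / 2) := by
        apply mul_le_mul_of_nonneg_left _ (Real.exp_pos _).le
        apply Real.exp_le_exp.mpr
        have := mul_le_mul_of_nonneg_left hEgt hlnn
        linarith
    _ = exp (-(l * a) + (l * ((a + M'')/2) + l^2 * v / 2)) := by rw [← Real.exp_add]
    _ = exp (-((a - M'')^2) / (8 * v)) := by
        congr 1
        rw [hl]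
        field_simp
        ring

/-! ### Median from the quantile hypothesis -/

lemma median_bound (f : (Fin n → Fin 2) → ℝ) (M : ℝ) (hq : quant f (1/2) = M) :
    1/2 ≤ prb (fun x => f x ≤ M + 1) := by
  classical
  set S := {z : ℝ | 1/2 ≤ prb fun x => f x ≤ z} with hS
  have himg : (Finset.univ.image f).Nonempty :=
    ⟨f (fun _ => 0), Finset.mem_image_of_mem f (Finset.mem_univ _)⟩
  have hne : S.Nonempty := by
    refine ⟨(Finset.univ.image f).max' himg, ?_⟩
    rw [hS, Set.mem_setOf_eq, prb_true]
    · norm_num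
    · intro x
      exact Finset.le_max' _ _ (Finset.mem_image_of_mem f (Finset.mem_univ _))
  have hbdd : BddBelow S := by
    refine ⟨(Finset.univ.image f).min' himg, ?_⟩
    intro z hz
    rw [hS, Set.mem_setOf_eq] at hz
    have hpos : 0 < ((Finset.univ.filter (fun x => f x ≤ z)).card : ℝ) := by
      by_contra hcon
      push_neg at hcon
      have : ((Finset.univ.filter (fun x => f x ≤ z)).card : ℝ) = 0 := le_antisymm hcon (by positivity)
      rw [prb, this] at hz
      rw [zero_div] at hz
      linarith
    have : (Finset.univ.filter (fun x => f x ≤ z)).Nonempty := by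
      rw [← Finset.card_pos]
      exact_mod_cast hpos
    obtain ⟨x, hx⟩ := this
    rw [Finset.mem_filter] at hx
    exact le_trans (Finset.min'_le _ _ (Finset.mem_image_of_mem f (Finset.mem_univ _))) hx.2
  have hqS : sInf S = M := hq
  have hlt : sInf S < M + 1 := by rw [hqS]; linarith
  obtain ⟨z, hzS, hz⟩ := exists_lt_of_csInf_lt hne hlt
  rw [hS, Set.mem_setOf_eq] at hzS
  exact le_trans hzS (prb_mono fun x hx => le_trans hx hz.le)

/-! ### A Bernoulli-type inequality for concave powers -/

lemma rpow_concave_diff {β x y : ℝ} (hβ0 : 0 < β) (hβ1 : β ≤ 1) (hy : 0 < y) (hxy : y ≤ x) :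
    x ^ β - y ^ β ≤ β * y ^ (β - 1) * (x - y) := by
  have hxpos : 0 < x := lt_of_lt_of_le hy hxy
  have hz1 : 1 ≤ x / y := (one_le_div hy).mpr hxy
  have key : (x / y) ^ β ≤ 1 + β * (x / y - 1) := by
    have h := rpow_one_add_le_one_add_mul_self (s := x / y - 1) (by linarith) hβ0.le hβ1
    have e : 1 + (x / y - 1) = x / y := by ring
    rwa [e] at h
  rw [Real.div_rpow hxpos.le hy.le] at key
  have hyβ : 0 < y ^ β := Real.rpow_pos_of_pos hy β
  have hyβ1 : y ^ (β - 1) = y ^ β / y := by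
    rw [Real.rpow_sub hy, Real.rpow_one]
  have hmul := mul_le_mul_of_nonneg_left key hyβ.le
  rw [mul_div_cancel₀ _ (ne_of_gt hyβ)] at hmul
  rw [hyβ1]
  have hexp : y ^ β * (1 + β * (x / y - 1)) = y ^ β + β * (y ^ β / y) * (x - y) := by
    field_simp
  rw [hexp] at hmul
  linarith


/-! ### Wrapping up the constants -/

lemma wrap (c X Y : ℝ) (hc : 0 < c) (hX : 0 ≤ X) (hXY : X / 4 ≤ Y) :
    exp (-Y / (8 * (4 * c))) ≤ (128 * c + 1) * exp (-X / (128 * c + 1)) := by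
  have hC1 : (1:ℝ) ≤ 128 * c + 1 := by linarith
  have hexp : exp (-Y / (8 * (4 * c))) ≤ exp (-X / (128 * c + 1)) := by
    apply Real.exp_le_exp.mpr
    rw [neg_div, neg_div, neg_le_neg_iff]
    calc X / (128 * c + 1) ≤ X / (128 * c) := by
          apply div_le_div_of_nonneg_left hX (by linarith) (by linarith)
      _ = (X / 4) / (32 * c) := by ring
      _ ≤ Y / (32 * c) := by
          apply div_le_div_of_nonneg_right hXY (by linarith)
      _ = Y / (8 * (4 * c)) := by ring
  calc exp (-Y / (8 * (4 * c))) ≤ exp (-X / (128 * c + 1)) := hexp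
    _ ≤ (128 * c + 1) * exp (-X / (128 * c + 1)) :=
        le_mul_of_one_le_left (Real.exp_pos _).le hC1

/-! ### The α = 2 case -/

lemma case_two (c B M : ℝ) (hc : 0 < c) (hB : 0 < B) {n : ℕ}
    (f : (Fin n → Fin 2) → ℝ)
    (hBd : ∀ x i, |f x - f (flipBit x i)| ≤ B)
    (hgrad : ∀ x, ∑ i, (max (f x - f (flipBit x i)) 0) ^ 2 ≤ c * max (f x) 0 ^ (2:ℝ))
    (hq : quant f (1/2) = M) (t : ℝ)
    (ht : max (2*B+1) (exp (2*|Real.log (max (M+1) (2*B))|+1)) ≤ t) :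
    (prb fun x => t ≤ f x) ≤ (128 * c + 1) * exp (-(Real.log t)^2 / (128 * c + 1)) := by
  classical
  set M'' := Real.log (max (M+1) (2*B)) with hM''
  set g : (Fin n → Fin 2) → ℝ := fun x => Real.log (max (f x) (2*B)) with hg
  have h2B : (0:ℝ) < 2*B := by linarith
  have ht2B : 2*B + 1 ≤ t := le_trans (le_max_left _ _) ht
  have htexp : exp (2*|M''|+1) ≤ t := le_trans (le_max_right _ _) ht
  have htpos : 0 < t := by linarith
  -- gradient bound for g
  have ggrad : ∀ x, ∑ i, max (g x - g (flipBit x i)) 0 ^ 2 ≤ 4*c := by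
    intro x
    by_cases hfx : f x ≤ 2*B
    · have hzero : ∀ i : Fin n, max (g x - g (flipBit x i)) 0 ^ 2 = 0 := by
        intro i
        have h1 : max (f x) (2*B) = 2*B := max_eq_right hfx
        have h2 : (2*B) ≤ max (f (flipBit x i)) (2*B) := le_max_right _ _
        have h3 : g x ≤ g (flipBit x i) := by
          rw [hg]
          simp only [h1]
          exact Real.log_le_log h2B h2
        rw [max_eq_right (by linarith)]
        norm_num
      rw [Finset.sum_congr rfl (fun i _ => hzero i)]
      simp
      positivity
    · push_neg at hfx
      have hfxpos : 0 < f x := lt_trans h2B hfx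
      have hterm : ∀ i : Fin n, max (g x - g (flipBit x i)) 0 ^ 2
          ≤ (2 / f x)^2 * max (f x - f (flipBit x i)) 0 ^ 2 := by
        intro i
        set b' := max (f (flipBit x i)) (2*B) with hb'
        have hb'pos : 0 < b' := lt_of_lt_of_le h2B (le_max_right _ _)
        have hb'half : f x / 2 ≤ b' := by
          have h1 : f x - B ≤ f (flipBit x i) := by
            have := hBd x i
            rw [abs_le] at this
            linarith [this.1]
          have h2 : f x - B ≤ b' := le_trans h1 (le_max_left _ _)
          have : f x / 2 ≤ f x - B := by linarith
          linarith
        have hgx : g x = Real.log (f x) := by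
          rw [hg]
          simp only [max_eq_left hfx.le]
        rcases le_total (f x) (f (flipBit x i)) with hle | hge
        · -- g x ≤ g flip, term is 0
          have h3 : g x ≤ g (flipBit x i) := by
            rw [hg]
            apply Real.log_le_log (lt_of_lt_of_le h2B (le_max_right _ _))
            exact max_le_max hle (le_refl _)
          rw [max_eq_right (by linarith : g x - g (flipBit x i) ≤ 0)]
          rw [show ((0:ℝ))^2 = 0 by norm_num]
          positivity
        · -- main case
          have hb'le : b' ≤ f x := max_le hge hfx.le
          have hdiff : g x - g (flipBit x i) ≤ 2 / f x * max (f x - f (flipBit x i)) 0 := by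
            have hlog : Real.log (f x) - Real.log b' ≤ (f x - b') / b' := by
              have h4 : Real.log (f x / b') ≤ f x / b' - 1 :=
                Real.log_le_sub_one_of_pos (by positivity)
              rw [Real.log_div (ne_of_gt hfxpos) (ne_of_gt hb'pos)] at h4
              have : f x / b' - 1 = (f x - b') / b' := by field_simp
              linarith [this ▸ h4]
            have hfb' : f (flipBit x i) ≤ b' := le_max_left _ _
            have h5 : (f x - b') / b' ≤ (f x - f (flipBit x i)) / (f x / 2) :=
              div_le_div₀ (by linarith) (by linarith) (by positivity) hb'half
            have h6 : (f x - f (flipBit x i)) / (f x / 2) = 2 / f x * (f x - f (flipBit x i)) := by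
              field_simp
            have h7 : max (f x - f (flipBit x i)) 0 = f x - f (flipBit x i) :=
              max_eq_left (by linarith)
            rw [hgx, hg]
            simp only [← hb']
            rw [h7]
            calc Real.log (f x) - Real.log b' ≤ (f x - b') / b' := hlog
              _ ≤ (f x - f (flipBit x i)) / (f x / 2) := h5
              _ = 2 / f x * (f x - f (flipBit x i)) := h6
          have hRHSnn : 0 ≤ 2 / f x * max (f x - f (flipBit x i)) 0 := by positivity
          have hmax : max (g x - g (flipBit x i)) 0 ≤ 2 / f x * max (f x - f (flipBit x i)) 0 :=
            max_le hdiff hRHSnn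
          calc max (g x - g (flipBit x i)) 0 ^ 2
              ≤ (2 / f x * max (f x - f (flipBit x i)) 0)^2 :=
                pow_le_pow_left₀ (le_max_right _ _) hmax 2
            _ = (2 / f x)^2 * max (f x - f (flipBit x i)) 0 ^ 2 := by ring
      calc ∑ i, max (g x - g (flipBit x i)) 0 ^ 2
          ≤ ∑ i, (2 / f x)^2 * max (f x - f (flipBit x i)) 0 ^ 2 :=
            Finset.sum_le_sum (fun i _ => hterm i)
        _ = (2 / f x)^2 * ∑ i, max (f x - f (flipBit x i)) 0 ^ 2 := by rw [← Finset.mul_sum]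
        _ ≤ (2 / f x)^2 * (c * max (f x) 0 ^ (2:ℝ)) := by
            apply mul_le_mul_of_nonneg_left (hgrad x) (by positivity)
        _ = 4*c := by
            rw [max_eq_left hfxpos.le]
            rw [show ((2:ℝ)) = ((2:ℕ):ℝ) by norm_num, Real.rpow_natCast]
            field_simp
            ring
  -- median bound for g
  have gmed : 1/2 ≤ prb (fun x => g x ≤ M'') := by
    refine le_trans (median_bound f M hq) (prb_mono fun x hx => ?_)
    rw [hg, hM'']
    exact Real.log_le_log (lt_of_lt_of_le h2B (le_max_right _ _))
      (max_le_max hx (le_refl _))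
  -- level comparison
  have hsub : (prb fun x => t ≤ f x) ≤ prb (fun x => Real.log t ≤ g x) := by
    apply prb_mono
    intro x hx
    rw [hg]
    exact Real.log_le_log htpos (le_trans hx (le_max_left _ _))
  have hlogt : 2*|M''| + 1 ≤ Real.log t := by
    have := Real.log_le_log (Real.exp_pos _) htexp
    rwa [Real.log_exp] at this
  have habs : M'' ≤ |M''| := le_abs_self _
  have habs' : -|M''| ≤ M'' := neg_abs_le _
  have hltpos : 0 < Real.log t := by
    have : (0:ℝ) ≤ 2*|M''| := by positivity
    linarith
  have hMa : M'' ≤ Real.log t := by linarith [abs_nonneg M'']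
  have htail := tail g (4*c) (by positivity) ggrad M'' (Real.log t) gmed hMa
  have hwrap := wrap c ((Real.log t)^2) ((Real.log t - M'')^2) hc (by positivity) ?hY
  case hY =>
    have h1 : Real.log t / 2 ≤ Real.log t - M'' := by linarith
    have h2 : (Real.log t / 2)^2 ≤ (Real.log t - M'')^2 := by
      apply pow_le_pow_left₀ (by linarith) h1 2
    nlinarith [h2]
  calc (prb fun x => t ≤ f x) ≤ prb (fun x => Real.log t ≤ g x) := hsub
    _ ≤ exp (-((Real.log t - M'')^2) / (8*(4*c))) := htail
    _ = exp (-(Real.log t - M'')^2 / (8*(4*c))) := by ring_nf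
    _ ≤ (128 * c + 1) * exp (-(Real.log t)^2 / (128 * c + 1)) := hwrap


/-! ### The α < 2 case -/

lemma case_lt (c B M a0 : ℝ) (hc : 0 < c) (hB : 0 < B) (hα0 : 0 ≤ a0) (hαlt : a0 < 2) {n : ℕ}
    (f : (Fin n → Fin 2) → ℝ)
    (hBd : ∀ x i, |f x - f (flipBit x i)| ≤ B)
    (hgrad : ∀ x, ∑ i, (max (f x - f (flipBit x i)) 0) ^ 2 ≤ c * max (f x) 0 ^ a0)
    (hq : quant f (1/2) = M) (t : ℝ)
    (ht : max (2*B+1)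
      ((2*|(max (M+1) (2*B)) ^ ((2 - a0) / 2)| + 2) ^ (1/((2 - a0) / 2))) ≤ t) :
    (prb fun x => t ≤ f x) ≤ (128 * c + 1) * exp (-(t ^ (2 - a0)) / (128 * c + 1)) := by
  classical
  set β := (2 - a0) / 2 with hβ
  have hβpos : 0 < β := by rw [hβ]; linarith
  have hβ1 : β ≤ 1 := by rw [hβ]; linarith
  set M'' := (max (M+1) (2*B)) ^ β with hM''
  set g : (Fin n → Fin 2) → ℝ := fun x => (max (f x) (2*B)) ^ β with hg
  have h2B : (0:ℝ) < 2*B := by linarith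
  have ht2B : 2*B + 1 ≤ t := le_trans (le_max_left _ _) ht
  have htK : (2*|M''| + 2) ^ (1/β) ≤ t := le_trans (le_max_right _ _) ht
  have htpos : 0 < t := by linarith
  -- gradient bound for g
  have ggrad : ∀ x, ∑ i, max (g x - g (flipBit x i)) 0 ^ 2 ≤ 4*c := by
    intro x
    by_cases hfx : f x ≤ 2*B
    · have hzero : ∀ i : Fin n, max (g x - g (flipBit x i)) 0 ^ 2 = 0 := by
        intro i
        have h1 : max (f x) (2*B) = 2*B := max_eq_right hfx
        have h3 : g x ≤ g (flipBit x i) := by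
          rw [hg]
          simp only [h1]
          exact Real.rpow_le_rpow h2B.le (le_max_right _ _) hβpos.le
        rw [max_eq_right (by linarith)]
        norm_num
      rw [Finset.sum_congr rfl (fun i _ => hzero i)]
      simp
      positivity
    · push_neg at hfx
      have hfxpos : 0 < f x := lt_trans h2B hfx
      have hterm : ∀ i : Fin n, max (g x - g (flipBit x i)) 0 ^ 2
          ≤ β^2 * (f x / 2)^(2*β - 2) * max (f x - f (flipBit x i)) 0 ^ 2 := by
        intro i
        set b' := max (f (flipBit x i)) (2*B) with hb'
        have hb'pos : 0 < b' := lt_of_lt_of_le h2B (le_max_right _ _)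
        have hfb' : f (flipBit x i) ≤ b' := le_max_left _ _
        have hb'half : f x / 2 ≤ b' := by
          have h1 : f x - B ≤ f (flipBit x i) := by
            have := hBd x i
            rw [abs_le] at this
            linarith [this.1]
          have h2 : f x - B ≤ b' := le_trans h1 hfb'
          have : f x / 2 ≤ f x - B := by linarith
          linarith
        have hgxv : g x = (f x)^β := by
          rw [hg]
          simp only [max_eq_left hfx.le]
        rcases le_total (f x) (f (flipBit x i)) with hle | hge
        · have h3 : g x ≤ g (flipBit x i) := by
            rw [hg]
            exact Real.rpow_le_rpow (le_max_of_le_right h2B.le)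
              (max_le_max hle (le_refl _)) hβpos.le
          rw [max_eq_right (by linarith : g x - g (flipBit x i) ≤ 0)]
          rw [show ((0:ℝ))^2 = 0 by norm_num]
          positivity
        · have hb'le : b' ≤ f x := max_le hge hfx.le
          have hconc : (f x)^β - b'^β ≤ β * b'^(β-1) * (f x - b') :=
            rpow_concave_diff hβpos hβ1 hb'pos hb'le
          have hbase : b'^(β-1) ≤ (f x / 2)^(β-1) :=
            Real.rpow_le_rpow_of_nonpos (by positivity) hb'half (by linarith)
          have h7 : max (f x - f (flipBit x i)) 0 = f x - f (flipBit x i) :=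
            max_eq_left (by linarith)
          have hdiff : g x - g (flipBit x i)
              ≤ β * (f x / 2)^(β-1) * max (f x - f (flipBit x i)) 0 := by
            have hgiv : g (flipBit x i) = b' ^ β := rfl
            rw [hgxv, hgiv, h7]
            have s1 : β * b'^(β-1) * (f x - b') ≤ β * (f x / 2)^(β-1) * (f x - b') := by
              apply mul_le_mul_of_nonneg_right _ (by linarith)
              exact mul_le_mul_of_nonneg_left hbase hβpos.le
            have s2 : β * (f x / 2)^(β-1) * (f x - b')
                ≤ β * (f x / 2)^(β-1) * (f x - f (flipBit x i)) := by
              apply mul_le_mul_of_nonneg_left (by linarith) (by positivity)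
            linarith [hconc]
          have hRHSnn : 0 ≤ β * (f x / 2)^(β-1) * max (f x - f (flipBit x i)) 0 := by
            positivity
          have hmax : max (g x - g (flipBit x i)) 0
              ≤ β * (f x / 2)^(β-1) * max (f x - f (flipBit x i)) 0 :=
            max_le hdiff hRHSnn
          have hA2 : ((f x / 2)^(β-1))^2 = (f x / 2)^(2*β - 2) := by
            rw [← Real.rpow_natCast ((f x / 2)^(β-1)) 2, ← Real.rpow_mul (by positivity)]
            congr 1
            push_cast
            ring
          calc max (g x - g (flipBit x i)) 0 ^ 2
              ≤ (β * (f x / 2)^(β-1) * max (f x - f (flipBit x i)) 0)^2 :=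
                pow_le_pow_left₀ (le_max_right _ _) hmax 2
            _ = β^2 * ((f x / 2)^(β-1))^2 * max (f x - f (flipBit x i)) 0 ^ 2 := by ring
            _ = β^2 * (f x / 2)^(2*β - 2) * max (f x - f (flipBit x i)) 0 ^ 2 := by rw [hA2]
      have hgr := hgrad x
      rw [max_eq_left hfxpos.le] at hgr
      have hkey : (f x / 2)^(2*β - 2) * (f x)^a0 ≤ 4 := by
        rw [Real.div_rpow hfxpos.le (by norm_num : (0:ℝ) ≤ 2)]
        have hprod : (f x)^(2*β - 2) * (f x)^a0 = 1 := by
          rw [← Real.rpow_add hfxpos]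
          have : 2*β - 2 + a0 = 0 := by rw [hβ]; ring
          rw [this, Real.rpow_zero]
        have h2pow : (0:ℝ) < (2:ℝ)^(2*β - 2) := Real.rpow_pos_of_pos (by norm_num) _
        have hinv : (1:ℝ)/(2:ℝ)^(2*β - 2) = (2:ℝ)^(2 - 2*β) := by
          rw [show (2 - 2*β) = -(2*β - 2) by ring,
            Real.rpow_neg (by norm_num : (0:ℝ) ≤ 2), one_div]
        have hle4 : (2:ℝ)^(2 - 2*β) ≤ 4 := by
          have h := Real.rpow_le_rpow_of_exponent_le (by norm_num : (1:ℝ) ≤ 2)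
            (by linarith : 2 - 2*β ≤ (2:ℝ))
          have h4 : ((2:ℝ):ℝ)^((2:ℝ)) = 4 := by
            rw [show ((2:ℝ)) = (((2:ℕ)):ℝ) from by norm_num]
            rw [Real.rpow_natCast]
            norm_num
          calc (2:ℝ)^(2 - 2*β) ≤ (2:ℝ)^((2:ℝ)) := h
            _ = 4 := by exact_mod_cast h4
        calc (f x)^(2*β - 2) / (2:ℝ)^(2*β - 2) * (f x)^a0
            = ((f x)^(2*β - 2) * (f x)^a0) / (2:ℝ)^(2*β - 2) := by ring
          _ = 1 / (2:ℝ)^(2*β - 2) := by rw [hprod]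
          _ = (2:ℝ)^(2 - 2*β) := hinv
          _ ≤ 4 := hle4
      have hXnn : 0 ≤ (f x / 2)^(2*β - 2) * (f x)^a0 := by positivity
      calc ∑ i, max (g x - g (flipBit x i)) 0 ^ 2
          ≤ ∑ i, β^2 * (f x / 2)^(2*β - 2) * max (f x - f (flipBit x i)) 0 ^ 2 :=
            Finset.sum_le_sum (fun i _ => hterm i)
        _ = β^2 * (f x / 2)^(2*β - 2) * ∑ i, max (f x - f (flipBit x i)) 0 ^ 2 := by
            rw [← Finset.mul_sum]
        _ ≤ β^2 * (f x / 2)^(2*β - 2) * (c * (f x)^a0) := by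
            apply mul_le_mul_of_nonneg_left hgr (by positivity)
        _ = c * β^2 * ((f x / 2)^(2*β - 2) * (f x)^a0) := by ring
        _ ≤ c * 1 * 4 := by
            have hβsq : β^2 ≤ 1 := by nlinarith
            apply mul_le_mul _ hkey hXnn _
            · exact mul_le_mul_of_nonneg_left hβsq hc.le
            · positivity
        _ = 4*c := by ring
  -- median bound for g
  have gmed : 1/2 ≤ prb (fun x => g x ≤ M'') := by
    refine le_trans (median_bound f M hq) (prb_mono fun x hx => ?_)
    rw [hg, hM'']
    exact Real.rpow_le_rpow (le_max_of_le_right h2B.le)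
      (max_le_max hx (le_refl _)) hβpos.le
  -- level comparison
  have hsub : (prb fun x => t ≤ f x) ≤ prb (fun x => t ^ β ≤ g x) := by
    apply prb_mono
    intro x hx
    rw [hg]
    exact Real.rpow_le_rpow htpos.le (le_trans hx (le_max_left _ _)) hβpos.le
  set a := t ^ β with ha
  have hta : 2*|M''| + 2 ≤ a := by
    have hbasenn : (0:ℝ) ≤ 2*|M''| + 2 := by positivity
    have hKnn : (0:ℝ) ≤ (2*|M''| + 2) ^ (1/β) := Real.rpow_nonneg hbasenn _
    have h1 : ((2*|M''| + 2) ^ (1/β)) ^ β ≤ t ^ β :=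
      Real.rpow_le_rpow hKnn htK hβpos.le
    have h2 : ((2*|M''| + 2) ^ (1/β)) ^ β = 2*|M''| + 2 := by
      rw [← Real.rpow_mul hbasenn, one_div, inv_mul_cancel₀ hβpos.ne', Real.rpow_one]
    rw [ha]
    linarith [h2 ▸ h1]
  have habs : M'' ≤ |M''| := le_abs_self _
  have hM''a : M'' ≤ a := by linarith [abs_nonneg M'']
  have hhalf : a / 2 ≤ a - M'' := by linarith [abs_nonneg M'']
  have hapos : 0 < a := by linarith [abs_nonneg M'']
  have htail := tail g (4*c) (by positivity) ggrad M'' a gmed hM''a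
  have hX : t ^ (2 - a0) = a^2 := by
    rw [ha, ← Real.rpow_natCast (t ^ β) 2, ← Real.rpow_mul htpos.le]
    congr 1
    rw [hβ]
    push_cast
    ring
  have hwrap := wrap c (t ^ (2 - a0)) ((a - M'')^2) hc (Real.rpow_nonneg htpos.le _) ?hY
  case hY =>
    rw [hX]
    have h2 : (a / 2)^2 ≤ (a - M'')^2 := pow_le_pow_left₀ (by linarith) hhalf 2
    nlinarith [h2]
  calc (prb fun x => t ≤ f x) ≤ prb (fun x => a ≤ g x) := hsub
    _ ≤ exp (-((a - M'')^2) / (8*(4*c))) := htail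
    _ = exp (-(a - M'')^2 / (8*(4*c))) := by ring_nf
    _ ≤ (128 * c + 1) * exp (-(t ^ (2 - a0)) / (128 * c + 1)) := hwrap

end StmtAux

theorem stmt_10 (c : ℝ) (hc : 0 < c) (α : ℝ) (hα : α ∈ Set.Icc (0 : ℝ) 2)
    (B M : ℝ) (hBpos : 0 < B) :
    ∃ C > (0 : ℝ), ∃ t₀ > (0 : ℝ),
      ∀ (n : ℕ) (f : (Fin n → Fin 2) → ℝ),
        (∀ x i, |f x - f (flipBit x i)| ≤ B) →
        (∀ x, ∑ i, (max (f x - f (flipBit x i)) 0) ^ 2 ≤ c * max (f x) 0 ^ α) →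
        quant f (1 / 2) = M →
        ∀ t : ℝ, t₀ ≤ t →
          (α < 2 → (prb fun x => t ≤ f x) ≤ C * Real.exp (-(t ^ (2 - α)) / C)) ∧
          (α = 2 → (prb fun x => t ≤ f x) ≤ C * Real.exp (-(Real.log t) ^ 2 / C)) := by
  obtain ⟨hα0, hα2⟩ := hα
  by_cases hcase : α = 2
  · subst hcase
    refine ⟨128 * c + 1, by linarith,
      max (2*B+1) (Real.exp (2*|Real.log (max (M+1) (2*B))|+1)),
      lt_of_lt_of_le (by linarith) (le_max_left _ _), ?_⟩
    intro n f hBd hgrad hq t ht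
    constructor
    · intro h; linarith
    · intro _
      exact StmtAux.case_two c B M hc hBpos f hBd hgrad hq t ht
  · have hlt : α < 2 := lt_of_le_of_ne hα2 hcase
    refine ⟨128 * c + 1, by linarith,
      max (2*B+1) ((2*|(max (M+1) (2*B)) ^ ((2 - α) / 2)| + 2) ^ (1/((2 - α) / 2))),
      lt_of_lt_of_le (by linarith) (le_max_left _ _), ?_⟩
    intro n f hBd hgrad hq t ht
    refine ⟨fun _ => ?_, fun h2 => absurd h2 hcase⟩
    exact StmtAux.case_lt c B M α hc hBpos hα0 hlt f hBd hgrad hq t ht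
end
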